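/- arXiv:1702.02894 — 5 statements merged into one kernel-verified Lean document; each statement's English description precedes it below -/
import Mathlib

section
/- For s > 1, the asymptotic minimal Riesz s-energy constant in dimension 1 equals twice the Riemann zeta function: C_{s,1} = 2ζ(s). -/
open scoped Classical

open MeasureTheory Filter Topology ENNReal Set

noncomputable section

def cube (d : ℕ) (R : ℝ) : Set (EuclideanSpace ℝ (Fin d)) :=
  {x | ∀ i, |x i| ≤ R / 2}

/-- Riesz interaction (with exponent `s`) between two point sets. -/
def interE (d : ℕ) (s : ℝ) (A B : Set (EuclideanSpace ℝ (Fin d))) : ℝ≥0∞ :=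
  ∑' (p : A) (q : B),
    if (p : EuclideanSpace ℝ (Fin d)) = (q : EuclideanSpace ℝ (Fin d)) then 0
    else edist (p : EuclideanSpace ℝ (Fin d)) (q : EuclideanSpace ℝ (Fin d)) ^ (-s)

/-- Riesz `s`-energy of an infinite point configuration. -/
def Ws (d : ℕ) (s : ℝ) (C : Set (EuclideanSpace ℝ (Fin d))) : ℝ≥0∞ :=
  Filter.atTop.liminf fun R : ℝ =>
    ENNReal.ofReal (R ^ (-(d : ℝ))) * interE d s (C ∩ cube d R) (C ∩ cube d R)

/-- Density of a point configuration. -/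
def Dens (d : ℕ) (C : Set (EuclideanSpace ℝ (Fin d))) : ℝ≥0∞ :=
  Filter.atTop.liminf fun R : ℝ =>
    ((C ∩ cube d R).encard : ℝ≥0∞) / ENNReal.ofReal (R ^ (d : ℝ))

/-- Riesz `s`-energy of a finite configuration. -/
def Esfin (d : ℕ) (s : ℝ) {N : ℕ} (ω : Fin N → EuclideanSpace ℝ (Fin d)) : ℝ≥0∞ :=
  ∑ i, ∑ j, if i = j then 0 else edist (ω i) (ω j) ^ (-s)

/-- Minimal `N`-point Riesz `s`-energy on a set `A`. -/
def minEs (d : ℕ) (s : ℝ) (A : Set (EuclideanSpace ℝ (Fin d))) (N : ℕ) : ℝ≥0∞ :=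
  ⨅ (ω : Fin N → EuclideanSpace ℝ (Fin d)) (_ : ∀ i, ω i ∈ A), Esfin d s ω

instance (d : ℕ) : MeasurableSpace (Set (EuclideanSpace ℝ (Fin d))) := ⊤

def stationary (d : ℕ) (P : Measure (Set (EuclideanSpace ℝ (Fin d)))) : Prop :=
  ∀ v : EuclideanSpace ℝ (Fin d), Measure.map (fun C => (fun x => x + v) '' C) P = P

def WsProc (d : ℕ) (s : ℝ) (P : Measure (Set (EuclideanSpace ℝ (Fin d)))) : ℝ≥0∞ :=
  Filter.atTop.liminf fun R : ℝ =>
    ENNReal.ofReal (R ^ (-(d : ℝ))) * ∫⁻ C, interE d s (C ∩ cube d R) (C ∩ cube d R) ∂P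

def intensity (d : ℕ) (P : Measure (Set (EuclideanSpace ℝ (Fin d)))) : ℝ≥0∞ :=
  ∫⁻ C, ((C ∩ cube d 1).encard : ℝ≥0∞) ∂P

/-- Kullback–Leibler divergence (for probability measures). -/
def KL {Ω : Type*} [MeasurableSpace Ω] (μ ν : Measure Ω) : ℝ≥0∞ :=
  if μ ≪ ν then
    ∫⁻ x, ENNReal.ofReal ((μ.rnDeriv ν x).toReal * Real.log (μ.rnDeriv ν x).toReal
      - (μ.rnDeriv ν x).toReal + 1) ∂ν
  else ∞

/-- Specific relative entropy (per unit volume) of `P` with respect to `Q`. -/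
def ERSProc (d : ℕ) (P Q : Measure (Set (EuclideanSpace ℝ (Fin d)))) : ℝ≥0∞ :=
  Filter.atTop.liminf fun R : ℝ =>
    ENNReal.ofReal (R ^ (-(d : ℝ))) *
      KL (Measure.map (· ∩ cube d R) P) (Measure.map (· ∩ cube d R) Q)

/-- `Q` is the law of the Poisson point process of intensity 1 on `ℝ^d`. -/
def isPoisson (d : ℕ) (Q : Measure (Set (EuclideanSpace ℝ (Fin d)))) : Prop :=
  IsProbabilityMeasure Q ∧
  (∀ A : Set (EuclideanSpace ℝ (Fin d)), MeasurableSet A → volume A ≠ ∞ → ∀ n : ℕ,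
    Q {C | (C ∩ A).encard = n} =
      ENNReal.ofReal (Real.exp (-(volume A).toReal) * (volume A).toReal ^ n / n.factorial)) ∧
  ∀ (n : ℕ) (A : Fin n → Set (EuclideanSpace ℝ (Fin d))),
    Pairwise (Function.onFun Disjoint A) →
      ProbabilityTheory.iIndepFun
        (fun i C => (C ∩ A i).encard) Q

/-- Rescaling a configuration by `m^(1/d)`. -/
def scaleConfig (d : ℕ) (m : ℝ) (C : Set (EuclideanSpace ℝ (Fin d))) :
    Set (EuclideanSpace ℝ (Fin d)) :=
  (fun x => (m ^ ((1 : ℝ) / d)) • x) '' C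

end

section RieszAux
open Finset

private lemma edist_eucl1 (x y : EuclideanSpace ℝ (Fin 1)) :
    edist x y = ENNReal.ofReal |x 0 - y 0| := by
  rw [edist_dist, EuclideanSpace.dist_eq]
  congr 1
  rw [Fin.sum_univ_one, Real.dist_eq, sq_abs, Real.sqrt_sq_eq_abs]

private lemma convexF {s : ℝ} (hs : 1 < s) :
    ConvexOn ℝ (Set.Ioi (0:ℝ)) (fun t : ℝ => (t⁻¹) ^ s) := by
  have himg : Inv.inv '' Set.Ioi (0:ℝ) = Set.Ioi 0 := by
    ext u
    constructor
    · rintro ⟨x, hx, rfl⟩; exact Set.mem_Ioi.2 (inv_pos.2 (Set.mem_Ioi.1 hx))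
    · intro hu; exact ⟨u⁻¹, Set.mem_Ioi.2 (inv_pos.2 (Set.mem_Ioi.1 hu)), inv_inv u⟩
  have hg : ConvexOn ℝ (Inv.inv '' Set.Ioi (0:ℝ)) (fun u : ℝ => u ^ s) := by
    rw [himg]
    exact (convexOn_rpow hs.le).subset Set.Ioi_subset_Ici_self (convex_Ioi 0)
  have hf : ConvexOn ℝ (Set.Ioi (0:ℝ)) (fun t : ℝ => t⁻¹) := by
    have h := (strictConvexOn_zpow (m := -1) (by decide) (by decide)).convexOn
    have h2 : (fun x : ℝ => x ^ (-1 : ℤ)) = fun t : ℝ => t⁻¹ := funext fun x => zpow_neg_one x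
    rwa [h2] at h
  have hmono : MonotoneOn (fun u : ℝ => u ^ s) (Inv.inv '' Set.Ioi (0:ℝ)) := by
    rw [himg]
    intro x hx y _ hxy
    exact Real.rpow_le_rpow (le_of_lt hx) hxy (by positivity)
  have := hg.comp hf hmono
  exact this

private lemma jensen_real {s : ℝ} (hs : 1 < s) (n k : ℕ) (hn : 0 < n) (hk : 0 < k)
    (a : ℕ → ℝ) (hpos : ∀ i ∈ Finset.range n, 0 < a i)
    (hsum : ∑ i ∈ Finset.range n, a i ≤ k) :
    (n : ℝ) ^ (1+s) * (k : ℝ) ^ (-s) ≤ ∑ i ∈ Finset.range n, (a i) ^ (-s) := by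
  have hn' : (0:ℝ) < n := by exact_mod_cast hn
  have hk' : (0:ℝ) < k := by exact_mod_cast hk
  set A := ∑ i ∈ Finset.range n, a i with hA
  have hApos : 0 < A := Finset.sum_pos hpos ⟨0, mem_range.2 hn⟩
  have hw : ∑ _i ∈ Finset.range n, (n:ℝ)⁻¹ = 1 := by
    rw [Finset.sum_const, card_range, nsmul_eq_mul, mul_inv_cancel₀ hn'.ne']
  have hjen := (convexF hs).map_sum_le (t := Finset.range n) (w := fun _ => (n:ℝ)⁻¹)
    (p := a) (fun i _ => by positivity) hw (fun i hi => hpos i hi)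
  have havg : ∑ i ∈ Finset.range n, (n:ℝ)⁻¹ • a i = (n:ℝ)⁻¹ * A := by
    simp_rw [smul_eq_mul]
    rw [← Finset.mul_sum]
  rw [havg] at hjen
  have hterm : ∀ i ∈ Finset.range n, (n:ℝ)⁻¹ • ((a i)⁻¹) ^ s = (n:ℝ)⁻¹ * (a i) ^ (-s) := by
    intro i hi
    rw [smul_eq_mul, Real.inv_rpow (hpos i hi).le, ← Real.rpow_neg (hpos i hi).le]
  rw [Finset.sum_congr rfl hterm, ← Finset.mul_sum] at hjen
  set S := ∑ i ∈ Finset.range n, (a i) ^ (-s) with hSdef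
  have hinv : ((n:ℝ)⁻¹ * A)⁻¹ = (n:ℝ) / A := by
    rw [mul_inv, inv_inv, div_eq_mul_inv]
  rw [hinv] at hjen
  have hstep1 : (n:ℝ) * (((n:ℝ)) / A) ^ s ≤ S := by
    have h2 := mul_le_mul_of_nonneg_left hjen hn'.le
    calc (n:ℝ) * ((n:ℝ)/A) ^ s ≤ (n:ℝ) * ((n:ℝ)⁻¹ * S) := h2
      _ = S := by field_simp
  have hstep2 : ((n:ℝ)/(k:ℝ)) ^ s ≤ ((n:ℝ)/A) ^ s := by
    apply Real.rpow_le_rpow (by positivity)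
    · exact div_le_div_of_nonneg_left hn'.le hApos hsum
    · linarith
  have heq : (n:ℝ) ^ (1+s) * (k:ℝ) ^ (-s) = (n:ℝ) * ((n:ℝ)/(k:ℝ)) ^ s := by
    rw [Real.div_rpow hn'.le hk'.le, Real.rpow_add hn', Real.rpow_one,
      Real.rpow_neg hk'.le]
    ring
  rw [heq]
  calc (n:ℝ) * ((n:ℝ)/(k:ℝ)) ^ s ≤ (n:ℝ) * ((n:ℝ)/A) ^ s :=
        mul_le_mul_of_nonneg_left hstep2 hn'.le
    _ ≤ S := hstep1

private lemma jensen_ennreal {s : ℝ} (hs : 1 < s) (n k : ℕ) (hn : 0 < n) (hk : 0 < k)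
    (a : ℕ → ℝ) (hpos : ∀ i ∈ Finset.range n, 0 < a i)
    (hsum : ∑ i ∈ Finset.range n, a i ≤ k) :
    ((n:ℕ) : ℝ≥0∞) ^ (1+s) * ((k:ℕ) : ℝ≥0∞) ^ (-s)
      ≤ ∑ i ∈ Finset.range n, ENNReal.ofReal (a i) ^ (-s) := by
  have hterm : ∀ i ∈ Finset.range n,
      ENNReal.ofReal (a i) ^ (-s) = ENNReal.ofReal ((a i) ^ (-s)) := fun i hi =>
    ENNReal.ofReal_rpow_of_pos (hpos i hi)
  rw [Finset.sum_congr rfl hterm,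
    ← ENNReal.ofReal_sum_of_nonneg (fun i hi => Real.rpow_nonneg (hpos i hi).le _)]
  have hn' : (0:ℝ) < n := by exact_mod_cast hn
  have hk' : (0:ℝ) < k := by exact_mod_cast hk
  have h1 : ((n:ℕ) : ℝ≥0∞) ^ (1+s) = ENNReal.ofReal ((n:ℝ) ^ (1+s)) := by
    rw [show ((n:ℕ) : ℝ≥0∞) = ENNReal.ofReal (n:ℝ) by simp, ENNReal.ofReal_rpow_of_pos hn']
  have h2 : ((k:ℕ) : ℝ≥0∞) ^ (-s) = ENNReal.ofReal ((k:ℝ) ^ (-s)) := by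
    rw [show ((k:ℕ) : ℝ≥0∞) = ENNReal.ofReal (k:ℝ) by simp, ENNReal.ofReal_rpow_of_pos hk']
  rw [h1, h2, ← ENNReal.ofReal_mul (by positivity)]
  exact ENNReal.ofReal_le_ofReal (jensen_real hs n k hn hk a hpos hsum)

private lemma sum_shift_le (z : ℕ → ℝ) (hb : ∀ j, |z j| ≤ 1/2)
    (n k : ℕ) : ∑ i ∈ Finset.range n, (z (i+k) - z i) ≤ k := by
  have hub : ∀ m l : ℕ, ∑ i ∈ Finset.Ico m (m+l), z i ≤ (l:ℝ) * (1/2) := by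
    intro m l
    calc ∑ i ∈ Finset.Ico m (m+l), z i ≤ ∑ _i ∈ Finset.Ico m (m+l), (1/2 : ℝ) :=
          Finset.sum_le_sum (fun i _ => (abs_le.1 (hb i)).2)
      _ = (l:ℝ) * (1/2) := by rw [Finset.sum_const, Nat.card_Ico]; simp [nsmul_eq_mul]
  have hlb : ∀ m l : ℕ, -((l:ℝ) * (1/2)) ≤ ∑ i ∈ Finset.Ico m (m+l), z i := by
    intro m l
    calc -((l:ℝ) * (1/2)) = ∑ _i ∈ Finset.Ico m (m+l), (-(1/2) : ℝ) := by
          rw [Finset.sum_const, Nat.card_Ico]; simp [nsmul_eq_mul]; try ring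
      _ ≤ ∑ i ∈ Finset.Ico m (m+l), z i :=
          Finset.sum_le_sum (fun i _ => neg_le_of_abs_le (hb i))
  have hsplit : ∑ i ∈ Finset.range n, (z (i+k) - z i)
      = (∑ i ∈ Finset.Ico k (n+k), z i) - ∑ i ∈ Finset.Ico 0 n, z i := by
    rw [Finset.sum_sub_distrib]
    congr 1
    · rw [Finset.sum_Ico_eq_sum_range]
      have h : n + k - k = n := by omega
      rw [h]
      exact Finset.sum_congr rfl (fun i _ => by rw [add_comm])
    · rw [Finset.range_eq_Ico]
  rcases le_or_gt k n with h | h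
  · have e1 : ∑ i ∈ Finset.Ico k (n+k), z i
        = ∑ i ∈ Finset.Ico k n, z i + ∑ i ∈ Finset.Ico n (n+k), z i :=
      (Finset.sum_Ico_consecutive _ h (by omega)).symm
    have e2 : ∑ i ∈ Finset.Ico 0 n, z i
        = ∑ i ∈ Finset.Ico 0 k, z i + ∑ i ∈ Finset.Ico k n, z i :=
      (Finset.sum_Ico_consecutive _ (Nat.zero_le k) h).symm
    have b1 := hub n k
    have b2 := hlb 0 k
    rw [zero_add] at b2
    rw [hsplit, e1, e2]
    linarith
  · have b1 := hub k n
    have b2 := hlb 0 n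
    rw [zero_add] at b2
    have hkn : (n:ℝ) ≤ k := by exact_mod_cast h.le
    have e1 : n + k = k + n := by omega
    rw [hsplit, e1]
    linarith

private lemma esfin_ge {s : ℝ} (hs : 1 < s) (N K : ℕ)
    (ω : Fin N → EuclideanSpace ℝ (Fin 1)) (hω : ∀ i, ω i ∈ cube 1 1) :
    2 * ∑ k ∈ Finset.Icc 1 K, ((N - k : ℕ) : ℝ≥0∞) ^ (1+s) * ((k:ℕ) : ℝ≥0∞) ^ (-s)
      ≤ Esfin 1 s ω := by
  have hs1 : (0:ℝ) < 1 + s := by linarith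
  rcases Nat.eq_zero_or_pos N with rfl | hN
  · have hz : ∀ k ∈ Finset.Icc 1 K,
        ((0 - k : ℕ) : ℝ≥0∞) ^ (1+s) * ((k:ℕ) : ℝ≥0∞) ^ (-s) = 0 := by
      intro k hk
      rw [Nat.zero_sub, Nat.cast_zero, ENNReal.zero_rpow_of_pos hs1, zero_mul]
    rw [Finset.sum_congr rfl hz]
    simp
  -- setup
  set r : Fin N → ℝ := fun i => ω i 0 with hr_def
  have hr : ∀ i, |r i| ≤ 1/2 := by
    intro i
    have := hω i 0
    simpa using this
  have hE : Esfin 1 s ω = ∑ i, ∑ j, (if i = j then 0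
      else ENNReal.ofReal |r i - r j| ^ (-s)) := by
    unfold Esfin
    refine Finset.sum_congr rfl (fun i _ => Finset.sum_congr rfl (fun j _ => ?_))
    rw [edist_eucl1]
  rw [hE]
  by_cases hinj : Function.Injective r
  swap
  · -- a coincidence: energy is infinite
    rw [Function.not_injective_iff] at hinj
    obtain ⟨i, j, hij, hne⟩ := hinj
    have hterm : (if i = j then 0 else ENNReal.ofReal |r i - r j| ^ (-s)) = ⊤ := by
      rw [if_neg hne, hij, sub_self, abs_zero, ENNReal.ofReal_zero,
        ENNReal.zero_rpow_of_neg (by linarith)]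
    have h1 : (⊤:ℝ≥0∞) ≤ ∑ j', (if i = j' then 0 else ENNReal.ofReal |r i - r j'| ^ (-s)) := by
      rw [← hterm]
      exact Finset.single_le_sum (f := fun j' => (if i = j' then 0
        else ENNReal.ofReal |r i - r j'| ^ (-s))) (fun _ _ => zero_le) (mem_univ j)
    have h2 : (⊤:ℝ≥0∞) ≤ ∑ i', ∑ j', (if i' = j' then 0
        else ENNReal.ofReal |r i' - r j'| ^ (-s)) :=
      le_trans h1 (Finset.single_le_sum (f := fun i' => ∑ j', (if i' = j' then 0
        else ENNReal.ofReal |r i' - r j'| ^ (-s))) (fun _ _ => zero_le) (mem_univ i))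
    exact le_trans le_top h2
  -- sorted version
  set σ := Tuple.sort r with hσ
  set y : Fin N → ℝ := r ∘ σ with hy_def
  have hy_mono : Monotone y := Tuple.monotone_sort r
  have hy_strict : StrictMono y :=
    hy_mono.strictMono_of_injective (hinj.comp σ.injective)
  have hy_bd : ∀ i, |y i| ≤ 1/2 := fun i => hr (σ i)
  -- re-sum over sorted indices
  have hresum : ∑ i, ∑ j, (if i = j then 0 else ENNReal.ofReal |r i - r j| ^ (-s))
      = ∑ i, ∑ j, (if i = j then 0 else ENNReal.ofReal |y i - y j| ^ (-s)) := by
    rw [← Equiv.sum_comp σ (fun i => ∑ j, (if i = j then 0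
      else ENNReal.ofReal |r i - r j| ^ (-s)))]
    refine Finset.sum_congr rfl (fun i _ => ?_)
    rw [← Equiv.sum_comp σ (fun j => (if σ i = j then 0
      else ENNReal.ofReal |r (σ i) - r j| ^ (-s)))]
    refine Finset.sum_congr rfl (fun j _ => ?_)
    simp only [hy_def, Function.comp_apply, EmbeddingLike.apply_eq_iff_eq]
  rw [hresum]
  -- clamped extension to ℕ
  set z : ℕ → ℝ := fun j => y ⟨min j (N-1), by omega⟩ with hz_def
  have hz_bd : ∀ j, |z j| ≤ 1/2 := fun j => hy_bd _
  have hz_eq : ∀ j, j ≤ N - 1 → ∀ (h : j < N), z j = y ⟨j, h⟩ := by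
    intro j hj h
    simp only [hz_def]
    congr 1
    exact Fin.mk.injEq _ _ _ _ ▸ (by omega : min j (N-1) = j)
  -- the pair sum
  set G : Fin N × Fin N → ℝ≥0∞ := fun p =>
    if p.1 = p.2 then 0 else ENNReal.ofReal |y p.1 - y p.2| ^ (-s) with hG_def
  set D : Finset ((_ : ℕ) × ℕ) := (Finset.Icc 1 K).sigma (fun k => Finset.range (N - k))
    with hD_def
  set v : (_ : ℕ) × ℕ → ℝ≥0∞ := fun p =>
    ENNReal.ofReal (z (p.2 + p.1) - z p.2) ^ (-s) with hv_def
  have hmemD : ∀ p ∈ D, 1 ≤ p.1 ∧ p.2 < N - p.1 := by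
    intro p hp
    rw [hD_def, Finset.mem_sigma, Finset.mem_Icc, Finset.mem_range] at hp
    exact ⟨hp.1.1, hp.2⟩
  set φ : (_ : ℕ) × ℕ → Fin N × Fin N := fun p =>
    (⟨min p.2 (N-1), by omega⟩, ⟨min (p.2 + p.1) (N-1), by omega⟩) with hφ_def
  have hφ1 : ∀ p ∈ D, ((φ p).1 : ℕ) = p.2 := by
    intro p hp
    have := hmemD p hp
    simp only [hφ_def]
    omega
  have hφ2 : ∀ p ∈ D, ((φ p).2 : ℕ) = p.2 + p.1 := by
    intro p hp
    have := hmemD p hp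
    simp only [hφ_def]
    omega
  have hφlt : ∀ p ∈ D, (φ p).1 < (φ p).2 := by
    intro p hp
    have h1 := hφ1 p hp
    have h2 := hφ2 p hp
    have := hmemD p hp
    rw [Fin.lt_def, h1, h2]
    omega
  have hyval : ∀ p ∈ D, y (φ p).1 = z p.2 ∧ y (φ p).2 = z (p.2 + p.1) := by
    intro p hp
    have h := hmemD p hp
    constructor
    · rw [hz_eq p.2 (by omega) (by omega)]
      congr 1
      rw [Fin.ext_iff, hφ1 p hp]
    · rw [hz_eq (p.2 + p.1) (by omega) (by omega)]
      congr 1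
      rw [Fin.ext_iff, hφ2 p hp]
  have habs : ∀ p ∈ D, |y (φ p).1 - y (φ p).2| = z (p.2 + p.1) - z p.2 := by
    intro p hp
    obtain ⟨h1, h2⟩ := hyval p hp
    rw [abs_sub_comm, h1, h2, abs_of_pos]
    rw [sub_pos, ← h1, ← h2]
    exact hy_strict (hφlt p hp)
  have hGφ : ∀ p ∈ D, G (φ p) = v p := by
    intro p hp
    rw [hG_def]
    simp only
    rw [if_neg (ne_of_lt (hφlt p hp)), habs p hp]
  have hGψ : ∀ p ∈ D, G ((φ p).2, (φ p).1) = v p := by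
    intro p hp
    rw [hG_def]
    simp only
    rw [if_neg (ne_of_gt (hφlt p hp)), abs_sub_comm, habs p hp]
  have hφinj : ∀ p ∈ D, ∀ q ∈ D, φ p = φ q → p = q := by
    intro p hp q hq heq
    have h1 := hφ1 p hp
    have h2 := hφ2 p hp
    have h3 := hφ1 q hq
    have h4 := hφ2 q hq
    rw [heq] at h1 h2
    have hsnd : p.2 = q.2 := by omega
    have hfst : p.1 = q.1 := by omega
    exact Sigma.ext hfst (heq_of_eq hsnd)
  have hψinj : ∀ p ∈ D, ∀ q ∈ D, ((φ p).2, (φ p).1) = ((φ q).2, (φ q).1) → p = q := by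
    intro p hp q hq heq
    apply hφinj p hp q hq
    rw [Prod.mk.injEq] at heq
    exact Prod.ext heq.2 heq.1
  have hsum1 : ∑ p ∈ D, v p
      ≤ ∑ p ∈ Finset.univ.filter (fun p : Fin N × Fin N => p.1 < p.2), G p := by
    calc ∑ p ∈ D, v p = ∑ p ∈ D, G (φ p) := Finset.sum_congr rfl (fun p hp => (hGφ p hp).symm)
      _ = ∑ q ∈ D.image φ, G q := (Finset.sum_image hφinj).symm
      _ ≤ _ := by
          apply Finset.sum_le_sum_of_subset
          intro q hq
          rw [Finset.mem_image] at hq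
          obtain ⟨p, hp, rfl⟩ := hq
          rw [Finset.mem_filter]
          exact ⟨Finset.mem_univ _, hφlt p hp⟩
  have hsum2 : ∑ p ∈ D, v p
      ≤ ∑ p ∈ Finset.univ.filter (fun p : Fin N × Fin N => p.2 < p.1), G p := by
    calc ∑ p ∈ D, v p = ∑ p ∈ D, G ((φ p).2, (φ p).1) :=
          Finset.sum_congr rfl (fun p hp => (hGψ p hp).symm)
      _ = ∑ q ∈ D.image (fun p => ((φ p).2, (φ p).1)), G q := (Finset.sum_image hψinj).symm
      _ ≤ _ := by
          apply Finset.sum_le_sum_of_subset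
          intro q hq
          rw [Finset.mem_image] at hq
          obtain ⟨p, hp, rfl⟩ := hq
          rw [Finset.mem_filter]
          exact ⟨Finset.mem_univ _, hφlt p hp⟩
  have hdisj : Disjoint (Finset.univ.filter (fun p : Fin N × Fin N => p.1 < p.2))
      (Finset.univ.filter (fun p : Fin N × Fin N => p.2 < p.1)) := by
    rw [Finset.disjoint_left]
    intro p hp1 hp2
    rw [Finset.mem_filter] at hp1 hp2
    exact absurd hp2.2 (lt_asymm hp1.2)
  have hperk : ∀ k ∈ Finset.Icc 1 K,
      ((N - k : ℕ) : ℝ≥0∞) ^ (1+s) * ((k:ℕ) : ℝ≥0∞) ^ (-s)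
        ≤ ∑ i ∈ Finset.range (N - k), ENNReal.ofReal (z (i + k) - z i) ^ (-s) := by
    intro k hk
    rw [Finset.mem_Icc] at hk
    rcases Nat.eq_zero_or_pos (N - k) with hnk | hnk
    · rw [hnk, Nat.cast_zero, ENNReal.zero_rpow_of_pos hs1, zero_mul]
      exact zero_le
    · apply jensen_ennreal hs (N - k) k hnk hk.1
      · intro i hi
        rw [Finset.mem_range] at hi
        rw [sub_pos, hz_eq i (by omega) (by omega), hz_eq (i + k) (by omega) (by omega)]
        exact hy_strict (Fin.mk_lt_mk.2 (by omega))
      · exact sum_shift_le z hz_bd (N - k) k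
  calc 2 * ∑ k ∈ Finset.Icc 1 K, ((N - k : ℕ) : ℝ≥0∞) ^ (1+s) * ((k:ℕ) : ℝ≥0∞) ^ (-s)
      ≤ 2 * ∑ p ∈ D, v p := by
        apply mul_le_mul_right
        rw [hD_def]
        refine le_trans (Finset.sum_le_sum hperk) (le_of_eq ?_)
        rw [Finset.sum_sigma]
    _ = ∑ p ∈ D, v p + ∑ p ∈ D, v p := two_mul _
    _ ≤ ∑ p ∈ Finset.univ.filter (fun p : Fin N × Fin N => p.1 < p.2), G p
        + ∑ p ∈ Finset.univ.filter (fun p : Fin N × Fin N => p.2 < p.1), G p :=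
          add_le_add hsum1 hsum2
    _ = ∑ p ∈ (Finset.univ.filter (fun p : Fin N × Fin N => p.1 < p.2))
        ∪ (Finset.univ.filter (fun p : Fin N × Fin N => p.2 < p.1)), G p :=
          (Finset.sum_union hdisj).symm
    _ ≤ ∑ p ∈ (Finset.univ : Finset (Fin N × Fin N)), G p :=
          Finset.sum_le_sum_of_subset (Finset.subset_univ _)
    _ = ∑ i, ∑ j, (if i = j then 0 else ENNReal.ofReal |y i - y j| ^ (-s)) := by
          rw [← Finset.univ_product_univ, Finset.sum_product]

private lemma minEs_le_aux {s : ℝ} (hs : 1 < s) (N : ℕ) (hN : 2 ≤ N) :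
    minEs 1 s (cube 1 1) N
      ≤ (N : ℝ≥0∞) ^ (1 + s) * (2 * ∑' n : ℕ+, (n : ℝ≥0∞) ^ (-s)) := by
  have hs0 : (0:ℝ) ≤ s := by linarith
  have hd : (0:ℝ) < (N:ℝ) - 1 := by
    have : (2:ℝ) ≤ N := by exact_mod_cast hN
    linarith
  have hNpos : (0:ℝ) < N := by positivity
  set Z := ∑' n : ℕ+, (n : ℝ≥0∞) ^ (-s) with hZ
  set ω : Fin N → EuclideanSpace ℝ (Fin 1) := fun i =>
    (WithLp.equiv 2 (Fin 1 → ℝ)).symm (fun _ => (i:ℝ)/((N:ℝ)-1) - 1/2) with hω_def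
  have hωval : ∀ (i : Fin N) (j : Fin 1), ω i j = (i:ℝ)/((N:ℝ)-1) - 1/2 := by
    intro i j
    rw [hω_def]
    rfl
  have hmem : ∀ i, ω i ∈ cube 1 1 := by
    intro i j
    rw [hωval]
    have h0 : (0:ℝ) ≤ (i:ℝ)/((N:ℝ)-1) := by positivity
    have h1 : (i:ℝ)/((N:ℝ)-1) ≤ 1 := by
      rw [div_le_one hd]
      have : (i:ℕ) < N := i.isLt
      have : ((i:ℕ):ℝ) ≤ (N:ℝ) - 1 := by
        have : (i:ℕ) + 1 ≤ N := this
        have := (Nat.cast_le (α := ℝ)).2 this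
        push_cast at this
        linarith
      exact this
    rw [abs_le]
    constructor <;> [linarith; linarith]
  refine le_trans (iInf₂_le ω hmem) ?_
  -- bound each term
  have hterm : ∀ i j : Fin N, i ≠ j →
      edist (ω i) (ω j) ^ (-s)
        ≤ (N : ℝ≥0∞) ^ s * ((max (i:ℕ) (j:ℕ) - min (i:ℕ) (j:ℕ) : ℕ) : ℝ≥0∞) ^ (-s) := by
    intro i j hij
    set m : ℕ := max (i:ℕ) (j:ℕ) - min (i:ℕ) (j:ℕ) with hm
    have hm1 : 1 ≤ m := by
      have : (i:ℕ) ≠ (j:ℕ) := fun h => hij (Fin.ext h)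
      omega
    have habs : |ω i 0 - ω j 0| = (m:ℝ)/((N:ℝ)-1) := by
      rw [hωval, hωval]
      have : (i:ℝ)/((N:ℝ)-1) - 1/2 - ((j:ℝ)/((N:ℝ)-1) - 1/2) = ((i:ℝ)-(j:ℝ))/((N:ℝ)-1) := by
        ring
      rw [this, abs_div, abs_of_pos hd]
      congr 1
      rcases le_total ((i:ℕ)) ((j:ℕ)) with h | h
      · rw [abs_of_nonpos (by rw [sub_nonpos]; exact Nat.cast_le.2 h)]
        rw [hm, max_eq_right h, min_eq_left h]
        push_cast [Nat.cast_sub h]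
        ring
      · rw [abs_of_nonneg (by rw [sub_nonneg]; exact Nat.cast_le.2 h)]
        rw [hm, max_eq_left h, min_eq_right h]
        push_cast [Nat.cast_sub h]
        ring
    rw [edist_eucl1, habs]
    -- ofReal (m/(N-1)) ≥ m/N  in ℝ≥0∞
    have hge : ((m:ℕ) : ℝ≥0∞) / (N : ℝ≥0∞) ≤ ENNReal.ofReal ((m:ℝ)/((N:ℝ)-1)) := by
      have h1 : (m:ℝ)/(N:ℝ) ≤ (m:ℝ)/((N:ℝ)-1) :=
        div_le_div_of_nonneg_left (by positivity) hd (by linarith)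
      calc ((m:ℕ) : ℝ≥0∞) / (N : ℝ≥0∞) = ENNReal.ofReal ((m:ℝ)/(N:ℝ)) := by
            rw [ENNReal.ofReal_div_of_pos hNpos]
            simp
        _ ≤ _ := ENNReal.ofReal_le_ofReal h1
    -- antitonicity of rpow with negative exponent
    have hanti : ENNReal.ofReal ((m:ℝ)/((N:ℝ)-1)) ^ (-s)
        ≤ (((m:ℕ) : ℝ≥0∞) / (N : ℝ≥0∞)) ^ (-s) := by
      rw [ENNReal.rpow_neg, ENNReal.rpow_neg]
      exact ENNReal.inv_le_inv.2 (ENNReal.rpow_le_rpow hge hs0)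
    refine le_trans hanti (le_of_eq ?_)
    have hm0 : ((m:ℕ) : ℝ≥0∞) ≠ 0 := Nat.cast_ne_zero.2 (by omega)
    have hmt : ((m:ℕ) : ℝ≥0∞) ≠ ⊤ := ENNReal.natCast_ne_top m
    have hN0 : ((N:ℕ) : ℝ≥0∞) ≠ 0 := Nat.cast_ne_zero.2 (by omega)
    rw [ENNReal.rpow_neg, ENNReal.div_rpow_of_nonneg _ _ hs0,
      ENNReal.inv_div (Or.inr (ENNReal.rpow_ne_top_of_nonneg hs0 hmt))
        (Or.inl (by simp [ENNReal.rpow_eq_zero_iff, hN0])),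
      div_eq_mul_inv, ← ENNReal.rpow_neg]
  -- inner sum bound
  have hinner : ∀ i : Fin N,
      ∑ j, (if i = j then 0
        else ((max (i:ℕ) (j:ℕ) - min (i:ℕ) (j:ℕ) : ℕ) : ℝ≥0∞) ^ (-s)) ≤ 2 * Z := by
    intro i
    set F : Fin N → ℝ≥0∞ := fun j => (if i = j then 0
      else ((max (i:ℕ) (j:ℕ) - min (i:ℕ) (j:ℕ) : ℕ) : ℝ≥0∞) ^ (-s)) with hF
    have key : ∀ (T : Finset (Fin N)) (ι : Fin N → ℕ+),
        (∀ j ∈ T, F j = ((ι j : ℕ) : ℝ≥0∞) ^ (-s)) →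
        (∀ a ∈ T, ∀ b ∈ T, ι a = ι b → a = b) →
        ∑ j ∈ T, F j ≤ Z := by
      intro T ι hval hinj
      calc ∑ j ∈ T, F j = ∑ j ∈ T, ((ι j : ℕ) : ℝ≥0∞) ^ (-s) := Finset.sum_congr rfl hval
        _ = ∑ m ∈ T.image ι, ((m : ℕ) : ℝ≥0∞) ^ (-s) := (Finset.sum_image (f := fun m : ℕ+ => ((m : ℕ) : ℝ≥0∞) ^ (-s)) hinj).symm
        _ ≤ ∑' m : ℕ+, ((m : ℕ) : ℝ≥0∞) ^ (-s) := ENNReal.sum_le_tsum _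
        _ = Z := rfl
    have hlt : ∑ j ∈ Finset.univ.filter (fun j : Fin N => j < i), F j ≤ Z := by
      apply key _ (fun j => ((i:ℕ) - (j:ℕ)).toPNat')
      · intro j hj
        rw [Finset.mem_filter] at hj
        have hji : (j:ℕ) < (i:ℕ) := hj.2
        rw [hF]
        simp only
        rw [if_neg (fun h => by rw [h] at hji; omega)]
        congr 2
        rw [PNat.toPNat'_coe (by omega), max_eq_left hji.le, min_eq_right hji.le]
      · intro a ha b hb hab
        rw [Finset.mem_filter] at ha hb
        have ha' : (a:ℕ) < (i:ℕ) := ha.2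
        have hb' : (b:ℕ) < (i:ℕ) := hb.2
        have := congrArg (fun m : ℕ+ => (m : ℕ)) hab
        simp only [PNat.toPNat'_coe (by omega : 0 < (i:ℕ) - (a:ℕ)),
          PNat.toPNat'_coe (by omega : 0 < (i:ℕ) - (b:ℕ))] at this
        exact Fin.ext (by omega)
    have hgt : ∑ j ∈ Finset.univ.filter (fun j : Fin N => i < j), F j ≤ Z := by
      apply key _ (fun j => ((j:ℕ) - (i:ℕ)).toPNat')
      · intro j hj
        rw [Finset.mem_filter] at hj
        have hji : (i:ℕ) < (j:ℕ) := hj.2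
        rw [hF]
        simp only
        rw [if_neg (fun h => by rw [h] at hji; omega)]
        congr 2
        rw [PNat.toPNat'_coe (by omega), max_eq_right hji.le, min_eq_left hji.le]
      · intro a ha b hb hab
        rw [Finset.mem_filter] at ha hb
        have ha' : (i:ℕ) < (a:ℕ) := ha.2
        have hb' : (i:ℕ) < (b:ℕ) := hb.2
        have := congrArg (fun m : ℕ+ => (m : ℕ)) hab
        simp only [PNat.toPNat'_coe (by omega : 0 < (a:ℕ) - (i:ℕ)),
          PNat.toPNat'_coe (by omega : 0 < (b:ℕ) - (i:ℕ))] at this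
        exact Fin.ext (by omega)
    have hdisj : Disjoint (Finset.univ.filter (fun j : Fin N => j < i))
        (Finset.univ.filter (fun j : Fin N => i < j)) := by
      rw [Finset.disjoint_left]
      intro p hp1 hp2
      rw [Finset.mem_filter] at hp1 hp2
      exact absurd hp2.2 (lt_asymm hp1.2)
    have hcover : ∑ j, F j
        ≤ ∑ j ∈ (Finset.univ.filter (fun j : Fin N => j < i))
            ∪ (Finset.univ.filter (fun j : Fin N => i < j)), F j := by
      apply le_of_eq
      symm
      apply Finset.sum_subset (Finset.subset_univ _)
      intro j _ hj
      rw [Finset.mem_union, Finset.mem_filter, Finset.mem_filter] at hj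
      push_neg at hj
      have : j = i := le_antisymm (hj.2 (Finset.mem_univ j)) (hj.1 (Finset.mem_univ j))
      rw [hF]
      simp [this]
    calc ∑ j, F j ≤ _ := hcover
      _ = ∑ j ∈ Finset.univ.filter (fun j : Fin N => j < i), F j
          + ∑ j ∈ Finset.univ.filter (fun j : Fin N => i < j), F j := Finset.sum_union hdisj
      _ ≤ Z + Z := add_le_add hlt hgt
      _ = 2 * Z := (two_mul Z).symm
  -- assemble
  have hN0' : ((N:ℕ) : ℝ≥0∞) ≠ 0 := Nat.cast_ne_zero.2 (by omega)
  have hNt : ((N:ℕ) : ℝ≥0∞) ≠ ⊤ := ENNReal.natCast_ne_top N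
  unfold Esfin
  calc ∑ i, ∑ j, (if i = j then 0 else edist (ω i) (ω j) ^ (-s))
      ≤ ∑ i : Fin N, ∑ j, (if i = j then 0
          else (N : ℝ≥0∞) ^ s * ((max (i:ℕ) (j:ℕ) - min (i:ℕ) (j:ℕ) : ℕ) : ℝ≥0∞) ^ (-s)) := by
        refine Finset.sum_le_sum fun i _ => Finset.sum_le_sum fun j _ => ?_
        by_cases hij : i = j
        · simp [hij]
        · rw [if_neg hij, if_neg hij]
          exact hterm i j hij
    _ = ∑ i : Fin N, (N : ℝ≥0∞) ^ s * ∑ j, (if i = j then 0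
          else ((max (i:ℕ) (j:ℕ) - min (i:ℕ) (j:ℕ) : ℕ) : ℝ≥0∞) ^ (-s)) := by
        refine Finset.sum_congr rfl fun i _ => ?_
        rw [Finset.mul_sum]
        refine Finset.sum_congr rfl fun j _ => ?_
        by_cases hij : i = j <;> simp [hij]
    _ ≤ ∑ _i : Fin N, (N : ℝ≥0∞) ^ s * (2 * Z) :=
        Finset.sum_le_sum fun i _ => mul_le_mul_right (hinner i) _
    _ = (N : ℝ≥0∞) * ((N : ℝ≥0∞) ^ s * (2 * Z)) := by
        rw [Finset.sum_const, Finset.card_univ, Fintype.card_fin, nsmul_eq_mul]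
    _ = (N : ℝ≥0∞) ^ (1 + s) * (2 * Z) := by
        rw [ENNReal.rpow_add 1 s hN0' hNt, ENNReal.rpow_one, mul_assoc]

private lemma ratio_tendsto {s : ℝ} (hs : 1 < s) (k : ℕ) :
    Filter.Tendsto (fun N : ℕ => ((N - k : ℕ) : ℝ≥0∞) ^ (1+s) / (N : ℝ≥0∞) ^ (1+s))
      Filter.atTop (nhds 1) := by
  have h1 : Filter.Tendsto (fun N : ℕ => ((N:ℝ) - k)/(N:ℝ)) Filter.atTop (nhds 1) := by
    have h0 : Filter.Tendsto (fun N : ℕ => 1 - (k:ℝ)/(N:ℝ)) Filter.atTop (nhds (1 - 0)) :=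
      tendsto_const_nhds.sub (tendsto_const_div_atTop_nhds_zero_nat (k:ℝ))
    rw [sub_zero] at h0
    apply h0.congr'
    filter_upwards [Filter.eventually_ge_atTop 1] with N hN
    have hN' : (0:ℝ) < N := by exact_mod_cast hN
    field_simp
  have h2 : Filter.Tendsto (fun N : ℕ => ENNReal.ofReal (((N:ℝ) - k)/(N:ℝ)))
      Filter.atTop (nhds 1) := by
    have := (ENNReal.continuous_ofReal.tendsto 1).comp h1
    rw [ENNReal.ofReal_one] at this
    exact this
  have h3 : Filter.Tendsto (fun N : ℕ => ((N - k : ℕ) : ℝ≥0∞) / (N : ℝ≥0∞))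
      Filter.atTop (nhds 1) := by
    apply h2.congr'
    filter_upwards [Filter.eventually_ge_atTop (k+1)] with N hN
    have hkN : k ≤ N := by omega
    have hN' : (0:ℝ) < N := by exact_mod_cast (by omega : 0 < N)
    rw [← Nat.cast_sub hkN, ENNReal.ofReal_div_of_pos hN', ENNReal.ofReal_natCast,
      ENNReal.ofReal_natCast]
  have h4 := ((ENNReal.continuous_rpow_const (y := 1+s)).tendsto (1:ℝ≥0∞)).comp h3
  rw [ENNReal.one_rpow] at h4
  apply h4.congr
  intro N
  simp only [Function.comp_apply]
  rw [ENNReal.div_rpow_of_nonneg _ _ (by linarith : (0:ℝ) ≤ 1+s)]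

private lemma V_tendsto {s : ℝ} (hs : 1 < s) (K : ℕ) :
    Filter.Tendsto (fun N : ℕ =>
        (2 * ∑ k ∈ Finset.Icc 1 K, ((N - k : ℕ) : ℝ≥0∞) ^ (1+s) * ((k:ℕ) : ℝ≥0∞) ^ (-s))
          / (N : ℝ≥0∞) ^ (1+s))
      Filter.atTop (nhds (2 * ∑ k ∈ Finset.Icc 1 K, ((k:ℕ) : ℝ≥0∞) ^ (-s))) := by
  have hrw : ∀ N : ℕ,
      (2 * ∑ k ∈ Finset.Icc 1 K, ((N - k : ℕ) : ℝ≥0∞) ^ (1+s) * ((k:ℕ) : ℝ≥0∞) ^ (-s))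
          / (N : ℝ≥0∞) ^ (1+s)
      = 2 * ∑ k ∈ Finset.Icc 1 K,
          (((N - k : ℕ) : ℝ≥0∞) ^ (1+s) / (N : ℝ≥0∞) ^ (1+s)) * ((k:ℕ) : ℝ≥0∞) ^ (-s) := by
    intro N
    rw [div_eq_mul_inv, mul_assoc, Finset.sum_mul]
    congr 1
    refine Finset.sum_congr rfl fun k _ => ?_
    rw [div_eq_mul_inv]
    ring
  simp only [hrw]
  apply ENNReal.Tendsto.const_mul
  · apply tendsto_finset_sum
    intro k hk
    have hk1 : 1 ≤ k := (Finset.mem_Icc.1 hk).1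
    have h := ENNReal.Tendsto.mul_const (ratio_tendsto hs k)
      (b := ((k:ℕ) : ℝ≥0∞) ^ (-s)) (Or.inl one_ne_zero)
    rwa [one_mul] at h
  · exact Or.inr (by simp : (2:ℝ≥0∞) ≠ ⊤)

private lemma zeta_sup (s : ℝ) :
    (∑' n : ℕ+, (n : ℝ≥0∞) ^ (-s))
      = ⨆ K : ℕ, ∑ k ∈ Finset.Icc 1 K, ((k:ℕ) : ℝ≥0∞) ^ (-s) := by
  have h1 : (∑' n : ℕ+, (n : ℝ≥0∞) ^ (-s))
      = ∑' n : ℕ, (((n+1:ℕ)) : ℝ≥0∞) ^ (-s) := by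
    rw [← Equiv.pnatEquivNat.symm.tsum_eq (fun n : ℕ+ => ((n:ℕ) : ℝ≥0∞) ^ (-s))]
    refine tsum_congr fun n => ?_
    simp [Equiv.pnatEquivNat]
  have h2 : ∀ K : ℕ, ∑ k ∈ Finset.Icc 1 K, ((k:ℕ) : ℝ≥0∞) ^ (-s)
      = ∑ n ∈ Finset.range K, (((n+1:ℕ)) : ℝ≥0∞) ^ (-s) := by
    intro K
    have himg : Finset.Icc 1 K = Finset.image (· + 1) (Finset.range K) := by
      ext a
      simp only [Finset.mem_Icc, Finset.mem_image, Finset.mem_range]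
      constructor
      · intro h; exact ⟨a - 1, by omega, by omega⟩
      · rintro ⟨b, hb, rfl⟩; omega
    rw [himg, Finset.sum_image (by intro a _ b _ h; simp only at h; omega)]
  rw [h1, ENNReal.tsum_eq_iSup_nat]
  exact iSup_congr fun K => (h2 K).symm

end RieszAux

/-- For `s > 1`, the asymptotic minimal Riesz `s`-energy constant in
dimension 1 equals `2 ζ(s)`. -/
theorem riesz_constant_dim_one (s : ℝ) (hs : 1 < s) :
    Filter.Tendsto (fun N : ℕ => minEs 1 s (cube 1 1) N / (N : ℝ≥0∞) ^ (1 + s))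
      Filter.atTop (nhds (2 * ∑' n : ℕ+, (n : ℝ≥0∞) ^ (-s))) := by
  set Z := ∑' n : ℕ+, (n : ℝ≥0∞) ^ (-s) with hZ
  set F := fun N : ℕ => minEs 1 s (cube 1 1) N / (N : ℝ≥0∞) ^ (1 + s) with hF
  have hupper : ∀ᶠ N : ℕ in Filter.atTop, F N ≤ 2 * Z := by
    filter_upwards [Filter.eventually_ge_atTop 2] with N hN
    rw [hF]
    simp only
    have hN0 : ((N:ℕ) : ℝ≥0∞) ≠ 0 := Nat.cast_ne_zero.2 (by omega)
    have hNt : ((N:ℕ) : ℝ≥0∞) ≠ ⊤ := ENNReal.natCast_ne_top N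
    have hb0 : (N : ℝ≥0∞) ^ (1+s) ≠ 0 := by
      simp [ENNReal.rpow_eq_zero_iff, hN0, hNt]
    have hbt : (N : ℝ≥0∞) ^ (1+s) ≠ ⊤ :=
      ENNReal.rpow_ne_top_of_nonneg (by linarith) hNt
    exact (ENNReal.div_le_iff_le_mul (Or.inl hb0) (Or.inl hbt)).2
      ((minEs_le_aux hs N hN).trans_eq (mul_comm _ _))
  have hlimsup : Filter.limsup F Filter.atTop ≤ 2 * Z :=
    Filter.limsup_le_of_le (by isBoundedDefault) hupper
  have hlower : ∀ K N : ℕ,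
      (2 * ∑ k ∈ Finset.Icc 1 K, ((N-k:ℕ) : ℝ≥0∞) ^ (1+s) * ((k:ℕ) : ℝ≥0∞) ^ (-s))
        / (N : ℝ≥0∞) ^ (1+s) ≤ F N := by
    intro K N
    apply ENNReal.div_le_div_right
    exact le_iInf₂ fun ω hω => esfin_ge hs N K ω hω
  have hliminf : 2 * Z ≤ Filter.liminf F Filter.atTop := by
    have hK : ∀ K : ℕ, 2 * ∑ k ∈ Finset.Icc 1 K, ((k:ℕ) : ℝ≥0∞) ^ (-s)
        ≤ Filter.liminf F Filter.atTop := by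
      intro K
      have h1 := Filter.liminf_le_liminf (f := Filter.atTop)
        (Filter.Eventually.of_forall (hlower K))
      rwa [(V_tendsto hs K).liminf_eq] at h1
    rw [hZ, zeta_sup s, ENNReal.mul_iSup]
    exact iSup_le hK
  exact tendsto_of_le_liminf_of_limsup_le hliminf hlimsup
end

section
/- Lower bound half of the minimization: for any infinite point configuration C ⊂ ℝ^d of density 1, W_s(C) ≥ C_{s,d}. -/
open scoped Classical

open MeasureTheory Filter Topology ENNReal Set

section Aux

open Filter

variable {d : ℕ} {s : ℝ}

local notation "E" d => EuclideanSpace ℝ (Fin d)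

lemma rpow_anti {x y : ℝ≥0∞} {s : ℝ} (hx : x ≠ 0) (hxy : x ≤ y) (hs : 0 ≤ s) :
    y ^ (-s) ≤ x ^ (-s) := by
  rw [ENNReal.rpow_neg, ENNReal.rpow_neg]
  exact ENNReal.inv_le_inv.mpr (ENNReal.rpow_le_rpow hxy hs)

lemma edist_le_of_mem_cube {R : ℝ} (hR : 0 ≤ R) {p q : EuclideanSpace ℝ (Fin d)}
    (hp : p ∈ cube d R) (hq : q ∈ cube d R) :
    edist p q ≤ ENNReal.ofReal (Real.sqrt (d * R ^ 2) + 1) := by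
  have hd : dist p q ≤ Real.sqrt (d * R ^ 2) := by
    rw [EuclideanSpace.dist_eq]
    apply Real.sqrt_le_sqrt
    calc ∑ i, dist (p i) (q i) ^ 2 ≤ ∑ _i : Fin d, R ^ 2 := by
          apply Finset.sum_le_sum
          intro i _
          have h1 : |p i - q i| ≤ R := by
            calc |p i - q i| ≤ |p i| + |q i| := abs_sub _ _
              _ ≤ R / 2 + R / 2 := add_le_add (hp i) (hq i)
              _ = R := by ring
          rw [Real.dist_eq]
          apply sq_le_sq' _ h1
          linarith [abs_nonneg (p i - q i)]
      _ = d * R ^ 2 := by simp [Finset.sum_const, nsmul_eq_mul]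
  rw [edist_dist]
  exact ENNReal.ofReal_le_ofReal (by linarith)

/-- If `A` is an infinite subset of a cube, its Riesz interaction energy is infinite. -/
lemma interE_eq_top_of_infinite {R : ℝ} (hR : 0 ≤ R) (hs : 0 ≤ s)
    {A : Set (EuclideanSpace ℝ (Fin d))} (hA : A ⊆ cube d R) (hinf : A.Infinite) :
    interE d s A A = ⊤ := by
  set B : ℝ≥0∞ := ENNReal.ofReal (Real.sqrt (d * R ^ 2) + 1) with hB
  have hB0 : B ≠ 0 := by
    simp only [hB, ne_eq, ENNReal.ofReal_eq_zero, not_le]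
    positivity
  have hBt : B ≠ ⊤ := ENNReal.ofReal_ne_top
  set ε : ℝ≥0∞ := B ^ (-s) with hε
  have hε0 : ε ≠ 0 := by
    simp only [hε, ne_eq, ENNReal.rpow_eq_zero_iff, not_or]
    constructor
    · rintro ⟨h, -⟩; exact hB0 h
    · rintro ⟨h, -⟩; exact hBt h
  obtain ⟨q₀, hq₀⟩ := hinf.nonempty
  set f : A → A → ℝ≥0∞ := fun p q =>
    if (p : EuclideanSpace ℝ (Fin d)) = (q : EuclideanSpace ℝ (Fin d)) then 0
    else edist (p : EuclideanSpace ℝ (Fin d)) (q : EuclideanSpace ℝ (Fin d)) ^ (-s) with hf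
  have key : ∀ p : A, (p : EuclideanSpace ℝ (Fin d)) ≠ q₀ → ε ≤ f p ⟨q₀, hq₀⟩ := by
    intro p hp
    simp only [hf, hp, if_neg, if_false]
    exact rpow_anti (by simpa [edist_eq_zero] using hp)
      (edist_le_of_mem_cube hR (hA p.2) (hA hq₀)) hs
  have hAinf : (A \ {q₀}).Infinite := hinf.diff (Set.finite_singleton q₀)
  let e := hAinf.natEmbedding
  set g : ℕ → A := fun n => ⟨(e n : EuclideanSpace ℝ (Fin d)), (e n).2.1⟩ with hg
  have hginj : Function.Injective g := by
    intro m n hmn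
    have h := congrArg Subtype.val hmn
    exact e.injective (Subtype.ext h)
  have h1 : (⊤ : ℝ≥0∞) ≤ ∑' p : A, f p ⟨q₀, hq₀⟩ := by
    calc (⊤ : ℝ≥0∞) = ∑' _n : ℕ, ε := (ENNReal.tsum_const_eq_top_of_ne_zero hε0).symm
      _ ≤ ∑' n : ℕ, f (g n) ⟨q₀, hq₀⟩ := by
          apply ENNReal.tsum_le_tsum
          intro n
          exact key (g n) (e n).2.2
      _ ≤ ∑' p : A, f p ⟨q₀, hq₀⟩ :=
          ENNReal.tsum_comp_le_tsum_of_injective hginj _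
  have h2 : ∑' p : A, f p ⟨q₀, hq₀⟩ ≤ interE d s A A := by
    apply ENNReal.tsum_le_tsum
    intro p
    exact ENNReal.le_tsum _
  exact top_le_iff.mp (h1.trans h2)

end Aux

section Aux2

lemma interE_ge_minEs {d : ℕ} {s R : ℝ} (hR : 0 < R)
    {A : Set (EuclideanSpace ℝ (Fin d))} (hA : A ⊆ cube d R) (hfin : A.Finite) :
    ENNReal.ofReal (R ^ (-s)) * minEs d s (cube d 1) hfin.toFinset.card ≤ interE d s A A := by
  haveI := hfin.fintype
  have hcard : hfin.toFinset.card = Fintype.card A := by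
    simp [Set.Finite.card_toFinset]
  set N := hfin.toFinset.card with hN
  obtain ⟨e⟩ : Nonempty (Fin N ≃ A) := by
    rw [hcard]; exact ⟨(Fintype.equivFin A).symm⟩
  set ω : Fin N → EuclideanSpace ℝ (Fin d) := fun i => R⁻¹ • ((e i : EuclideanSpace ℝ (Fin d))) with hω
  have hωmem : ∀ i, ω i ∈ cube d 1 := by
    intro i k
    have h1 : |(e i : EuclideanSpace ℝ (Fin d)) k| ≤ R / 2 := hA (e i).2 k
    have : ω i k = R⁻¹ * (e i : EuclideanSpace ℝ (Fin d)) k := rfl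
    rw [this, abs_mul, abs_of_pos (inv_pos.mpr hR)]
    calc R⁻¹ * |(e i : EuclideanSpace ℝ (Fin d)) k| ≤ R⁻¹ * (R / 2) := by
          exact mul_le_mul_of_nonneg_left h1 (inv_pos.mpr hR).le
      _ = 1 / 2 := by field_simp
  have hsmul : ∀ i, (e i : EuclideanSpace ℝ (Fin d)) = R • ω i := by
    intro i
    rw [hω]
    simp [smul_smul, mul_inv_cancel₀ hR.ne']
  have hinj : Function.Injective ω := by
    intro i j hij
    apply e.injective
    apply Subtype.ext
    rw [hsmul i, hsmul j, hij]
  have hterm : ∀ i j : Fin N,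
      (if (e i : EuclideanSpace ℝ (Fin d)) = (e j : EuclideanSpace ℝ (Fin d)) then 0
        else edist (e i : EuclideanSpace ℝ (Fin d)) (e j : EuclideanSpace ℝ (Fin d)) ^ (-s))
      = ENNReal.ofReal (R ^ (-s)) * (if i = j then 0 else edist (ω i) (ω j) ^ (-s)) := by
    intro i j
    by_cases hij : i = j
    · subst hij; simp
    · have hne : (e i : EuclideanSpace ℝ (Fin d)) ≠ (e j : EuclideanSpace ℝ (Fin d)) := by
        intro h
        exact hij (e.injective (Subtype.ext h))
      rw [if_neg hne, if_neg hij]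
      rw [hsmul i, hsmul j, edist_smul₀]
      have hnn : (‖R‖₊ : ℝ≥0∞) = ENNReal.ofReal R := Real.enorm_eq_ofReal hR.le
      rw [ENNReal.smul_def, smul_eq_mul, hnn,
        ENNReal.mul_rpow_of_ne_top ENNReal.ofReal_ne_top (edist_ne_top _ _),
        ENNReal.ofReal_rpow_of_pos hR]
  have hsum : interE d s A A =
      ENNReal.ofReal (R ^ (-s)) * Esfin d s ω := by
    rw [interE, Esfin]
    rw [tsum_fintype]
    have : ∀ p : A, ∑' q : A, (if (p : EuclideanSpace ℝ (Fin d)) = (q : EuclideanSpace ℝ (Fin d))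
        then 0 else edist (p : EuclideanSpace ℝ (Fin d)) (q : EuclideanSpace ℝ (Fin d)) ^ (-s))
        = ∑ q : A, (if (p : EuclideanSpace ℝ (Fin d)) = (q : EuclideanSpace ℝ (Fin d))
        then 0 else edist (p : EuclideanSpace ℝ (Fin d)) (q : EuclideanSpace ℝ (Fin d)) ^ (-s)) :=
      fun p => tsum_fintype _
    simp_rw [this]
    rw [← Equiv.sum_comp e (fun p => ∑ q : A, _)]
    have : ∀ i : Fin N, ∑ q : A, (if (e i : EuclideanSpace ℝ (Fin d)) = (q : EuclideanSpace ℝ (Fin d))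
        then 0 else edist (e i : EuclideanSpace ℝ (Fin d)) (q : EuclideanSpace ℝ (Fin d)) ^ (-s))
        = ∑ j : Fin N, (if (e i : EuclideanSpace ℝ (Fin d)) = (e j : EuclideanSpace ℝ (Fin d))
        then 0 else edist (e i : EuclideanSpace ℝ (Fin d)) (e j : EuclideanSpace ℝ (Fin d)) ^ (-s)) :=
      fun i => (Equiv.sum_comp e _).symm
    simp_rw [this, hterm, ← Finset.mul_sum]
  rw [hsum]
  apply mul_le_mul_right _ _
  exact iInf₂_le ω hωmem

end Aux2

/-- for any configuration of density 1, `W_s(C) ≥ C_{s,d}`. -/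
theorem Ws_ge_Csd_of_density_one (d : ℕ) (hd : 0 < d) (s : ℝ) (hs : (d : ℝ) < s)
    (Csd : ℝ) (hCsd : 0 < Csd)
    (hC : Filter.Tendsto (fun N : ℕ => minEs d s (cube d 1) N / (N : ℝ≥0∞) ^ (1 + s / (d : ℝ)))
      Filter.atTop (nhds (ENNReal.ofReal Csd)))
    (C : Set (EuclideanSpace ℝ (Fin d))) (hdens : Dens d C = 1) :
    ENNReal.ofReal Csd ≤ Ws d s C := by
  have hd0 : (0 : ℝ) < d := by exact_mod_cast hd
  have hs0 : (0 : ℝ) < s := lt_trans hd0 hs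
  set p : ℝ := 1 + s / (d : ℝ) with hp
  have hp1 : (1 : ℝ) < p := by
    rw [hp]
    have : 0 < s / (d : ℝ) := div_pos hs0 hd0
    linarith
  have hp0 : (0 : ℝ) < p := lt_trans one_pos hp1
  -- reduce to: ∀ c with 0 < c < Csd, ofReal c ≤ Ws
  have main : ∀ c : ℝ, 0 < c → c < Csd → ENNReal.ofReal c ≤ Ws d s C := by
    intro c hc0 hcC
    set t : ℝ := (c + Csd) / 2 with ht
    have hct : c < t := by rw [ht]; linarith
    have htC : t < Csd := by rw [ht]; linarith
    have ht0 : 0 < t := lt_trans hc0 hct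
    set θ : ℝ := (c / t) ^ p⁻¹ with hθ
    have hct1 : c / t < 1 := (div_lt_one ht0).mpr hct
    have hct0 : 0 < c / t := div_pos hc0 ht0
    have hθ0 : 0 < θ := Real.rpow_pos_of_pos hct0 _
    have hθ1 : θ < 1 := Real.rpow_lt_one hct0.le hct1 (by positivity)
    have hθp : θ ^ p = c / t := by
      rw [hθ, ← Real.rpow_mul hct0.le, inv_mul_cancel₀ hp0.ne', Real.rpow_one]
    -- from hC: eventually minEs ≥ ofReal t * N^p
    have hev1 : ∀ᶠ N : ℕ in Filter.atTop,
        ENNReal.ofReal t < minEs d s (cube d 1) N / (N : ℝ≥0∞) ^ p := by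
      apply hC.eventually
      apply lt_mem_nhds
      exact ENNReal.ofReal_lt_ofReal_iff hCsd |>.mpr htC
    obtain ⟨N₀, hN₀⟩ := Filter.eventually_atTop.mp hev1
    have hminEs : ∀ N : ℕ, N₀ ≤ N → 1 ≤ N →
        ENNReal.ofReal t * (N : ℝ≥0∞) ^ p ≤ minEs d s (cube d 1) N := by
      intro N hN h1N
      have hNp0 : ((N : ℝ≥0∞)) ^ p ≠ 0 := by
        simp only [ne_eq, ENNReal.rpow_eq_zero_iff, not_or]
        constructor
        · rintro ⟨h, -⟩; exact_mod_cast absurd h (by exact_mod_cast Nat.one_le_iff_ne_zero.mp h1N)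
        · rintro ⟨h, -⟩; exact (ENNReal.natCast_ne_top N) h
      have hNpt : ((N : ℝ≥0∞)) ^ p ≠ ⊤ := by
        apply ENNReal.rpow_ne_top_of_nonneg hp0.le (ENNReal.natCast_ne_top N)
      have := (hN₀ N hN).le
      calc ENNReal.ofReal t * (N : ℝ≥0∞) ^ p
          ≤ minEs d s (cube d 1) N / (N : ℝ≥0∞) ^ p * (N : ℝ≥0∞) ^ p :=
            mul_le_mul_left this _
        _ = minEs d s (cube d 1) N := ENNReal.div_mul_cancel hNp0 hNpt
    -- density: eventually encard > θ R^d
    have hθlt : ENNReal.ofReal θ < 1 := ENNReal.ofReal_lt_one.mpr hθ1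
    have hev2 : ∀ᶠ R : ℝ in Filter.atTop,
        ENNReal.ofReal θ < ((C ∩ cube d R).encard : ℝ≥0∞) / ENNReal.ofReal (R ^ (d : ℝ)) := by
      refine Filter.eventually_lt_of_lt_liminf ?_ (by isBoundedDefault)
      show ENNReal.ofReal θ < Dens d C
      rw [hdens]
      exact hθlt
    have hev3 : ∀ᶠ R : ℝ in Filter.atTop, (max N₀ 1 : ℝ) ≤ θ * R ^ (d : ℝ) := by
      have h1 : Filter.Tendsto (fun R : ℝ => R ^ (d : ℝ)) Filter.atTop Filter.atTop :=
        tendsto_rpow_atTop hd0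
      have h2 : Filter.Tendsto (fun R : ℝ => θ * R ^ (d : ℝ)) Filter.atTop Filter.atTop :=
        h1.const_mul_atTop hθ0
      exact h2.eventually_ge_atTop _
    have hev4 : ∀ᶠ R : ℝ in Filter.atTop, (1 : ℝ) ≤ R := Filter.eventually_ge_atTop 1
    -- final eventual bound
    have hfinal : ∀ᶠ R : ℝ in Filter.atTop, ENNReal.ofReal c ≤
        ENNReal.ofReal (R ^ (-(d : ℝ))) * interE d s (C ∩ cube d R) (C ∩ cube d R) := by
      filter_upwards [hev2, hev3, hev4] with R h2 h3 h4
      have hR0 : (0 : ℝ) < R := lt_of_lt_of_le one_pos h4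
      have hRd0 : (0 : ℝ) < R ^ (d : ℝ) := Real.rpow_pos_of_pos hR0 _
      set A := C ∩ cube d R with hA
      have hAsub : A ⊆ cube d R := Set.inter_subset_right
      rcases A.finite_or_infinite with hfin | hinf
      · -- finite case
        set N := hfin.toFinset.card with hNdef
        have hencard : (A.encard : ℝ≥0∞) = (N : ℝ≥0∞) := by
          rw [hfin.encard_eq_coe_toFinset_card]
          simp [hNdef]
        -- θ R^d ≤ N
        have hθRN : θ * R ^ (d : ℝ) ≤ N := by
          by_contra hcon
          push_neg at hcon
          have : ((A.encard : ℝ≥0∞) / ENNReal.ofReal (R ^ (d : ℝ))) ≤ ENNReal.ofReal θ := by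
            rw [hencard, ENNReal.div_le_iff (by positivity) ENNReal.ofReal_ne_top]
            rw [← ENNReal.ofReal_mul (by positivity)]
            rw [show (N : ℝ≥0∞) = ENNReal.ofReal (N : ℝ) by simp]
            exact ENNReal.ofReal_le_ofReal (le_of_lt hcon)
          exact absurd h2 (not_lt.mpr this)
        have hNN₀ : N₀ ≤ N := by
          have : (N₀ : ℝ) ≤ N := le_trans (le_trans (le_max_left _ 1) h3) hθRN
          exact_mod_cast this
        have hN1 : 1 ≤ N := by
          have : (1 : ℝ) ≤ N := le_trans (le_trans (le_max_right (N₀:ℝ) 1) h3) hθRN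
          exact_mod_cast this
        have step1 := interE_ge_minEs (s := s) hR0 hAsub hfin
        have step2 := hminEs N hNN₀ hN1
        have hθRpos : 0 < θ * R ^ (d : ℝ) := by positivity
        have step3 : ENNReal.ofReal ((θ * R ^ (d : ℝ)) ^ p) ≤ (N : ℝ≥0∞) ^ p := by
          rw [← ENNReal.ofReal_rpow_of_pos hθRpos]
          apply ENNReal.rpow_le_rpow _ hp0.le
          rw [show (N : ℝ≥0∞) = ENNReal.ofReal (N : ℝ) by simp]
          exact ENNReal.ofReal_le_ofReal hθRN
        calc ENNReal.ofReal c
            = ENNReal.ofReal (R ^ (-(d:ℝ)) * (R ^ (-s) * (t * (θ * R ^ (d:ℝ)) ^ p))) := by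
              congr 1
              have hdp : (d : ℝ) * p = (d : ℝ) + s := by
                rw [hp]; field_simp
              have h5 : (θ * R ^ (d:ℝ)) ^ p = (c / t) * R ^ ((d:ℝ) + s) := by
                rw [Real.mul_rpow hθ0.le hRd0.le, hθp,
                  ← Real.rpow_mul hR0.le, hdp]
              have hpow : R ^ (-(d:ℝ)) * (R ^ (-s) * R ^ ((d:ℝ) + s)) = 1 := by
                rw [← Real.rpow_add hR0, ← Real.rpow_add hR0]
                norm_num
              have h7 : t * (c / t) = c := by field_simp
              rw [h5]
              symm
              calc R ^ (-(d:ℝ)) * (R ^ (-s) * (t * (c / t * R ^ ((d:ℝ) + s))))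
                  = (R ^ (-(d:ℝ)) * (R ^ (-s) * R ^ ((d:ℝ) + s))) * (t * (c / t)) := by ring
                _ = c := by rw [hpow, h7, one_mul]
              
          _ ≤ ENNReal.ofReal (R ^ (-(d:ℝ))) *
              (ENNReal.ofReal (R ^ (-s)) * (ENNReal.ofReal t * ENNReal.ofReal ((θ * R ^ (d:ℝ)) ^ p))) := by
              rw [← ENNReal.ofReal_mul (by positivity), ← ENNReal.ofReal_mul (by positivity),
                ← ENNReal.ofReal_mul (by positivity)]
          _ ≤ ENNReal.ofReal (R ^ (-(d:ℝ))) *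
              (ENNReal.ofReal (R ^ (-s)) * (ENNReal.ofReal t * (N : ℝ≥0∞) ^ p)) := by
              gcongr
          _ ≤ ENNReal.ofReal (R ^ (-(d:ℝ))) *
              (ENNReal.ofReal (R ^ (-s)) * minEs d s (cube d 1) N) := by
              gcongr
          _ ≤ ENNReal.ofReal (R ^ (-(d:ℝ))) * interE d s A A :=
              mul_le_mul_right step1 _
      · -- infinite case
        have htop : interE d s A A = ⊤ :=
          interE_eq_top_of_infinite hR0.le hs0.le hAsub hinf
        rw [htop, ENNReal.mul_top]
        · exact le_top
        · simp only [ne_eq, ENNReal.ofReal_eq_zero, not_le]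
          exact Real.rpow_pos_of_pos hR0 _
    exact Filter.le_liminf_of_le (by isBoundedDefault) hfinal
  -- conclude by density of c < Csd
  apply le_of_forall_lt
  intro z hz
  have hzt : z ≠ ⊤ := ne_top_of_lt (lt_of_lt_of_le hz le_top)
  have hzr : z.toReal < Csd := by
    rw [← ENNReal.ofReal_toReal hzt] at hz
    exact (ENNReal.ofReal_lt_ofReal_iff hCsd).mp hz
  set c : ℝ := (z.toReal + Csd) / 2 with hc
  have hc0 : 0 < c := by
    have := ENNReal.toReal_nonneg (a := z)
    rw [hc]; linarith
  have hcC : c < Csd := by rw [hc]; linarith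
  have hzc : z < ENNReal.ofReal c := by
    rw [← ENNReal.ofReal_toReal hzt]
    apply ENNReal.ofReal_lt_ofReal_iff hc0 |>.mpr
    rw [hc]; linarith
  exact lt_of_lt_of_le hzc (main c hc0 hcC)
end

section
/- For a Λ-periodic point configuration ω_N + Λ (where ω_N is an N-point set in a fundamental domain of the lattice Λ), the infinite-volume Riesz energy satisfies W_s(ω_N + Λ) = E_{s,Λ}(ω_N)/|Λ|, where E_{s,Λ} is the periodic Riesz energy. -/
open scoped Classical

open MeasureTheory Filter Topology ENNReal Set

noncomputable section

/-- The Bravais lattice `U ℤ^d` as a point configuration. -/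
def lattice (d : ℕ) (U : Matrix (Fin d) (Fin d) ℝ) : Set (EuclideanSpace ℝ (Fin d)) :=
  Set.range fun z : Fin d → ℤ =>
    (EuclideanSpace.equiv (Fin d) ℝ).symm (U.mulVec fun i => (z i : ℝ))

/-- The fundamental domain `U [-1/2, 1/2)^d` of the lattice `U ℤ^d`. -/
def fundDomain (d : ℕ) (U : Matrix (Fin d) (Fin d) ℝ) : Set (EuclideanSpace ℝ (Fin d)) :=
  (fun t : Fin d → ℝ => (EuclideanSpace.equiv (Fin d) ℝ).symm (U.mulVec t)) ''
    {t | ∀ i, -(1 / 2 : ℝ) ≤ t i ∧ t i < 1 / 2}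

/-- The `Λ`-periodic configuration generated by the finite set `ω`. -/
def perConfig (d : ℕ) (U : Matrix (Fin d) (Fin d) ℝ)
    (ω : Finset (EuclideanSpace ℝ (Fin d))) : Set (EuclideanSpace ℝ (Fin d)) :=
  {y | ∃ x ∈ ω, ∃ v ∈ lattice d U, y = x + v}

/-- The `Λ`-periodic Riesz `s`-energy of `ω`. -/
def perEnergy (d : ℕ) (s : ℝ) (U : Matrix (Fin d) (Fin d) ℝ)
    (ω : Finset (EuclideanSpace ℝ (Fin d))) : ℝ≥0∞ :=
  ∑ x ∈ ω, ∑' y : perConfig d U ω,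
    if (y : EuclideanSpace ℝ (Fin d)) = x then 0
    else edist x (y : EuclideanSpace ℝ (Fin d)) ^ (-s)

/-- The Epstein zeta function `ζ_Λ(s) = Σ_{0 ≠ v ∈ Λ} |v|^{-s}`. -/
def epsteinZeta (d : ℕ) (s : ℝ) (U : Matrix (Fin d) (Fin d) ℝ) : ℝ≥0∞ :=
  ∑' v : lattice d U,
    if (v : EuclideanSpace ℝ (Fin d)) = 0 then 0
    else edist 0 (v : EuclideanSpace ℝ (Fin d)) ^ (-s)

/-- The Epstein–Hurwitz zeta function `ζ_Λ(s, x) = Σ_{v ∈ Λ} |x + v|^{-s}`. -/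
def epsteinHurwitzZeta (d : ℕ) (s : ℝ) (U : Matrix (Fin d) (Fin d) ℝ)
    (x : EuclideanSpace ℝ (Fin d)) : ℝ≥0∞ :=
  ∑' v : lattice d U, edist (x + (v : EuclideanSpace ℝ (Fin d))) 0 ^ (-s)

end


noncomputable section
namespace WsPf
open Matrix

variable {d : ℕ}

def mv (U : Matrix (Fin d) (Fin d) ℝ) (z : Fin d → ℤ) : Fin d → ℝ :=
  U.mulVec fun i => (z i : ℝ)

def HH (d : ℕ) : Set (Fin d → ℝ) := {t | ∀ i, -(1/2:ℝ) ≤ t i ∧ t i < 1/2}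

def DD (U : Matrix (Fin d) (Fin d) ℝ) : Set (Fin d → ℝ) := U.mulVec '' (HH d)

def cubeP (d : ℕ) (R : ℝ) : Set (Fin d → ℝ) := {x | ∀ i, |x i| ≤ R/2}

def SS (U : Matrix (Fin d) (Fin d) ℝ) (x : Fin d → ℝ) (R : ℝ) : Set (Fin d → ℤ) :=
  {z | x + mv U z ∈ cubeP d R}

def rho (U : Matrix (Fin d) (Fin d) ℝ) : ℝ := (∑ i, ∑ j, |U i j|) + 1

def tile (U : Matrix (Fin d) (Fin d) ℝ) (c : Fin d → ℝ) : Set (Fin d → ℝ) :=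
  {y | y - c ∈ DD U}

lemma rho_pos (U : Matrix (Fin d) (Fin d) ℝ) : 0 < rho U := by
  have : (0:ℝ) ≤ ∑ i, ∑ j, |U i j| :=
    Finset.sum_nonneg fun i _ => Finset.sum_nonneg fun j _ => abs_nonneg _
  unfold rho; linarith

lemma mulVec_bound (U : Matrix (Fin d) (Fin d) ℝ) {t : Fin d → ℝ} (ht : ∀ i, |t i| ≤ 1)
    (i : Fin d) : |U.mulVec t i| ≤ rho U := by
  have h1 : |U.mulVec t i| ≤ ∑ j, |U i j| := by
    rw [Matrix.mulVec, dotProduct]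
    refine (Finset.abs_sum_le_sum_abs _ _).trans ?_
    refine Finset.sum_le_sum fun j _ => ?_
    rw [abs_mul]
    calc |U i j| * |t j| ≤ |U i j| * 1 := by
          exact mul_le_mul_of_nonneg_left (ht j) (abs_nonneg _)
      _ = |U i j| := mul_one _
  have h2 : ∑ j, |U i j| ≤ ∑ i', ∑ j, |U i' j| :=
    Finset.single_le_sum (f := fun i' => ∑ j, |U i' j|)
      (fun i' _ => Finset.sum_nonneg fun j _ => abs_nonneg _) (Finset.mem_univ i)
  unfold rho; linarith

lemma HH_bound {t : Fin d → ℝ} (ht : t ∈ HH d) (i : Fin d) : |t i| ≤ 1 := by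
  have := ht i
  rw [abs_le]; constructor <;> linarith [this.1, this.2]

lemma DD_bound (U : Matrix (Fin d) (Fin d) ℝ) {y : Fin d → ℝ} (hy : y ∈ DD U) (i : Fin d) :
    |y i| ≤ rho U := by
  obtain ⟨t, ht, rfl⟩ := hy
  exact mulVec_bound U (HH_bound ht) i

section inv
variable {U : Matrix (Fin d) (Fin d) ℝ}

lemma mulVec_inj (hU : IsUnit U.det) : Function.Injective U.mulVec :=
  Matrix.mulVec_injective_iff_isUnit.2 ((Matrix.isUnit_iff_isUnit_det U).2 hU)

lemma mulVec_inv_cancel (hU : IsUnit U.det) (w : Fin d → ℝ) : U.mulVec (U⁻¹.mulVec w) = w := by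
  rw [Matrix.mulVec_mulVec, Matrix.mul_nonsing_inv _ hU, Matrix.one_mulVec]

lemma tiles_disj (hU : IsUnit U.det) (x : Fin d → ℝ) {z z' : Fin d → ℤ} (hzz : z ≠ z') :
    Disjoint (tile U (x + mv U z)) (tile U (x + mv U z')) := by
  rw [Set.disjoint_left]
  rintro y hy hy'
  obtain ⟨a, ha, hae⟩ := hy
  obtain ⟨b, hb, hbe⟩ := hy'
  apply hzz
  have k1 : U.mulVec (a + fun i => (z i : ℝ)) = y - x := by
    rw [Matrix.mulVec_add, hae]
    show y - (x + mv U z) + mv U z = y - x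
    abel
  have k2 : U.mulVec (b + fun i => (z' i : ℝ)) = y - x := by
    rw [Matrix.mulVec_add, hbe]
    show y - (x + mv U z') + mv U z' = y - x
    abel
  have key : U.mulVec (a + fun i => (z i : ℝ)) = U.mulVec (b + fun i => (z' i : ℝ)) := by
    rw [k1, k2]
  have h2 := mulVec_inj hU key
  funext i
  have h3 : a i + (z i : ℝ) = b i + (z' i : ℝ) := congrFun h2 i
  have h4 : |(z i - z' i : ℤ)| < 1 := by
    have : ((z i - z' i : ℤ) : ℝ) = b i - a i := by push_cast; linarith
    have h5 : |((z i - z' i : ℤ) : ℝ)| < 1 := by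
      rw [this]
      have ha' := ha i; have hb' := hb i
      rw [abs_lt]; constructor <;> [linarith [ha'.2, hb'.1]; linarith [ha'.1, hb'.2]]
    exact_mod_cast h5
  have h6 : z i - z' i = 0 := Int.abs_lt_one_iff.mp h4
  omega

lemma covering (hU : IsUnit U.det) (x y : Fin d → ℝ) :
    ∃ z : Fin d → ℤ, y ∈ tile U (x + mv U z) ∧ ∀ i, |(x + mv U z) i| ≤ |y i| + rho U := by
  set t := U⁻¹.mulVec (y - x) with ht
  refine ⟨fun i => ⌊t i + 1/2⌋, ?_, ?_⟩
  · refine ⟨t - fun i => (⌊t i + 1/2⌋ : ℝ), fun i => ?_, ?_⟩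
    · constructor
      · have := Int.floor_le (t i + 1/2)
        simp only [Pi.sub_apply]; linarith
      · have := Int.lt_floor_add_one (t i + 1/2)
        simp only [Pi.sub_apply]; linarith
    · rw [Matrix.mulVec_sub]
      have : U.mulVec t = y - x := mulVec_inv_cancel hU _
      rw [this]
      simp only [mv]
      funext i; simp [Pi.sub_apply]; ring
  · intro i
    have hdd : y - (x + mv U (fun i => ⌊t i + 1/2⌋)) ∈ DD U := by
      refine ⟨t - fun i => (⌊t i + 1/2⌋ : ℝ), fun i => ?_, ?_⟩
      · constructor
        · have := Int.floor_le (t i + 1/2); simp only [Pi.sub_apply]; linarith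
        · have := Int.lt_floor_add_one (t i + 1/2); simp only [Pi.sub_apply]; linarith
      · rw [Matrix.mulVec_sub]
        have : U.mulVec t = y - x := mulVec_inv_cancel hU _
        rw [this, mv]
        funext i; simp [Pi.sub_apply]; ring
    have hb := DD_bound U hdd i
    have : (x + mv U (fun i => ⌊t i + 1/2⌋)) i = y i - (y - (x + mv U fun i => ⌊t i + 1/2⌋)) i := by
      simp [Pi.sub_apply]
    rw [this]
    calc |y i - (y - (x + mv U fun i => ⌊t i + 1/2⌋)) i|
        ≤ |y i| + |(y - (x + mv U fun i => ⌊t i + 1/2⌋)) i| := abs_sub _ _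
      _ ≤ |y i| + rho U := by linarith

end inv

variable {U : Matrix (Fin d) (Fin d) ℝ}

lemma HH_eq : HH d = Set.pi Set.univ (fun _ : Fin d => Ico (-(1/2:ℝ)) (1/2)) := by
  ext t; simp [HH, Set.mem_pi, Set.mem_Ico]

lemma HH_meas : MeasurableSet (HH d) := by
  rw [HH_eq]; exact MeasurableSet.univ_pi fun i => measurableSet_Ico

lemma volume_HH : volume (HH d) = 1 := by
  rw [HH_eq, volume_pi_pi]
  simp [Real.volume_Ico]
  norm_num

lemma DD_eq_preimage (hU : IsUnit U.det) : DD U = U⁻¹.mulVec ⁻¹' (HH d) := by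
  ext y
  constructor
  · rintro ⟨t, ht, rfl⟩
    have : U⁻¹.mulVec (U.mulVec t) = t := by
      rw [Matrix.mulVec_mulVec, Matrix.nonsing_inv_mul _ hU, Matrix.one_mulVec]
    simpa [this] using ht
  · intro hy
    refine ⟨U⁻¹.mulVec y, hy, ?_⟩
    rw [Matrix.mulVec_mulVec, Matrix.mul_nonsing_inv _ hU, Matrix.one_mulVec]

lemma DD_meas (hU : IsUnit U.det) : MeasurableSet (DD U) := by
  rw [DD_eq_preimage hU]
  exact HH_meas.preimage (Matrix.mulVecLin U⁻¹).continuous_of_finiteDimensional.measurable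

lemma volume_DD : volume (DD U) = ENNReal.ofReal |U.det| := by
  have h1 : DD U = (Matrix.mulVecLin U) '' (HH d) := rfl
  rw [h1, MeasureTheory.Measure.addHaar_image_linearMap, volume_HH, mul_one]
  congr 1
  rw [← Matrix.toLin'_apply', LinearMap.det_toLin']

lemma tile_meas (hU : IsUnit U.det) (c : Fin d → ℝ) : MeasurableSet (tile U c) := by
  have : tile U c = (fun y => y - c) ⁻¹' DD U := rfl
  rw [this]
  exact (DD_meas hU).preimage (measurable_id.sub_const c)

lemma volume_tile (c : Fin d → ℝ) : volume (tile U c) = ENNReal.ofReal |U.det| := by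
  have : tile U c = (fun y => y + (-c)) ⁻¹' DD U := by
    ext y; simp [tile, sub_eq_add_neg]
  rw [this, measure_preimage_add_right, volume_DD]

lemma cubeP_meas (R : ℝ) : MeasurableSet (cubeP d R) := by
  have : cubeP d R = Set.pi Set.univ (fun _ : Fin d => Icc (-(R/2)) (R/2)) := by
    ext x
    simp only [cubeP, Set.mem_setOf_eq, Set.mem_pi, Set.mem_univ, Set.mem_Icc, abs_le,
      forall_const]
  rw [this]; exact MeasurableSet.univ_pi fun i => measurableSet_Icc

lemma volume_cubeP {R : ℝ} (hR : 0 ≤ R) : volume (cubeP d R) = ENNReal.ofReal (R ^ d) := by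
  have h1 : cubeP d R = Set.pi Set.univ (fun _ : Fin d => Icc (-(R/2)) (R/2)) := by
    ext x
    simp only [cubeP, Set.mem_setOf_eq, Set.mem_pi, Set.mem_univ, Set.mem_Icc, abs_le,
      forall_const]
  rw [h1, volume_pi_pi]
  simp only [Real.volume_Icc]
  rw [Finset.prod_const, Finset.card_univ, Fintype.card_fin]
  rw [← ENNReal.ofReal_pow (by linarith)]
  congr 1; ring



section count

lemma count_mul_det (hU : IsUnit U.det) (x : Fin d → ℝ) (R : ℝ) :
    ((SS U x R).encard : ℝ≥0∞) * ENNReal.ofReal |U.det| =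
      volume (⋃ z : SS U x R, tile U (x + mv U ↑z)) := by
  rw [measure_iUnion ?_ (fun z => tile_meas hU _)]
  · rw [← ENNReal.tsum_set_const]
    exact tsum_congr fun z => (volume_tile _).symm
  · intro z z' hzz
    exact tiles_disj hU x (fun h => hzz (Subtype.coe_injective h))

lemma count_upper (hU : IsUnit U.det) (x : Fin d → ℝ) {R : ℝ} (hR : 0 ≤ R) :
    ((SS U x R).encard : ℝ≥0∞) * ENNReal.ofReal |U.det| ≤
      ENNReal.ofReal ((R + 2 * rho U) ^ d) := by
  rw [count_mul_det hU, ← volume_cubeP (by linarith [rho_pos U])]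
  refine measure_mono ?_
  rintro y hy
  simp only [Set.mem_iUnion] at hy
  obtain ⟨⟨z, hz⟩, hy⟩ := hy
  intro i
  have h1 : |(x + mv U z) i| ≤ R/2 := hz i
  have h2 : |y i - (x + mv U z) i| ≤ rho U := DD_bound U hy i
  have : |y i| ≤ |y i - (x + mv U z) i| + |(x + mv U z) i| := by
    have := abs_add_le (y i - (x + mv U z) i) ((x + mv U z) i)
    simpa using this
  calc |y i| ≤ rho U + R/2 := by linarith
    _ = (R + 2 * rho U)/2 := by ring

lemma count_lower (hU : IsUnit U.det) (x : Fin d → ℝ) {R : ℝ} (hR : 4 * rho U ≤ R) :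
    ENNReal.ofReal ((R - 4 * rho U) ^ d) ≤
      ((SS U x R).encard : ℝ≥0∞) * ENNReal.ofReal |U.det| := by
  rw [count_mul_det hU, ← volume_cubeP (by linarith)]
  refine measure_mono ?_
  intro y hy
  obtain ⟨z, hzt, hzb⟩ := covering hU x y
  simp only [Set.mem_iUnion]
  have hρ := rho_pos U
  have hzS : z ∈ SS U x R := by
    intro i
    have := hzb i
    have hyi := hy i
    calc |(x + mv U z) i| ≤ |y i| + rho U := this
      _ ≤ (R - 4*rho U)/2 + rho U := by linarith
      _ ≤ R/2 := by linarith
  exact ⟨⟨z, hzS⟩, hzt⟩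

end count



abbrev Ed (d : ℕ) := EuclideanSpace ℝ (Fin d)

def toE (v : Fin d → ℝ) : Ed d := (EuclideanSpace.equiv (Fin d) ℝ).symm v

@[simp] lemma toE_apply (v : Fin d → ℝ) (i : Fin d) : toE v i = v i := rfl

lemma toE_coord_add (x : Ed d) (v : Fin d → ℝ) (i : Fin d) : (x + toE v) i = x i + v i := rfl


def ker (s : ℝ) (a b : Ed d) : ℝ≥0∞ := if a = b then 0 else edist a b ^ (-s)

lemma ker_shift (s : ℝ) (a b c : Ed d) : ker s (a + c) (b + c) = ker s a b := by
  unfold ker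
  have h1 : edist (a + c) (b + c) = edist a b := by
    rw [edist_dist, edist_dist, dist_add_right]
  rw [h1]
  exact if_congr (by simp) rfl rfl

variable {U : Matrix (Fin d) (Fin d) ℝ} {ω : Finset (Ed d)}

lemma mv_add (U : Matrix (Fin d) (Fin d) ℝ) (z z' : Fin d → ℤ) :
    mv U (z + z') = mv U z + mv U z' := by
  unfold mv
  have h : (fun i => ((z + z') i : ℝ)) = (fun i => (z i : ℝ)) + fun i => (z' i : ℝ) := by
    funext i; simp [Pi.add_apply]
  rw [h, Matrix.mulVec_add]

lemma mv_zero : mv U (0 : Fin d → ℤ) = 0 := by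
  unfold mv
  have h : (fun i => (((0 : Fin d → ℤ)) i : ℝ)) = (0 : Fin d → ℝ) := by
    funext i; simp
  rw [h, Matrix.mulVec_zero]

lemma toE_zero : toE (0 : Fin d → ℝ) = 0 := rfl

lemma toE_add (v w : Fin d → ℝ) : toE (v + w) = toE v + toE w := rfl

lemma mem_lattice (z : Fin d → ℤ) : toE (mv U z) ∈ lattice d U := ⟨z, rfl⟩

lemma lattice_mem_iff {v : Ed d} : v ∈ lattice d U ↔ ∃ z, toE (mv U z) = v := Iff.rfl

/-- parametrization of the periodic configuration -/
def Phi (U : Matrix (Fin d) (Fin d) ℝ) (ω : Finset (Ed d)) (w : ↥ω × (Fin d → ℤ)) : Ed d :=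
  ↑w.1 + toE (mv U w.2)

lemma Phi_mem (w : ↥ω × (Fin d → ℤ)) : Phi U ω w ∈ perConfig d U ω :=
  ⟨↑w.1, w.1.2, toE (mv U w.2), mem_lattice w.2, rfl⟩

lemma mem_perConfig_iff {y : Ed d} : y ∈ perConfig d U ω ↔ ∃ w, Phi U ω w = y := by
  constructor
  · rintro ⟨x, hx, v, ⟨z, rfl⟩, rfl⟩
    exact ⟨(⟨x, hx⟩, z), rfl⟩
  · rintro ⟨w, rfl⟩
    exact Phi_mem w

lemma fundDomain_eq : fundDomain d U = (fun t => toE (U.mulVec t)) '' {t | ∀ i,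
    -(1/2:ℝ) ≤ t i ∧ t i < 1/2} := rfl

lemma Phi_inj (hU : IsUnit U.det) (hω : ∀ x ∈ ω, x ∈ fundDomain d U) :
    Function.Injective (Phi U ω) := by
  rintro ⟨⟨x, hx⟩, z⟩ ⟨⟨x', hx'⟩, z'⟩ heq
  obtain ⟨t, ht, rfl⟩ := hω x hx
  obtain ⟨t', ht', rfl⟩ := hω x' hx'
  have h0 : toE (U.mulVec t) + toE (mv U z) = toE (U.mulVec t') + toE (mv U z') := heq
  have hcoord : ∀ i, t i + (z i : ℝ) = t' i + (z' i : ℝ) := by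
    intro i
    have h2 : U.mulVec (t + fun j => (z j : ℝ)) = U.mulVec (t' + fun j => (z' j : ℝ)) := by
      funext j
      rw [Matrix.mulVec_add, Matrix.mulVec_add]
      exact congrArg (fun v : Ed d => v j) h0
    have h4 := mulVec_inj hU h2
    exact congrFun h4 i
  have hz : z = z' := by
    funext i
    have h5 := hcoord i
    have h6 : |((z i - z' i : ℤ) : ℝ)| < 1 := by
      have hti := ht i; have hti' := ht' i
      push_cast
      rw [abs_lt]
      constructor <;> [linarith [hti.2, hti'.1]; linarith [hti.1, hti'.2]]
    have h7 : z i - z' i = 0 := Int.abs_lt_one_iff.mp (by exact_mod_cast h6)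
    omega
  subst hz
  have ht'' : t = t' := by
    funext i
    have := hcoord i
    linarith
  subst ht''
  rfl

/-- translated point stays in the configuration -/
lemma perConfig_shift_mem {y : Ed d} (hy : y ∈ perConfig d U ω) (z0 : Fin d → ℤ) :
    y + toE (mv U z0) ∈ perConfig d U ω := by
  obtain ⟨⟨x, z⟩, rfl⟩ := mem_perConfig_iff.mp hy
  refine mem_perConfig_iff.mpr ⟨(x, z + z0), ?_⟩
  unfold Phi
  rw [mv_add, toE_add]
  simp only [add_assoc]

def shiftEquiv (U : Matrix (Fin d) (Fin d) ℝ) (ω : Finset (Ed d)) (z0 : Fin d → ℤ) :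
    ↥(perConfig d U ω) ≃ ↥(perConfig d U ω) where
  toFun y := ⟨↑y + toE (mv U z0), perConfig_shift_mem y.2 z0⟩
  invFun y := ⟨↑y + toE (mv U (-z0)), perConfig_shift_mem y.2 (-z0)⟩
  left_inv y := Subtype.ext (by
    show ↑y + toE (mv U z0) + toE (mv U (-z0)) = ↑y
    rw [add_assoc, ← toE_add, ← mv_add, add_neg_cancel, mv_zero, toE_zero, add_zero])
  right_inv y := Subtype.ext (by
    show ↑y + toE (mv U (-z0)) + toE (mv U z0) = ↑y
    rw [add_assoc, ← toE_add, ← mv_add, neg_add_cancel, mv_zero, toE_zero, add_zero])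

end WsPf
end

noncomputable section partD
namespace WsPf
open Matrix

universe u
variable {α : Type u}

lemma tsum_subtype_mono (h : α → ℝ≥0∞) {A B : Set α} (hAB : A ⊆ B) :
    ∑' a : ↥A, h ↑a ≤ ∑' b : ↥B, h ↑b := by
  rw [tsum_subtype, tsum_subtype]
  exact ENNReal.tsum_le_tsum fun x =>
    Set.indicator_le_indicator_of_subset hAB (fun _ => zero_le) x

lemma tsum_inter_eq (A S : Set α) (h : α → ℝ≥0∞) :
    ∑' p : ↥(A ∩ S), h ↑p = ∑' p : ↥A, if (↑p : α) ∈ S then h ↑p else 0 := by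
  rw [tsum_subtype]
  have h2 : ∑' p : ↥A, (if (↑p : α) ∈ S then h ↑p else 0)
      = ∑' p : ↥A, (fun y => if y ∈ S then h y else 0) ↑p := rfl
  rw [h2, tsum_subtype A (fun y => if y ∈ S then h y else 0)]
  apply tsum_congr
  intro y
  by_cases hA : y ∈ A
  · by_cases hS : y ∈ S
    · rw [Set.indicator_of_mem (show y ∈ A ∩ S from ⟨hA, hS⟩) h, Set.indicator_of_mem hA, if_pos hS]
    · rw [Set.indicator_of_notMem (fun h' => hS h'.2), Set.indicator_of_mem hA, if_neg hS]
  · rw [Set.indicator_of_notMem (fun h' => hA h'.1), Set.indicator_of_notMem hA]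

variable {d : ℕ} {U : Matrix (Fin d) (Fin d) ℝ} {ω : Finset (Ed d)}

def gfun (s : ℝ) (U : Matrix (Fin d) (Fin d) ℝ) (ω : Finset (Ed d)) (x : Ed d) : ℝ≥0∞ :=
  ∑' y : ↥(perConfig d U ω), ker s x ↑y

def box (x : Ed d) (T : ℝ) : Set (Ed d) := {q | ∀ i, |q i - x i| ≤ T}

def gT (s : ℝ) (U : Matrix (Fin d) (Fin d) ℝ) (ω : Finset (Ed d)) (x : Ed d) (T : ℝ) : ℝ≥0∞ :=
  ∑' y : ↥(perConfig d U ω), if (↑y : Ed d) ∈ box x T then ker s x ↑y else 0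

lemma gfun_shift (s : ℝ) (z0 : Fin d → ℤ) (x : Ed d) :
    gfun s U ω (x + toE (mv U z0)) = gfun s U ω x := by
  unfold gfun
  rw [← Equiv.tsum_eq (shiftEquiv U ω z0) (fun y => ker s (x + toE (mv U z0)) ↑y)]
  exact tsum_congr fun y => ker_shift s x (↑y) (toE (mv U z0))

lemma mem_box_shift (q x v : Ed d) (T : ℝ) : q + v ∈ box (x + v) T ↔ q ∈ box x T := by
  unfold box
  constructor <;> intro h i <;> have h' := h i
  · have e : (q + v) i - (x + v) i = q i - x i := by
      show q i + v i - (x i + v i) = q i - x i; ring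
    rwa [e] at h'
  · show |(q + v) i - (x + v) i| ≤ T
    have e : (q + v) i - (x + v) i = q i - x i := by
      show q i + v i - (x i + v i) = q i - x i; ring
    rwa [e]

lemma gT_shift (s : ℝ) (z0 : Fin d → ℤ) (x : Ed d) (T : ℝ) :
    gT s U ω (x + toE (mv U z0)) T = gT s U ω x T := by
  unfold gT
  rw [← Equiv.tsum_eq (shiftEquiv U ω z0)
    (fun y => if (↑y : Ed d) ∈ box (x + toE (mv U z0)) T then ker s (x + toE (mv U z0)) ↑y else 0)]
  refine tsum_congr fun y => ?_
  have hmem : (↑((shiftEquiv U ω z0) y) : Ed d) ∈ box (x + toE (mv U z0)) T ↔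
      (↑y : Ed d) ∈ box x T := mem_box_shift (↑y) x (toE (mv U z0)) T
  by_cases hb : (↑y : Ed d) ∈ box x T
  · rw [if_pos (hmem.mpr hb), if_pos hb]
    exact ker_shift s x (↑y) (toE (mv U z0))
  · rw [if_neg (fun h => hb (hmem.mp h)), if_neg hb]

def SSE (U : Matrix (Fin d) (Fin d) ℝ) (x : Ed d) (Q : Set (Ed d)) : Set (Fin d → ℤ) :=
  {z | x + toE (mv U z) ∈ Q}

lemma chain (hU : IsUnit U.det) (hω : ∀ x ∈ ω, x ∈ fundDomain d U) (Q : Set (Ed d))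
    (h : Ed d → ℝ≥0∞) (hper : ∀ (x : Ed d) (z : Fin d → ℤ), h (x + toE (mv U z)) = h x) :
    ∑' p : ↥(perConfig d U ω ∩ Q), h ↑p
      = ∑ x ∈ ω, ((SSE U x Q).encard : ℝ≥0∞) * h x := by
  classical
  set W : Set (↥ω × (Fin d → ℤ)) := {w | Phi U ω w ∈ Q} with hW
  have hbij : Function.Bijective (fun w : ↥W =>
      (⟨Phi U ω ↑w, ⟨Phi_mem _, w.2⟩⟩ : ↥(perConfig d U ω ∩ Q))) := by
    constructor
    · intro a b hab
      exact Subtype.ext (Phi_inj hU hω (congrArg Subtype.val hab))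
    · rintro ⟨p, hpC, hpQ⟩
      obtain ⟨w, rfl⟩ := mem_perConfig_iff.mp hpC
      exact ⟨⟨w, hpQ⟩, rfl⟩
  rw [← Equiv.tsum_eq (Equiv.ofBijective _ hbij) (fun p => h ↑p)]
  calc ∑' w : ↥W, h (Phi U ω ↑w)
      = ∑' w : ↥W, (fun v : ↥ω × (Fin d → ℤ) => h ↑v.1) ↑w := by
        refine tsum_congr fun w => ?_
        exact hper (↑(↑w : ↥ω × (Fin d → ℤ)).1) (↑w : ↥ω × (Fin d → ℤ)).2
    _ = ∑' v : ↥ω × (Fin d → ℤ), W.indicator (fun v => h ↑v.1) v :=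
        tsum_subtype W (fun v : ↥ω × (Fin d → ℤ) => h ↑v.1)
    _ = ∑' (x : ↥ω) (z : Fin d → ℤ), W.indicator (fun v => h ↑v.1) (x, z) := by
        rw [← ENNReal.tsum_prod]
    _ = ∑' (x : ↥ω) (z : Fin d → ℤ), (SSE U ↑x Q).indicator (fun _ => h ↑x) z := by
        refine tsum_congr fun x => tsum_congr fun z => ?_
        by_cases hz : z ∈ SSE U ↑x Q
        · rw [Set.indicator_of_mem hz, Set.indicator_of_mem (show (x, z) ∈ W from hz)]
        · rw [Set.indicator_of_notMem hz, Set.indicator_of_notMem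
            (show (x, z) ∉ W from hz)]
    _ = ∑' (x : ↥ω), ∑' (_ : ↥(SSE U ↑x Q)), h ↑x := by
        exact tsum_congr fun x => (tsum_subtype (SSE U ↑x Q) (fun _ => h ↑x)).symm
    _ = ∑' (x : ↥ω), ((SSE U ↑x Q).encard : ℝ≥0∞) * h ↑x := by
        exact tsum_congr fun x => ENNReal.tsum_set_const (SSE U ↑x Q) (h ↑x)
    _ = ∑ x ∈ ω, ((SSE U x Q).encard : ℝ≥0∞) * h x :=
        Finset.tsum_subtype ω (fun x => ((SSE U x Q).encard : ℝ≥0∞) * h x)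

lemma interE_eq (s : ℝ) (A B : Set (Ed d)) :
    interE d s A B = ∑' (p : ↥A) (q : ↥B), ker s (↑p : Ed d) (↑q : Ed d) := rfl

lemma perEnergy_eq (s : ℝ) : perEnergy d s U ω = ∑ x ∈ ω, gfun s U ω x := by
  unfold perEnergy gfun
  refine Finset.sum_congr rfl fun x _ => tsum_congr fun y => ?_
  unfold ker
  exact if_congr eq_comm rfl rfl

end WsPf
end partD

noncomputable section partE
namespace WsPf
open Matrix

variable {d : ℕ} {U : Matrix (Fin d) (Fin d) ℝ} {ω : Finset (Ed d)}

lemma SSE_cube (x : Ed d) (R : ℝ) : SSE U x (cube d R) = SS U (fun i => x i) R := by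
  ext z
  show (x + toE (mv U z)) ∈ cube d R ↔ ((fun i => x i) + mv U z) ∈ cubeP d R
  constructor <;> intro h i <;> have h' := h i
  · show |((fun i => x i) + mv U z) i| ≤ R/2
    rw [Pi.add_apply]
    rwa [toE_coord_add] at h'
  · show |(x + toE (mv U z)) i| ≤ R/2
    rw [toE_coord_add]
    rwa [Pi.add_apply] at h'

lemma upper_est (hU : IsUnit U.det) (hω : ∀ x ∈ ω, x ∈ fundDomain d U) (s : ℝ)
    (Q : Set (Ed d)) :
    interE d s (perConfig d U ω ∩ Q) (perConfig d U ω ∩ Q)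
      ≤ ∑ x ∈ ω, ((SSE U x Q).encard : ℝ≥0∞) * gfun s U ω x := by
  rw [interE_eq, ← chain hU hω Q (gfun s U ω) (fun x z => gfun_shift s z x)]
  refine ENNReal.tsum_le_tsum fun p => ?_
  exact tsum_subtype_mono (fun q => ker s (↑p : Ed d) q) Set.inter_subset_left

lemma lower_est (hU : IsUnit U.det) (hω : ∀ x ∈ ω, x ∈ fundDomain d U) (s : ℝ)
    {R T : ℝ} (hT : 0 ≤ T) :
    ∑ x ∈ ω, ((SSE U x (cube d (R - 2*T))).encard : ℝ≥0∞) * gT s U ω x T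
      ≤ interE d s (perConfig d U ω ∩ cube d R) (perConfig d U ω ∩ cube d R) := by
  rw [interE_eq,
    ← chain hU hω (cube d (R - 2*T)) (fun x => gT s U ω x T) (fun x z => gT_shift s z x T)]
  have step1 : ∀ p : ↥(perConfig d U ω ∩ cube d (R - 2*T)),
      gT s U ω ↑p T ≤ ∑' q : ↥(perConfig d U ω ∩ cube d R), ker s (↑p : Ed d) ↑q := by
    intro p
    have hsub : perConfig d U ω ∩ box (↑p : Ed d) T ⊆ perConfig d U ω ∩ cube d R := by
      rintro q ⟨hqC, hqB⟩
      refine ⟨hqC, fun i => ?_⟩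
      have h1 := hqB i
      have h2 := p.2.2 i
      calc |q i| ≤ |q i - (↑p : Ed d) i| + |(↑p : Ed d) i| := by
            have h3 := abs_add_le (q i - (↑p : Ed d) i) ((↑p : Ed d) i)
            simpa using h3
        _ ≤ T + (R - 2*T)/2 := add_le_add h1 h2
        _ = R/2 := by ring
    calc gT s U ω (↑p : Ed d) T
        = ∑' q : ↥(perConfig d U ω ∩ box (↑p : Ed d) T), ker s (↑p : Ed d) ↑q :=
          (tsum_inter_eq _ _ _).symm
      _ ≤ _ := tsum_subtype_mono (ker s (↑p : Ed d)) hsub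
  calc ∑' p : ↥(perConfig d U ω ∩ cube d (R - 2*T)), gT s U ω ↑p T
      ≤ ∑' p : ↥(perConfig d U ω ∩ cube d (R - 2*T)),
          (fun y : Ed d => ∑' q : ↥(perConfig d U ω ∩ cube d R), ker s y ↑q) ↑p :=
        ENNReal.tsum_le_tsum step1
    _ ≤ _ := by
        refine tsum_subtype_mono (fun y : Ed d => ∑' q : ↥(perConfig d U ω ∩ cube d R), ker s y ↑q)
          (Set.inter_subset_inter_right _ fun y hy i => ?_)
        have := hy i
        have hT2 : (R - 2*T)/2 ≤ R/2 := by linarith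
        linarith [this]

lemma encard_inter (hU : IsUnit U.det) (hω : ∀ x ∈ ω, x ∈ fundDomain d U) (Q : Set (Ed d)) :
    ((perConfig d U ω ∩ Q).encard : ℝ≥0∞) = ∑ x ∈ ω, ((SSE U x Q).encard : ℝ≥0∞) := by
  rw [← ENNReal.tsum_set_one, chain hU hω Q (fun _ => 1) (fun _ _ => rfl)]
  simp [mul_one]

lemma coord_le_edist (x y : Ed d) (i : Fin d) : ENNReal.ofReal |x i - y i| ≤ edist x y := by
  rw [edist_dist]
  refine ENNReal.ofReal_le_ofReal ?_
  have h := EuclideanSpace.dist_eq x y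
  rw [h, ← Real.sqrt_sq_eq_abs]
  apply Real.sqrt_le_sqrt
  calc (x i - y i)^2 = (dist (x i) (y i))^2 := by rw [Real.dist_eq, sq_abs]
    _ ≤ ∑ j, dist (x j) (y j) ^2 :=
      Finset.single_le_sum (f := fun j => dist (x j) (y j) ^ 2)
        (fun j _ => sq_nonneg _) (Finset.mem_univ i)

lemma ker_lt_top {s : ℝ} (x y : Ed d) : ker s x y < ⊤ := by
  unfold ker
  by_cases hxy : x = y
  · simp [hxy]
  · rw [if_neg hxy, ENNReal.rpow_neg, ENNReal.inv_lt_top]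
    apply ENNReal.rpow_pos
    · rw [pos_iff_ne_zero]
      exact fun h => hxy (edist_eq_zero.mp h)
    · exact (edist_lt_top x y).ne

lemma ker_le_of_far {s c : ℝ} (hs : 0 < s) (hc : 0 < c) {x y : Ed d} (i : Fin d)
    (hfar : c ≤ |x i - y i|) : ker s x y ≤ ENNReal.ofReal c ^ (-s) := by
  have hxy : x ≠ y := by
    intro h; subst h; simp at hfar; linarith
  unfold ker
  rw [if_neg hxy, ENNReal.rpow_neg, ENNReal.rpow_neg]
  refine ENNReal.inv_le_inv.mpr ?_
  refine ENNReal.rpow_le_rpow ?_ hs.le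
  exact le_trans (ENNReal.ofReal_le_ofReal hfar) (coord_le_edist x y i)

end WsPf
end partE

noncomputable section partF
namespace WsPf
open Matrix

variable {d : ℕ} {U : Matrix (Fin d) (Fin d) ℝ} {ω : Finset (Ed d)}

lemma det_ofReal_ne_zero (hU : IsUnit U.det) : ENNReal.ofReal |U.det| ≠ 0 := by
  rw [Ne, ENNReal.ofReal_eq_zero, not_le]
  exact abs_pos.mpr hU.ne_zero

lemma SSE_encard_le (hU : IsUnit U.det) (x : Ed d) {R : ℝ} (hR : 0 ≤ R) :
    ((SSE U x (cube d R)).encard : ℝ≥0∞)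
      ≤ ENNReal.ofReal ((R + 2 * rho U) ^ d) * (ENNReal.ofReal |U.det|)⁻¹ := by
  rw [SSE_cube]
  have h1 := count_upper hU (fun i => x i) hR
  rw [← div_eq_mul_inv, ENNReal.le_div_iff_mul_le (Or.inl (det_ofReal_ne_zero hU))
    (Or.inl ENNReal.ofReal_ne_top)]
  exact h1

lemma encard_cube_le (hU : IsUnit U.det) (hω : ∀ x ∈ ω, x ∈ fundDomain d U) {B : ℝ}
    (hB : 0 ≤ B) :
    ((perConfig d U ω ∩ cube d B).encard : ℝ≥0∞)
      ≤ (ω.card : ℝ≥0∞) * (ENNReal.ofReal ((B + 2 * rho U) ^ d) *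
          (ENNReal.ofReal |U.det|)⁻¹) := by
  rw [encard_inter hU hω]
  calc ∑ x ∈ ω, ((SSE U x (cube d B)).encard : ℝ≥0∞)
      ≤ ∑ _x ∈ ω, ENNReal.ofReal ((B + 2 * rho U) ^ d) * (ENNReal.ofReal |U.det|)⁻¹ :=
        Finset.sum_le_sum fun x _ => SSE_encard_le hU x hB
    _ = (ω.card : ℝ≥0∞) * (ENNReal.ofReal ((B + 2 * rho U) ^ d) *
          (ENNReal.ofReal |U.det|)⁻¹) := by
        rw [Finset.sum_const, nsmul_eq_mul]

lemma finite_of_encard_le {α : Type*} {S : Set α} {c : ℝ≥0∞} (h : (S.encard : ℝ≥0∞) ≤ c)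
    (hc : c ≠ ⊤) : S.Finite := by
  rw [← Set.encard_lt_top_iff]
  by_contra hinf
  rw [not_lt, top_le_iff] at hinf
  rw [hinf, ENat.toENNReal_top, top_le_iff] at h
  exact hc h

/-- the sum over a finite piece of the configuration is finite -/
lemma tsum_ker_finite {s : ℝ} (x : Ed d) {S : Set (Ed d)} (hS : S.Finite) :
    ∑' q : ↥S, ker s x ↑q < ⊤ := by
  have := hS.fintype
  rw [tsum_fintype]
  exact ENNReal.sum_lt_top.mpr fun q _ => ker_lt_top x ↑q

lemma abs_coord_le_sum (y x : Ed d) (i : Fin d) : |y i - x i| ≤ ∑ j, |y j - x j| :=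
  Finset.single_le_sum (f := fun j => |y j - x j|) (fun j _ => abs_nonneg _)
    (Finset.mem_univ i)

/-- pointwise dyadic decomposition bound -/
lemma ker_pointwise_bound {s : ℝ} (hs : 0 < s) (x y : Ed d) :
    ker s x y ≤ (if y ∈ box x 1 then ker s x y else 0)
      + ∑' n : ℕ, (if y ∈ box x ((2:ℝ)^(n+1)) \ box x ((2:ℝ)^n)
          then ENNReal.ofReal ((2:ℝ)^n) ^ (-s) else 0) := by
  by_cases hy1 : y ∈ box x 1
  · rw [if_pos hy1]; exact le_self_add
  · have hex : ∃ n : ℕ, y ∈ box x ((2:ℝ)^n) := by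
      obtain ⟨n, hn⟩ := pow_unbounded_of_one_lt (∑ j, |y j - x j|) (one_lt_two (α := ℝ))
      exact ⟨n, fun i => le_of_lt (lt_of_le_of_lt (abs_coord_le_sum y x i) hn)⟩
    have hn0 : Nat.find hex ≠ 0 := by
      intro h0
      apply hy1
      have := Nat.find_spec hex
      rw [h0] at this
      simpa using this
    set n0 := Nat.find hex with hn0def
    have hmem : y ∈ box x ((2:ℝ)^(n0 - 1 + 1)) \ box x ((2:ℝ)^(n0 - 1)) := by
      constructor
      · have h1 : n0 - 1 + 1 = n0 := by omega
        rw [h1]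
        exact Nat.find_spec hex
      · exact Nat.find_min hex (by omega)
    have hker : ker s x y ≤ ENNReal.ofReal ((2:ℝ)^(n0 - 1)) ^ (-s) := by
      obtain ⟨i, hi⟩ : ∃ i, ¬ |y i - x i| ≤ (2:ℝ)^(n0 - 1) := by
        by_contra hall
        push_neg at hall
        exact hmem.2 fun i => hall i
      push_neg at hi
      refine ker_le_of_far hs (pow_pos two_pos _) i ?_
      rw [abs_sub_comm]
      exact hi.le
    calc ker s x y ≤ ∑' n : ℕ, (if y ∈ box x ((2:ℝ)^(n+1)) \ box x ((2:ℝ)^n)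
          then ENNReal.ofReal ((2:ℝ)^n) ^ (-s) else 0) := by
          refine le_trans ?_ (ENNReal.le_tsum (n0 - 1))
          rw [if_pos hmem]
          exact hker
      _ ≤ _ := le_add_self

end WsPf
end partF

noncomputable section partG
namespace WsPf
open Matrix

variable {d : ℕ} {U : Matrix (Fin d) (Fin d) ℝ} {ω : Finset (Ed d)}

lemma two_pow_identity (d : ℕ) (s : ℝ) (n : ℕ) :
    ((2:ℝ)^n)^d * ((2:ℝ)^n)^(-s) = ((2:ℝ)^((d:ℝ) - s))^n := by
  have h1 : ((2:ℝ)^n)^d = (2:ℝ)^((n:ℝ) * (d:ℝ)) := by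
    rw [← pow_mul, ← Real.rpow_natCast (2:ℝ) (n*d)]
    push_cast
    ring_nf
  have h2 : ((2:ℝ)^n)^(-s) = (2:ℝ)^((n:ℝ) * (-s)) := by
    rw [← Real.rpow_natCast (2:ℝ) n, ← Real.rpow_mul (by norm_num)]
  have h3 : ((2:ℝ)^((d:ℝ) - s))^n = (2:ℝ)^(((d:ℝ) - s) * (n:ℝ)) := by
    rw [← Real.rpow_natCast ((2:ℝ)^((d:ℝ)-s)) n, ← Real.rpow_mul (by norm_num)]
  rw [h1, h2, h3, ← Real.rpow_add (by norm_num : (0:ℝ) < 2)]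
  ring_nf

lemma geom_tail_lt_top {s : ℝ} (hs : (d:ℝ) < s) :
    ∑' n : ℕ, ENNReal.ofReal (((2:ℝ)^((d:ℝ) - s))^n) < ⊤ := by
  have hq : (2:ℝ)^((d:ℝ) - s) < 1 :=
    Real.rpow_lt_one_of_one_lt_of_neg one_lt_two (by linarith)
  have hq0 : (0:ℝ) ≤ (2:ℝ)^((d:ℝ) - s) := (Real.rpow_pos_of_pos two_pos _).le
  calc ∑' n : ℕ, ENNReal.ofReal (((2:ℝ)^((d:ℝ)-s))^n)
      = ∑' n : ℕ, (ENNReal.ofReal ((2:ℝ)^((d:ℝ)-s)))^n :=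
        tsum_congr fun n => ENNReal.ofReal_pow hq0 n
    _ = (1 - ENNReal.ofReal ((2:ℝ)^((d:ℝ)-s)))⁻¹ := ENNReal.tsum_geometric _
    _ < ⊤ := by
        rw [ENNReal.inv_lt_top, tsub_pos_iff_lt]
        exact ENNReal.ofReal_lt_one.mpr hq

lemma gfun_lt_top (hU : IsUnit U.det) (hω : ∀ x ∈ ω, x ∈ fundDomain d U) {s : ℝ}
    (hs : (d:ℝ) < s) (hs0 : 0 < s) (x : Ed d) : gfun s U ω x < ⊤ := by
  classical
  set C := perConfig d U ω with hC
  set mx := ∑ j, |x j| with hmx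
  have hmx0 : 0 ≤ mx := Finset.sum_nonneg fun j _ => abs_nonneg _
  have hbox_cube : ∀ M : ℝ, 0 ≤ M → box x M ⊆ cube d (2*(M + mx)) := by
    intro M hM y hy i
    have h1 := hy i
    have h2 : |x i| ≤ mx :=
      Finset.single_le_sum (f := fun j => |x j|) (fun j _ => abs_nonneg _) (Finset.mem_univ i)
    have h3 : |y i| ≤ |y i - x i| + |x i| := by
      have := abs_add_le (y i - x i) (x i); simpa using this
    calc |y i| ≤ M + mx := by linarith
      _ = (2*(M+mx))/2 := by ring
  have hinvne : (ENNReal.ofReal |U.det|)⁻¹ ≠ ⊤ :=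
    ENNReal.inv_ne_top.mpr (det_ofReal_ne_zero hU)
  -- Part A : the near part is finite
  have hAfin : (C ∩ box x 1).Finite := by
    refine finite_of_encard_le (c := (ω.card : ℝ≥0∞) *
      (ENNReal.ofReal ((2*(1+mx) + 2*rho U)^d) * (ENNReal.ofReal |U.det|)⁻¹)) ?_ ?_
    · refine le_trans ?_ (encard_cube_le hU hω (by linarith))
      exact ENat.toENNReal_le.mpr (Set.encard_le_encard
        (Set.inter_subset_inter_right _ (hbox_cube 1 one_pos.le)))
    · exact ENNReal.mul_ne_top (ENNReal.natCast_ne_top _)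
        (ENNReal.mul_ne_top ENNReal.ofReal_ne_top hinvne)
  have hA : ∑' y : ↥C, (if (↑y : Ed d) ∈ box x 1 then ker s x ↑y else 0) < ⊤ := by
    rw [← tsum_inter_eq C (box x 1) (ker s x)]
    exact tsum_ker_finite x hAfin
  -- Part B : dyadic tail
  set K := (4 + 2*mx + 2*rho U) with hK
  have hKpos : 0 < K := by have := rho_pos U; unfold K; linarith
  set Cst := (ω.card : ℝ≥0∞) * (ENNReal.ofReal (K^d) * (ENNReal.ofReal |U.det|)⁻¹) with hCst
  have hCstne : Cst ≠ ⊤ :=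
    ENNReal.mul_ne_top (ENNReal.natCast_ne_top _)
      (ENNReal.mul_ne_top ENNReal.ofReal_ne_top hinvne)
  have hB : ∀ n : ℕ,
      (∑' y : ↥C, (if (↑y : Ed d) ∈ box x ((2:ℝ)^(n+1)) \ box x ((2:ℝ)^n)
        then ENNReal.ofReal ((2:ℝ)^n) ^ (-s) else 0))
      ≤ Cst * ENNReal.ofReal (((2:ℝ)^((d:ℝ)-s))^n) := by
    intro n
    set cn := ENNReal.ofReal ((2:ℝ)^n) ^ (-s) with hcn
    have e1 : (∑' y : ↥C, (if (↑y : Ed d) ∈ box x ((2:ℝ)^(n+1)) \ box x ((2:ℝ)^n)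
        then cn else 0))
        ≤ ∑' y : ↥C, (if (↑y : Ed d) ∈ box x ((2:ℝ)^(n+1)) then cn else 0) := by
      refine ENNReal.tsum_le_tsum fun y => ?_
      by_cases h : (↑y : Ed d) ∈ box x ((2:ℝ)^(n+1)) \ box x ((2:ℝ)^n)
      · rw [if_pos h, if_pos h.1]
      · rw [if_neg h]; exact zero_le
    have e2 : (∑' y : ↥C, (if (↑y : Ed d) ∈ box x ((2:ℝ)^(n+1)) then cn else 0))
        = ((C ∩ box x ((2:ℝ)^(n+1))).encard : ℝ≥0∞) * cn := by
      rw [← tsum_inter_eq C _ (fun _ => cn), ENNReal.tsum_set_const]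
    have e3 : ((C ∩ box x ((2:ℝ)^(n+1))).encard : ℝ≥0∞)
        ≤ (ω.card : ℝ≥0∞) * (ENNReal.ofReal ((2*((2:ℝ)^(n+1)+mx) + 2*rho U)^d) *
            (ENNReal.ofReal |U.det|)⁻¹) := by
      refine le_trans ?_ (encard_cube_le hU hω (by positivity))
      exact ENat.toENNReal_le.mpr (Set.encard_le_encard
        (Set.inter_subset_inter_right _ (hbox_cube _ (by positivity))))
    have harith : (2*((2:ℝ)^(n+1)+mx) + 2*rho U) ≤ K * 2^n := by
      have h2n : (1:ℝ) ≤ 2^n := one_le_pow₀ one_le_two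
      have hpow : (2:ℝ)^(n+1) = 2 * 2^n := by ring
      have hρ := rho_pos U
      unfold K
      nlinarith
    have e4 : ENNReal.ofReal ((2*((2:ℝ)^(n+1)+mx) + 2*rho U)^d)
        ≤ ENNReal.ofReal (K^d) * ENNReal.ofReal (((2:ℝ)^n)^d) := by
      rw [← ENNReal.ofReal_mul (by positivity), ← mul_pow]
      refine ENNReal.ofReal_le_ofReal (pow_le_pow_left₀ ?_ harith d)
      have := pow_pos (two_pos (α := ℝ)) (n+1)
      have := rho_pos U
      nlinarith
    have e5 : ENNReal.ofReal (((2:ℝ)^n)^d) * cn = ENNReal.ofReal (((2:ℝ)^((d:ℝ)-s))^n) := by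
      rw [hcn, ENNReal.ofReal_rpow_of_pos (by positivity),
        ← ENNReal.ofReal_mul (by positivity), two_pow_identity]
    calc (∑' y : ↥C, (if (↑y : Ed d) ∈ box x ((2:ℝ)^(n+1)) \ box x ((2:ℝ)^n)
          then cn else 0))
        ≤ ((C ∩ box x ((2:ℝ)^(n+1))).encard : ℝ≥0∞) * cn := e1.trans_eq e2
      _ ≤ ((ω.card : ℝ≥0∞) * (ENNReal.ofReal ((2*((2:ℝ)^(n+1)+mx) + 2*rho U)^d) *
            (ENNReal.ofReal |U.det|)⁻¹)) * cn := mul_le_mul_left e3 cn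
      _ ≤ ((ω.card : ℝ≥0∞) * ((ENNReal.ofReal (K^d) * ENNReal.ofReal (((2:ℝ)^n)^d)) *
            (ENNReal.ofReal |U.det|)⁻¹)) * cn := by
          refine mul_le_mul_left (mul_le_mul_right (mul_le_mul_left e4 _) _) cn
      _ = Cst * (ENNReal.ofReal (((2:ℝ)^n)^d) * cn) := by
          rw [hCst]; ring
      _ = Cst * ENNReal.ofReal (((2:ℝ)^((d:ℝ)-s))^n) := by rw [e5]
  -- assemble
  have main : gfun s U ω x
      ≤ (∑' y : ↥C, (if (↑y : Ed d) ∈ box x 1 then ker s x ↑y else 0))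
        + ∑' n : ℕ, ∑' y : ↥C, (if (↑y : Ed d) ∈ box x ((2:ℝ)^(n+1)) \ box x ((2:ℝ)^n)
            then ENNReal.ofReal ((2:ℝ)^n) ^ (-s) else 0) := by
    calc gfun s U ω x
        ≤ ∑' y : ↥C, ((if (↑y : Ed d) ∈ box x 1 then ker s x ↑y else 0)
          + ∑' n : ℕ, (if (↑y : Ed d) ∈ box x ((2:ℝ)^(n+1)) \ box x ((2:ℝ)^n)
              then ENNReal.ofReal ((2:ℝ)^n) ^ (-s) else 0)) :=
          ENNReal.tsum_le_tsum fun y => ker_pointwise_bound hs0 x ↑y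
      _ = (∑' y : ↥C, (if (↑y : Ed d) ∈ box x 1 then ker s x ↑y else 0))
          + ∑' y : ↥C, ∑' n : ℕ, (if (↑y : Ed d) ∈ box x ((2:ℝ)^(n+1)) \ box x ((2:ℝ)^n)
              then ENNReal.ofReal ((2:ℝ)^n) ^ (-s) else 0) := ENNReal.tsum_add
      _ = _ := by rw [ENNReal.tsum_comm]
  refine lt_of_le_of_lt main (ENNReal.add_lt_top.mpr ⟨hA, ?_⟩)
  calc ∑' n : ℕ, ∑' y : ↥C, (if (↑y : Ed d) ∈ box x ((2:ℝ)^(n+1)) \ box x ((2:ℝ)^n)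
          then ENNReal.ofReal ((2:ℝ)^n) ^ (-s) else 0)
      ≤ ∑' n : ℕ, Cst * ENNReal.ofReal (((2:ℝ)^((d:ℝ)-s))^n) :=
        ENNReal.tsum_le_tsum hB
    _ = Cst * ∑' n : ℕ, ENNReal.ofReal (((2:ℝ)^((d:ℝ)-s))^n) := ENNReal.tsum_mul_left
    _ < ⊤ := ENNReal.mul_lt_top hCstne.lt_top (geom_tail_lt_top hs)

end WsPf
end partG

noncomputable section partH
namespace WsPf
open Matrix

variable {d : ℕ} {U : Matrix (Fin d) (Fin d) ℝ} {ω : Finset (Ed d)}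

lemma gT_mono (s : ℝ) (x : Ed d) : Monotone (fun T : ℕ => gT s U ω x (T:ℝ)) := by
  intro T1 T2 hT
  refine ENNReal.tsum_le_tsum fun y => ?_
  by_cases h : (↑y : Ed d) ∈ box x (T1:ℝ)
  · have h2 : (↑y : Ed d) ∈ box x (T2:ℝ) := fun i =>
      le_trans (h i) (show (T1:ℝ) ≤ T2 by exact_mod_cast hT)
    rw [if_pos h, if_pos h2]
  · rw [if_neg h]; exact zero_le

lemma gT_le_gfun (s : ℝ) (x : Ed d) (T : ℝ) : gT s U ω x T ≤ gfun s U ω x := by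
  refine ENNReal.tsum_le_tsum fun y => ?_
  by_cases h : (↑y : Ed d) ∈ box x T
  · rw [if_pos h]
  · rw [if_neg h]; exact zero_le

lemma iSup_gT (s : ℝ) (x : Ed d) : ⨆ T : ℕ, gT s U ω x (T:ℝ) = gfun s U ω x := by
  apply le_antisymm
  · exact iSup_le fun T => gT_le_gfun s x T
  · unfold gfun
    rw [ENNReal.tsum_eq_iSup_sum]
    refine iSup_le fun F => ?_
    set b := ∑ y ∈ F, ∑ j, |(↑y : Ed d) j - x j| with hb
    obtain ⟨T, hT⟩ := exists_nat_ge b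
    have hmem : ∀ y ∈ F, (↑y : Ed d) ∈ box x (T:ℝ) := by
      intro y hy i
      have h1 : |(↑y : Ed d) i - x i| ≤ ∑ j, |(↑y : Ed d) j - x j| :=
        Finset.single_le_sum (f := fun j => |(↑y : Ed d) j - x j|)
          (fun j _ => abs_nonneg _) (Finset.mem_univ i)
      have h2 : ∑ j, |(↑y : Ed d) j - x j| ≤ b :=
        Finset.single_le_sum (f := fun y' : ↥(perConfig d U ω) => ∑ j, |(↑y' : Ed d) j - x j|)
          (fun y' _ => Finset.sum_nonneg fun j _ => abs_nonneg _) hy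
      linarith
    calc ∑ y ∈ F, ker s x ↑y
        = ∑ y ∈ F, (if (↑y : Ed d) ∈ box x (T:ℝ) then ker s x ↑y else 0) :=
          Finset.sum_congr rfl fun y hy => (if_pos (hmem y hy)).symm
      _ ≤ gT s U ω x (T:ℝ) := ENNReal.sum_le_tsum F
      _ ≤ ⨆ T : ℕ, gT s U ω x (T:ℝ) := le_iSup (fun T : ℕ => gT s U ω x (T:ℝ)) T

end WsPf
end partH

noncomputable section partI
namespace WsPf
open Matrix Filter

variable {d : ℕ} {U : Matrix (Fin d) (Fin d) ℝ} {ω : Finset (Ed d)}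

lemma liminf_mul_of_tendsto_one {L : ℝ → ℝ≥0∞} (hL : Tendsto L atTop (𝓝 1))
    (K : ℝ≥0∞) : Filter.liminf (fun R => L R * K) Filter.atTop = K := by
  have h := ENNReal.Tendsto.mul_const (b := K) hL (Or.inl one_ne_zero)
  rw [one_mul] at h
  exact h.liminf_eq

lemma tendsto_ratio_pow_one (c : ℝ) (d : ℕ) :
    Tendsto (fun R : ℝ => ENNReal.ofReal (R ^ (-(d:ℝ)) * (R + c)^d)) atTop (𝓝 1) := by
  have h2 : Tendsto (fun R : ℝ => c / R) atTop (𝓝 0) :=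
    Tendsto.div_atTop tendsto_const_nhds Filter.tendsto_id
  have h4 : Tendsto (fun R : ℝ => 1 + c/R) atTop (𝓝 1) := by
    have := h2.const_add (1:ℝ)
    simpa using this
  have h3 : Tendsto (fun R : ℝ => (1 + c/R)^d) atTop (𝓝 1) := by
    have := h4.pow d
    simpa using this
  have h5 : Tendsto (fun R : ℝ => ENNReal.ofReal ((1 + c/R)^d)) atTop (𝓝 1) := by
    have := (ENNReal.continuous_ofReal.tendsto 1).comp h3
    simpa [Function.comp_def] using this
  refine h5.congr' ?_
  filter_upwards [Filter.eventually_gt_atTop 0] with R hR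
  congr 1
  rw [Real.rpow_neg hR.le, Real.rpow_natCast]
  have h6 : 1 + c/R = (R + c)/R := by field_simp
  rw [h6, div_pow, div_eq_mul_inv, mul_comm]

end WsPf
end partI

open WsPf in

/-- `W_s(ω + Λ) = E_{s,Λ}(ω) / |Λ|`. -/
theorem Ws_periodic (d : ℕ) (hd : 0 < d) (s : ℝ) (hs : (d : ℝ) < s)
    (U : Matrix (Fin d) (Fin d) ℝ) (hU : IsUnit U.det)
    (ω : Finset (EuclideanSpace ℝ (Fin d))) (hω : ∀ x ∈ ω, x ∈ fundDomain d U) :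
    Ws d s (perConfig d U ω) = ENNReal.ofReal |U.det|⁻¹ * perEnergy d s U ω := by
  classical
  have hdet_pos : (0:ℝ) < |U.det| := abs_pos.mpr hU.ne_zero
  have hs0 : (0:ℝ) < s := lt_of_le_of_lt (Nat.cast_nonneg d) hs
  have hρ0 : 0 < WsPf.rho U := WsPf.rho_pos U
  rw [show ENNReal.ofReal |U.det|⁻¹ = (ENNReal.ofReal |U.det|)⁻¹ from
    ENNReal.ofReal_inv_of_pos hdet_pos]
  set ρ := WsPf.rho U with hρdef
  set C := perConfig d U ω with hCdef
  set Dinv := (ENNReal.ofReal |U.det|)⁻¹ with hDinvdef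
  have hDinv_ne_top : Dinv ≠ ⊤ := ENNReal.inv_ne_top.mpr (WsPf.det_ofReal_ne_zero hU)
  set F := fun R : ℝ => ENNReal.ofReal (R ^ (-(d:ℝ))) *
    interE d s (C ∩ cube d R) (C ∩ cube d R) with hFdef
  have hWs : Ws d s C = Filter.liminf F Filter.atTop := rfl
  rw [hWs]
  apply le_antisymm
  -- upper bound
  · set K := Dinv * perEnergy d s U ω with hKdef
    have hub : ∀ᶠ R in Filter.atTop,
        F R ≤ ENNReal.ofReal (R ^ (-(d:ℝ)) * (R + 2*ρ)^d) * K := by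
      filter_upwards [Filter.eventually_ge_atTop (0:ℝ)] with R hR
      have h1 : interE d s (C ∩ cube d R) (C ∩ cube d R)
          ≤ ∑ x ∈ ω, ((WsPf.SSE U x (cube d R)).encard : ℝ≥0∞) * WsPf.gfun s U ω x :=
        WsPf.upper_est hU hω s (cube d R)
      have h2 : ∑ x ∈ ω, ((WsPf.SSE U x (cube d R)).encard : ℝ≥0∞) * WsPf.gfun s U ω x
          ≤ ∑ x ∈ ω, (ENNReal.ofReal ((R + 2*ρ)^d) * Dinv) * WsPf.gfun s U ω x :=
        Finset.sum_le_sum fun x _ => mul_le_mul_left (WsPf.SSE_encard_le hU x hR) _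
      have h3 : ∑ x ∈ ω, (ENNReal.ofReal ((R + 2*ρ)^d) * Dinv) * WsPf.gfun s U ω x
          = ENNReal.ofReal ((R + 2*ρ)^d) * K := by
        rw [← Finset.mul_sum, hKdef, ← WsPf.perEnergy_eq]
        ring
      calc F R ≤ ENNReal.ofReal (R ^ (-(d:ℝ))) * (ENNReal.ofReal ((R + 2*ρ)^d) * K) :=
            mul_le_mul_right (le_trans h1 (le_trans h2 (le_of_eq h3))) _
        _ = ENNReal.ofReal (R ^ (-(d:ℝ)) * (R + 2*ρ)^d) * K := by
            rw [ENNReal.ofReal_mul (Real.rpow_nonneg hR _), mul_assoc]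
    refine le_trans (Filter.liminf_le_liminf hub) ?_
    rw [WsPf.liminf_mul_of_tendsto_one (WsPf.tendsto_ratio_pow_one (2*ρ) d) K]
  -- lower bound
  · have key : ∀ T : ℕ,
        Dinv * (∑ x ∈ ω, WsPf.gT s U ω x (T:ℝ)) ≤ Filter.liminf F Filter.atTop := by
      intro T
      set ET := ∑ x ∈ ω, WsPf.gT s U ω x (T:ℝ) with hETdef
      have hev : ∀ᶠ R in Filter.atTop,
          ENNReal.ofReal (R ^ (-(d:ℝ)) * (R + (-(2*(T:ℝ) + 4*ρ)))^d) * (Dinv * ET) ≤ F R := by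
        filter_upwards [Filter.eventually_ge_atTop (2*(T:ℝ) + 4*ρ),
          Filter.eventually_ge_atTop (0:ℝ)] with R hR1 hR0
        have hcount : ∀ x : EuclideanSpace ℝ (Fin d),
            ENNReal.ofReal ((R - 2*(T:ℝ) - 4*ρ)^d) * Dinv
              ≤ ((WsPf.SSE U x (cube d (R - 2*(T:ℝ)))).encard : ℝ≥0∞) := by
          intro x
          rw [WsPf.SSE_cube]
          have hcl := WsPf.count_lower hU (fun i => x i) (R := R - 2*(T:ℝ)) (by linarith)
          rw [hDinvdef, ← div_eq_mul_inv,
            ENNReal.div_le_iff_le_mul (Or.inl (WsPf.det_ofReal_ne_zero hU))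
              (Or.inl ENNReal.ofReal_ne_top)]
          exact hcl
        have h1 : ENNReal.ofReal ((R - 2*(T:ℝ) - 4*ρ)^d) * (Dinv * ET)
            ≤ ∑ x ∈ ω, ((WsPf.SSE U x (cube d (R - 2*(T:ℝ)))).encard : ℝ≥0∞) *
                WsPf.gT s U ω x (T:ℝ) := by
          calc ENNReal.ofReal ((R - 2*(T:ℝ) - 4*ρ)^d) * (Dinv * ET)
              = ∑ x ∈ ω, (ENNReal.ofReal ((R - 2*(T:ℝ) - 4*ρ)^d) * Dinv) *
                  WsPf.gT s U ω x (T:ℝ) := by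
                rw [hETdef, ← Finset.mul_sum]
                ring
            _ ≤ _ := Finset.sum_le_sum fun x _ => mul_le_mul_left (hcount x) _
        have h2 := WsPf.lower_est hU hω s (R := R) (T := (T:ℝ)) (Nat.cast_nonneg T)
        have h3 : ENNReal.ofReal (R ^ (-(d:ℝ))) *
            (ENNReal.ofReal ((R - 2*(T:ℝ) - 4*ρ)^d) * (Dinv * ET)) ≤ F R :=
          mul_le_mul_right (le_trans h1 h2) _
        calc ENNReal.ofReal (R ^ (-(d:ℝ)) * (R + (-(2*(T:ℝ) + 4*ρ)))^d) * (Dinv * ET)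
            = ENNReal.ofReal (R ^ (-(d:ℝ))) *
              (ENNReal.ofReal ((R - 2*(T:ℝ) - 4*ρ)^d) * (Dinv * ET)) := by
              rw [show R + (-(2*(T:ℝ) + 4*ρ)) = R - 2*(T:ℝ) - 4*ρ by ring,
                ENNReal.ofReal_mul (Real.rpow_nonneg hR0 _), mul_assoc]
          _ ≤ F R := h3
      have := Filter.liminf_le_liminf hev
      rwa [WsPf.liminf_mul_of_tendsto_one
        (WsPf.tendsto_ratio_pow_one (-(2*(T:ℝ) + 4*ρ)) d) (Dinv * ET)] at this
    have hsup : Dinv * perEnergy d s U ω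
        = ⨆ T : ℕ, Dinv * (∑ x ∈ ω, WsPf.gT s U ω x (T:ℝ)) := by
      rw [← ENNReal.mul_iSup]
      congr 1
      rw [WsPf.perEnergy_eq]
      rw [← ENNReal.finsetSum_iSup_of_monotone (fun x => WsPf.gT_mono s x)]
      exact Finset.sum_congr rfl fun x _ => (WsPf.iSup_gT s x).symm
    rw [hsup]
    exact iSup_le key
end

section
/- For a stationary law P of random point configurations in ℝ^d, the sequence n ↦ n^{-d} E_P[Int[K_n, K_n]] is non-decreasing over positive integers n; in particular the limit defining W_s(P) exists in [0, +∞]. -/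
open scoped Classical

open MeasureTheory Filter Topology ENNReal Set

noncomputable section AuxWs

def rk (s : ℝ) {d : ℕ} (p q : EuclideanSpace ℝ (Fin d)) : ℝ≥0∞ :=
  if p = q then 0 else edist p q ^ (-s)

lemma interE_eq_tsum (d : ℕ) (s : ℝ) (C A : Set (EuclideanSpace ℝ (Fin d))) :
    interE d s (C ∩ A) (C ∩ A)
      = ∑' (p : EuclideanSpace ℝ (Fin d)) (q : EuclideanSpace ℝ (Fin d)),
          if p ∈ C ∧ p ∈ A ∧ q ∈ C ∧ q ∈ A then rk s p q else 0 := by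
  have h1 : interE d s (C ∩ A) (C ∩ A)
      = ∑' (p : ↥(C ∩ A)), (fun x : EuclideanSpace ℝ (Fin d) =>
          ∑' (q : ↥(C ∩ A)), rk s x q.val) p.val := rfl
  rw [h1, tsum_subtype (C ∩ A) (fun x : EuclideanSpace ℝ (Fin d) => ∑' (q : ↥(C ∩ A)), rk s x q.val)]
  refine tsum_congr fun p => ?_
  by_cases hp : p ∈ C ∩ A
  · rw [Set.indicator_of_mem hp, tsum_subtype (C ∩ A) (fun y : EuclideanSpace ℝ (Fin d) => rk s p y)]
    refine tsum_congr fun q => ?_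
    by_cases hq : q ∈ C ∩ A
    · rw [Set.indicator_of_mem hq, if_pos ⟨hp.1, hp.2, hq.1, hq.2⟩]
    · rw [Set.indicator_of_notMem hq, eq_comm]
      rw [if_neg]
      intro h; exact hq ⟨h.2.2.1, h.2.2.2⟩
  · rw [Set.indicator_of_notMem hp, eq_comm, ENNReal.tsum_eq_zero]
    intro q
    rw [if_neg]
    intro h; exact hp ⟨h.1, h.2.1⟩

lemma rk_translate (s : ℝ) (p q v : EuclideanSpace ℝ (Fin d)) :
    rk s (p + v) (q + v) = rk s p q := by
  unfold rk
  rw [edist_add_right]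
  by_cases h : p = q
  · rw [if_pos (by rw [h]), if_pos h]
  · rw [if_neg (by simpa using h), if_neg h]

lemma interE_translate (d : ℕ) (s : ℝ) (C A : Set (EuclideanSpace ℝ (Fin d)))
    (v : EuclideanSpace ℝ (Fin d)) :
    interE d s (((fun x => x + v) '' C) ∩ A) (((fun x => x + v) '' C) ∩ A)
      = interE d s (C ∩ {x | x + v ∈ A}) (C ∩ {x | x + v ∈ A}) := by
  rw [interE_eq_tsum, interE_eq_tsum]
  rw [← (Equiv.addRight v).tsum_eq]
  refine tsum_congr fun p => ?_
  rw [← (Equiv.addRight v).tsum_eq]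
  refine tsum_congr fun q => ?_
  have him : ∀ x : EuclideanSpace ℝ (Fin d), x + v ∈ (fun y => y + v) '' C ↔ x ∈ C := by
    intro x
    constructor
    · rintro ⟨c, hc, h⟩
      have : c = x := by
        have := h
        simpa [add_left_inj] using this
      exact this ▸ hc
    · exact fun h => ⟨x, h, rfl⟩
  simp only [Equiv.coe_addRight]
  rw [rk_translate]
  simp only [Set.mem_setOf_eq, him]

/-- expectation of cube interaction energy -/
def gg (d : ℕ) (s : ℝ) (P : Measure (Set (EuclideanSpace ℝ (Fin d)))) (ρ : ℝ) : ℝ≥0∞ :=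
  ∫⁻ C, interE d s (C ∩ cube d ρ) (C ∩ cube d ρ) ∂P

lemma meas_top {Y : Type*} [MeasurableSpace Y] (f : Set (EuclideanSpace ℝ (Fin d)) → Y) :
    Measurable f := fun _ _ => trivial

lemma lint_translate (d : ℕ) (s : ℝ) (P : Measure (Set (EuclideanSpace ℝ (Fin d))))
    (hstat : stationary d P) (ρ : ℝ) (w : EuclideanSpace ℝ (Fin d)) :
    ∫⁻ C, interE d s (C ∩ {x | x - w ∈ cube d ρ}) (C ∩ {x | x - w ∈ cube d ρ}) ∂P
      = gg d s P ρ := by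
  unfold gg
  conv_lhs => rw [← hstat w]
  rw [lintegral_map (meas_top _) (meas_top _)]
  refine lintegral_congr fun C => ?_
  rw [interE_translate]
  have : {x : EuclideanSpace ℝ (Fin d) | x + w ∈ {y | y - w ∈ cube d ρ}} = cube d ρ := by
    ext x; simp [Set.mem_setOf_eq, add_sub_cancel_right]
  rw [this]

/-- grid-translated cube -/
def gA (d : ℕ) (ε ρ : ℝ) (k : Fin d → ℤ) : Set (EuclideanSpace ℝ (Fin d)) :=
  {x | ∀ i, |x i - ε * k i| ≤ ρ / 2}

def gw (d : ℕ) (ε : ℝ) (k : Fin d → ℤ) : EuclideanSpace ℝ (Fin d) := WithLp.toLp 2 (fun i => ε * k i)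

lemma gA_eq (d : ℕ) (ε ρ : ℝ) (k : Fin d → ℤ) :
    gA d ε ρ k = {x : EuclideanSpace ℝ (Fin d) | x - gw d ε k ∈ cube d ρ} := rfl

lemma lint_gA (d : ℕ) (s : ℝ) (P : Measure (Set (EuclideanSpace ℝ (Fin d))))
    (hstat : stationary d P) (ε ρ : ℝ) (k : Fin d → ℤ) :
    ∫⁻ C, interE d s (C ∩ gA d ε ρ k) (C ∩ gA d ε ρ k) ∂P = gg d s P ρ := by
  rw [gA_eq]; exact lint_translate d s P hstat ρ _

lemma master (d : ℕ) (s : ℝ) (C : Set (EuclideanSpace ℝ (Fin d))) (ε ρ : ℝ)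
    (K : Finset (Fin d → ℤ)) :
    ∑ k ∈ K, interE d s (C ∩ gA d ε ρ k) (C ∩ gA d ε ρ k)
      = ∑' (p : EuclideanSpace ℝ (Fin d)) (q : EuclideanSpace ℝ (Fin d)),
          (if p ∈ C ∧ q ∈ C then
            rk s p q * (K.filter (fun k => p ∈ gA d ε ρ k ∧ q ∈ gA d ε ρ k)).card else 0) := by
  have h1 : ∀ k ∈ K, Summable (fun p : EuclideanSpace ℝ (Fin d) =>
      ∑' (q : EuclideanSpace ℝ (Fin d)),
        if p ∈ C ∧ p ∈ gA d ε ρ k ∧ q ∈ C ∧ q ∈ gA d ε ρ k then rk s p q else 0) :=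
    fun _ _ => ENNReal.summable
  calc ∑ k ∈ K, interE d s (C ∩ gA d ε ρ k) (C ∩ gA d ε ρ k)
      = ∑ k ∈ K, ∑' (p : EuclideanSpace ℝ (Fin d)) (q : EuclideanSpace ℝ (Fin d)),
          if p ∈ C ∧ p ∈ gA d ε ρ k ∧ q ∈ C ∧ q ∈ gA d ε ρ k then rk s p q else 0 := by
        exact Finset.sum_congr rfl fun k _ => interE_eq_tsum d s C (gA d ε ρ k)
    _ = ∑' (p : EuclideanSpace ℝ (Fin d)), ∑ k ∈ K, ∑' (q : EuclideanSpace ℝ (Fin d)),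
          if p ∈ C ∧ p ∈ gA d ε ρ k ∧ q ∈ C ∧ q ∈ gA d ε ρ k then rk s p q else 0 :=
        (Summable.tsum_finsetSum h1).symm
    _ = ∑' (p : EuclideanSpace ℝ (Fin d)) (q : EuclideanSpace ℝ (Fin d)), ∑ k ∈ K,
          (if p ∈ C ∧ p ∈ gA d ε ρ k ∧ q ∈ C ∧ q ∈ gA d ε ρ k then rk s p q else 0) := by
        refine tsum_congr fun p => (Summable.tsum_finsetSum fun _ _ => ENNReal.summable).symm
    _ = _ := by
        refine tsum_congr fun p => tsum_congr fun q => ?_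
        by_cases h : p ∈ C ∧ q ∈ C
        · rw [if_pos h]
          have : ∀ k, (if p ∈ C ∧ p ∈ gA d ε ρ k ∧ q ∈ C ∧ q ∈ gA d ε ρ k then rk s p q else 0)
              = (if p ∈ gA d ε ρ k ∧ q ∈ gA d ε ρ k then rk s p q else 0) := by
            intro k
            by_cases hk : p ∈ gA d ε ρ k ∧ q ∈ gA d ε ρ k
            · rw [if_pos ⟨h.1, hk.1, h.2, hk.2⟩, if_pos hk]
            · rw [if_neg (fun hc => hk ⟨hc.2.1, hc.2.2.2⟩), if_neg hk]
          rw [Finset.sum_congr rfl fun k _ => this k, ← Finset.sum_filter,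
            Finset.sum_const, nsmul_eq_mul, mul_comm]
        · rw [if_neg h, Finset.sum_eq_zero]
          intro k _
          rw [if_neg (fun hc => h ⟨hc.1, hc.2.2.1⟩)]

lemma count_pi (d : ℕ) (ε ρ : ℝ) (M : ℕ) (p q : EuclideanSpace ℝ (Fin d)) :
    (((Fintype.piFinset fun _ : Fin d => Finset.Icc (-(M:ℤ)) M).filter
        (fun k => p ∈ gA d ε ρ k ∧ q ∈ gA d ε ρ k)).card : ℝ)
      = ∏ i, (((Finset.Icc (-(M:ℤ)) M).filter
          (fun z : ℤ => |p i - ε*z| ≤ ρ/2 ∧ |q i - ε*z| ≤ ρ/2)).card : ℝ) := by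
  have h : (Fintype.piFinset fun _ : Fin d => Finset.Icc (-(M:ℤ)) M).filter
        (fun k => p ∈ gA d ε ρ k ∧ q ∈ gA d ε ρ k)
      = Fintype.piFinset (fun i => (Finset.Icc (-(M:ℤ)) M).filter
          (fun z : ℤ => |p i - ε*z| ≤ ρ/2 ∧ |q i - ε*z| ≤ ρ/2)) := by
    ext k
    simp only [Finset.mem_filter, Fintype.mem_piFinset, gA, Set.mem_setOf_eq]
    constructor
    · rintro ⟨h1, h2, h3⟩ i
      exact ⟨h1 i, h2 i, h3 i⟩
    · intro h
      exact ⟨fun i => (h i).1, fun i => (h i).2.1, fun i => (h i).2.2⟩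
  rw [h, Fintype.card_piFinset]
  push_cast
  rfl

lemma card_Icc_le (ε a b : ℝ) (hε : 0 < ε) (hab : a ≤ b) (S : Finset ℤ)
    (hS : ∀ z ∈ S, a ≤ ε * z ∧ ε * z ≤ b) :
    (S.card : ℝ) ≤ (b - a) / ε + 1 := by
  have hsub : S ⊆ Finset.Icc ⌈a/ε⌉ ⌊b/ε⌋ := by
    intro z hz
    obtain ⟨h1, h2⟩ := hS z hz
    rw [Finset.mem_Icc]
    constructor
    · exact Int.ceil_le.2 ((div_le_iff₀ hε).2 (by linarith [mul_comm ε (z:ℝ)]))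
    · exact Int.le_floor.2 ((le_div_iff₀ hε).2 (by linarith [mul_comm ε (z:ℝ)]))
  have := Finset.card_le_card hsub
  have h2 : ((Finset.Icc ⌈a/ε⌉ ⌊b/ε⌋).card : ℝ) ≤ (b - a)/ε + 1 := by
    rw [Int.card_Icc]
    have h3 : (⌊b/ε⌋ + 1 - ⌈a/ε⌉ : ℤ) ≤ ⌊b/ε⌋ + 1 - ⌈a/ε⌉ := le_refl _
    rcases le_or_gt (⌊b/ε⌋ + 1 - ⌈a/ε⌉ : ℤ) 0 with hc | hc
    · rw [Int.toNat_of_nonpos hc]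
      have : (0:ℝ) ≤ (b-a)/ε := div_nonneg (by linarith) hε.le
      push_cast; linarith
    · have hf : ((⌊b/ε⌋ : ℝ)) ≤ b/ε := Int.floor_le _
      have hcl : a/ε ≤ ((⌈a/ε⌉ : ℝ)) := Int.le_ceil _
      have h5 : b/ε - a/ε = (b-a)/ε := by ring
      have h4 : ((⌊b / ε⌋ + 1 - ⌈a / ε⌉).toNat : ℝ) = (⌊b / ε⌋ : ℝ) + 1 - (⌈a / ε⌉ : ℝ) := by
        have h6 := Int.toNat_of_nonneg hc.le
        exact_mod_cast congrArg (fun z : ℤ => (z : ℝ)) h6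
      rw [h4]
      linarith
  calc (S.card : ℝ) ≤ _ := by exact_mod_cast Nat.cast_le.2 this
    _ ≤ (b - a)/ε + 1 := h2

lemma card_Icc_ge (ε a b : ℝ) (hε : 0 < ε) (S : Finset ℤ)
    (hS : ∀ z : ℤ, a ≤ ε * z → ε * z ≤ b → z ∈ S) :
    (b - a) / ε - 1 ≤ (S.card : ℝ) := by
  have hsub : Finset.Icc ⌈a/ε⌉ ⌊b/ε⌋ ⊆ S := by
    intro z hz
    rw [Finset.mem_Icc] at hz
    refine hS z ?_ ?_
    · have : a/ε ≤ (z:ℝ) := le_trans (Int.le_ceil _) (by exact_mod_cast hz.1)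
      calc a = (a/ε) * ε := by field_simp
        _ ≤ z * ε := by nlinarith
        _ = ε * z := mul_comm _ _
    · have : (z:ℝ) ≤ b/ε := le_trans (by exact_mod_cast hz.2) (Int.floor_le _)
      calc ε * z = (z:ℝ) * ε := mul_comm _ _
        _ ≤ (b/ε) * ε := by nlinarith
        _ = b := by field_simp
  have hcard := Finset.card_le_card hsub
  have h2 : (b - a)/ε - 1 ≤ ((Finset.Icc ⌈a/ε⌉ ⌊b/ε⌋).card : ℝ) := by
    rw [Int.card_Icc]
    have h1 : ((⌊b/ε⌋ + 1 - ⌈a/ε⌉ : ℤ) : ℝ) ≤ ((⌊b/ε⌋ + 1 - ⌈a/ε⌉ : ℤ).toNat : ℝ) := by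
      exact_mod_cast Int.self_le_toNat _
    have hf : b/ε - 1 ≤ ((⌊b/ε⌋ : ℝ)) := by linarith [Int.sub_one_lt_floor (b/ε)]
    have hcl : ((⌈a/ε⌉ : ℝ)) ≤ a/ε + 1 := by linarith [Int.ceil_lt_add_one (a/ε)]
    have h5 : b/ε - a/ε = (b-a)/ε := by ring
    push_cast at h1
    linarith
  calc (b-a)/ε - 1 ≤ _ := h2
    _ ≤ (S.card : ℝ) := by exact_mod_cast hcard

lemma coord_count (ε r R : ℝ) (hε : 0 < ε) (hr : 0 < r) (hrR : r ≤ R)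
    (M M' : ℕ) (hM : ε * M + (r + R + ε)/2 ≤ ε * M') (x y : ℝ) :
    R * (((Finset.Icc (-(M:ℤ)) M).filter
        (fun z : ℤ => |x - ε*z| ≤ (r-ε)/2 ∧ |y - ε*z| ≤ (r-ε)/2)).card : ℝ)
      ≤ r * (((Finset.Icc (-(M':ℤ)) M').filter
        (fun z : ℤ => |x - ε*z| ≤ (R+ε)/2 ∧ |y - ε*z| ≤ (R+ε)/2)).card : ℝ) := by
  set S := (Finset.Icc (-(M:ℤ)) M).filter
      (fun z : ℤ => |x - ε*z| ≤ (r-ε)/2 ∧ |y - ε*z| ≤ (r-ε)/2) with hSdef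
  set B := (Finset.Icc (-(M':ℤ)) M').filter
      (fun z : ℤ => |x - ε*z| ≤ (R+ε)/2 ∧ |y - ε*z| ≤ (R+ε)/2) with hBdef
  rcases Finset.eq_empty_or_nonempty S with hS | hS
  · rw [hS]
    simp only [Finset.card_empty, Nat.cast_zero, mul_zero]
    positivity
  obtain ⟨z₀, hz₀⟩ := hS
  rw [hSdef, Finset.mem_filter, Finset.mem_Icc] at hz₀
  obtain ⟨⟨hz₀l, hz₀r⟩, hx₀, hy₀⟩ := hz₀
  set δ := |x - y| with hδdef
  have hδ0 : 0 ≤ δ := abs_nonneg _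
  have hδ : δ ≤ r - ε := by
    have := abs_sub_abs_le_abs_sub (x - ε*z₀) (y - ε*z₀)
    have h2 : |x - ε*z₀ - (y - ε*z₀)| = δ := by rw [hδdef]; ring_nf
    calc δ = |(x - ε*z₀) - (y - ε*z₀)| := by rw [← h2]
      _ ≤ |x - ε*z₀| + |y - ε*z₀| := abs_sub _ _
      _ ≤ (r-ε)/2 + (r-ε)/2 := add_le_add hx₀ hy₀
      _ = r - ε := by ring
  have hz₀abs : |ε * z₀| ≤ ε * M := by
    rw [abs_mul, abs_of_pos hε]
    apply mul_le_mul_of_nonneg_left _ hε.le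
    rw [abs_le]
    constructor <;> [exact_mod_cast hz₀l; exact_mod_cast hz₀r]
  have hxb : |x| ≤ ε * M + (r-ε)/2 := by
    calc |x| = |(x - ε*z₀) + ε*z₀| := by ring_nf
      _ ≤ |x - ε*z₀| + |ε*z₀| := abs_add_le _ _
      _ ≤ (r-ε)/2 + ε*M := add_le_add hx₀ hz₀abs
      _ = ε*M + (r-ε)/2 := by ring
  have hyb : |y| ≤ ε * M + (r-ε)/2 := by
    calc |y| = |(y - ε*z₀) + ε*z₀| := by ring_nf
      _ ≤ |y - ε*z₀| + |ε*z₀| := abs_add_le _ _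
      _ ≤ (r-ε)/2 + ε*M := add_le_add hy₀ hz₀abs
      _ = ε*M + (r-ε)/2 := by ring
  -- upper bound for S
  have ha : max x y - (r-ε)/2 ≤ min x y + (r-ε)/2 := by
    rcases le_total x y with h | h
    · rw [max_eq_right h, min_eq_left h]
      have : δ = y - x := by rw [hδdef, abs_sub_comm, abs_of_nonneg (by linarith)]
      linarith
    · rw [max_eq_left h, min_eq_right h]
      have : δ = x - y := by rw [hδdef, abs_of_nonneg (by linarith)]
      linarith
  have hminmax : max x y - min x y = δ := by
    rcases le_total x y with h | h
    · rw [max_eq_right h, min_eq_left h, hδdef, abs_sub_comm, abs_of_nonneg (by linarith)]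
    · rw [max_eq_left h, min_eq_right h, hδdef, abs_of_nonneg (by linarith)]
  have hScard : (S.card : ℝ) ≤ (r - δ)/ε := by
    have h9 := card_Icc_le ε (max x y - (r-ε)/2) (min x y + (r-ε)/2) hε ha S ?_
    · have h8 : min x y + (r-ε)/2 - (max x y - (r-ε)/2) = (r - ε) - δ := by
        rw [← hminmax]; ring
      rw [h8] at h9
      have h10 : ((r-ε)-δ)/ε + 1 = (r-δ)/ε := by field_simp; ring
      linarith
    · intro z hz
      rw [hSdef, Finset.mem_filter, abs_le, abs_le] at hz
      obtain ⟨_, ⟨h1, h2⟩, h3, h4⟩ := hz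
      constructor
      · rw [sub_le_iff_le_add]
        exact max_le (by linarith) (by linarith)
      · rw [← sub_le_iff_le_add]
        exact le_min (by linarith) (by linarith)
  -- lower bound for B
  have hBcard : (R - δ)/ε ≤ (B.card : ℝ) := by
    have h9 := card_Icc_ge ε (max x y - (R+ε)/2) (min x y + (R+ε)/2) hε B ?_
    · have h8 : min x y + (R+ε)/2 - (max x y - (R+ε)/2) = (R + ε) - δ := by
        rw [← hminmax]; ring
      rw [h8] at h9
      have h10 : ((R+ε)-δ)/ε - 1 = (R-δ)/ε := by field_simp; ring
      linarith
    · intro z hA hB2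
      rw [hBdef, Finset.mem_filter, Finset.mem_Icc]
      have hmaxx := le_max_left x y
      have hmaxy := le_max_right x y
      have hminx := min_le_left x y
      have hminy := min_le_right x y
      have hxabs := abs_le.1 hxb
      have hwl : -(ε * M') ≤ ε * z := by
        have h7 : -(ε*M + (r-ε)/2) ≤ max x y := by linarith
        have h6 : -(ε*M + (r-ε)/2) - (R+ε)/2 ≤ ε*z := by linarith
        linarith
      have hwr : ε * z ≤ ε * M' := by
        have h7 : min x y ≤ ε*M + (r-ε)/2 := by linarith
        have h6 : ε*z ≤ ε*M + (r-ε)/2 + (R+ε)/2 := by linarith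
        linarith
      refine ⟨⟨?_, ?_⟩, ?_, ?_⟩
      · have h5 : -(M':ℝ) ≤ (z:ℝ) := by
          by_contra hcon
          push_neg at hcon
          have : ε * z < ε * (-(M':ℝ)) := by exact mul_lt_mul_of_pos_left hcon hε
          rw [mul_neg] at this
          linarith
        exact_mod_cast h5
      · have h5 : (z:ℝ) ≤ (M':ℝ) := le_of_mul_le_mul_left hwr hε
        exact_mod_cast h5
      · rw [abs_le]; constructor <;> linarith
      · rw [abs_le]; constructor <;> linarith
  -- conclude
  have key : R * (r - δ) ≤ r * (R - δ) := by nlinarith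
  calc R * (S.card : ℝ) ≤ R * ((r - δ)/ε) := by
        apply mul_le_mul_of_nonneg_left hScard (by linarith)
    _ = (R * (r - δ))/ε := by ring
    _ ≤ (r * (R - δ))/ε := by gcongr
    _ = r * ((R - δ)/ε) := by ring
    _ ≤ r * (B.card : ℝ) := mul_le_mul_of_nonneg_left hBcard hr.le

lemma countR (d : ℕ) (ε r R : ℝ) (hε : 0 < ε) (hr : 0 < r) (hrR : r ≤ R)
    (M M' : ℕ) (hM : ε * M + (r + R + ε)/2 ≤ ε * M') (p q : EuclideanSpace ℝ (Fin d)) :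
    R^d * (((Fintype.piFinset fun _ : Fin d => Finset.Icc (-(M:ℤ)) M).filter
        (fun k => p ∈ gA d ε (r-ε) k ∧ q ∈ gA d ε (r-ε) k)).card : ℝ)
      ≤ r^d * (((Fintype.piFinset fun _ : Fin d => Finset.Icc (-(M':ℤ)) M').filter
        (fun k => p ∈ gA d ε (R+ε) k ∧ q ∈ gA d ε (R+ε) k)).card : ℝ) := by
  rw [count_pi, count_pi]
  have h1 : ∀ i : Fin d,
      R * (((Finset.Icc (-(M:ℤ)) M).filter
          (fun z : ℤ => |p i - ε*z| ≤ (r-ε)/2 ∧ |q i - ε*z| ≤ (r-ε)/2)).card : ℝ)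
      ≤ r * (((Finset.Icc (-(M':ℤ)) M').filter
          (fun z : ℤ => |p i - ε*z| ≤ (R+ε)/2 ∧ |q i - ε*z| ≤ (R+ε)/2)).card : ℝ) :=
    fun i => coord_count ε r R hε hr hrR M M' hM (p i) (q i)
  have e1 : R^d * ∏ i : Fin d, (((Finset.Icc (-(M:ℤ)) M).filter
          (fun z : ℤ => |p i - ε*z| ≤ (r-ε)/2 ∧ |q i - ε*z| ≤ (r-ε)/2)).card : ℝ)
      = ∏ i : Fin d, (R * (((Finset.Icc (-(M:ℤ)) M).filter
          (fun z : ℤ => |p i - ε*z| ≤ (r-ε)/2 ∧ |q i - ε*z| ≤ (r-ε)/2)).card : ℝ)) := by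
    rw [Finset.prod_mul_distrib, Finset.prod_const, Finset.card_univ, Fintype.card_fin]
  have e2 : r^d * ∏ i : Fin d, (((Finset.Icc (-(M':ℤ)) M').filter
          (fun z : ℤ => |p i - ε*z| ≤ (R+ε)/2 ∧ |q i - ε*z| ≤ (R+ε)/2)).card : ℝ)
      = ∏ i : Fin d, (r * (((Finset.Icc (-(M':ℤ)) M').filter
          (fun z : ℤ => |p i - ε*z| ≤ (R+ε)/2 ∧ |q i - ε*z| ≤ (R+ε)/2)).card : ℝ)) := by
    rw [Finset.prod_mul_distrib, Finset.prod_const, Finset.card_univ, Fintype.card_fin]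
  rw [e1, e2]
  apply Finset.prod_le_prod
  · intro i _
    have hR : (0:ℝ) < R := lt_of_lt_of_le hr hrR
    positivity
  · intro i _
    exact h1 i

lemma step (d : ℕ) (s : ℝ) (P : Measure (Set (EuclideanSpace ℝ (Fin d))))
    (hstat : stationary d P) (ε r R : ℝ) (hε : 0 < ε) (hr : 0 < r) (hrR : r ≤ R)
    (M M' : ℕ) (hM : ε * M + (r + R + ε)/2 ≤ ε * M') :
    (((2*M+1)^d : ℕ) : ℝ≥0∞) * gg d s P (r-ε) * ENNReal.ofReal (R^d)
      ≤ (((2*M'+1)^d : ℕ) : ℝ≥0∞) * gg d s P (R+ε) * ENNReal.ofReal (r^d) := by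
  have hcard : ∀ N : ℕ, (Fintype.piFinset fun _ : Fin d => Finset.Icc (-(N:ℤ)) N).card
      = (2*N+1)^d := by
    intro N
    rw [Fintype.card_piFinset]
    simp only [Int.card_Icc, Finset.prod_const, Finset.card_univ, Fintype.card_fin]
    congr 1
    omega
  have hKey : ∀ (ρ : ℝ) (N : ℕ),
      (((2*N+1)^d : ℕ) : ℝ≥0∞) * gg d s P ρ
        = ∫⁻ C, ∑ k ∈ Fintype.piFinset (fun _ : Fin d => Finset.Icc (-(N:ℤ)) N),
            interE d s (C ∩ gA d ε ρ k) (C ∩ gA d ε ρ k) ∂P := by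
    intro ρ N
    rw [lintegral_finset_sum _ (fun k _ => meas_top _)]
    rw [Finset.sum_congr rfl (fun k _ => lint_gA d s P hstat ε ρ k)]
    rw [Finset.sum_const, hcard N, nsmul_eq_mul]
  calc (((2*M+1)^d : ℕ) : ℝ≥0∞) * gg d s P (r-ε) * ENNReal.ofReal (R^d)
      = (∫⁻ C, ∑ k ∈ Fintype.piFinset (fun _ : Fin d => Finset.Icc (-(M:ℤ)) M),
            interE d s (C ∩ gA d ε (r-ε) k) (C ∩ gA d ε (r-ε) k) ∂P)
          * ENNReal.ofReal (R^d) := by rw [hKey (r-ε) M]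
    _ = ∫⁻ C, (∑ k ∈ Fintype.piFinset (fun _ : Fin d => Finset.Icc (-(M:ℤ)) M),
            interE d s (C ∩ gA d ε (r-ε) k) (C ∩ gA d ε (r-ε) k))
          * ENNReal.ofReal (R^d) ∂P := (lintegral_mul_const _ (meas_top _)).symm
    _ ≤ ∫⁻ C, (∑ k ∈ Fintype.piFinset (fun _ : Fin d => Finset.Icc (-(M':ℤ)) M'),
            interE d s (C ∩ gA d ε (R+ε) k) (C ∩ gA d ε (R+ε) k))
          * ENNReal.ofReal (r^d) ∂P := by
        apply lintegral_mono
        intro C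
        dsimp only
        rw [master, master, ← ENNReal.tsum_mul_right, ← ENNReal.tsum_mul_right]
        refine ENNReal.tsum_le_tsum fun p => ?_
        rw [← ENNReal.tsum_mul_right, ← ENNReal.tsum_mul_right]
        refine ENNReal.tsum_le_tsum fun q => ?_
        by_cases h : p ∈ C ∧ q ∈ C
        · rw [if_pos h, if_pos h]
          have hcount := countR d ε r R hε hr hrR M M' hM p q
          rw [mul_assoc, mul_assoc]
          refine mul_le_mul_right ?_ _
          have e : ∀ (n : ℕ) (c : ℝ), ((n:ℝ≥0∞)) * ENNReal.ofReal c
              = ENNReal.ofReal (c * n) := by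
            intro n c
            rw [← ENNReal.ofReal_natCast n, mul_comm, ← ENNReal.ofReal_mul' (Nat.cast_nonneg n)]
          rw [e, e]
          exact ENNReal.ofReal_le_ofReal hcount
        · rw [if_neg h, if_neg h, zero_mul, zero_mul]
    _ = (∫⁻ C, ∑ k ∈ Fintype.piFinset (fun _ : Fin d => Finset.Icc (-(M':ℤ)) M'),
            interE d s (C ∩ gA d ε (R+ε) k) (C ∩ gA d ε (R+ε) k) ∂P)
          * ENNReal.ofReal (r^d) := lintegral_mul_const _ (meas_top _)
    _ = _ := by rw [← hKey (R+ε) M']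

lemma mono_key (d : ℕ) (s : ℝ) (P : Measure (Set (EuclideanSpace ℝ (Fin d))))
    (hstat : stationary d P) (ε r R : ℝ) (hε : 0 < ε) (hr : 0 < r) (hrR : r ≤ R) :
    ENNReal.ofReal (R^d) * gg d s P (r-ε) ≤ ENNReal.ofReal (r^d) * gg d s P (R+ε) := by
  have hR : (0:ℝ) < R := lt_of_lt_of_le hr hrR
  by_cases htop : gg d s P (R+ε) = ⊤
  · rw [htop, ENNReal.mul_top (ENNReal.ofReal_pos.2 (pow_pos hr d)).ne']
    exact le_top
  set c₀ := ⌈(r+R+ε)/(2*ε)⌉₊ with hc₀def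
  have hMM : ∀ M : ℕ, ε * (M:ℝ) + (r + R + ε)/2 ≤ ε * ((M + c₀ : ℕ) : ℝ) := by
    intro M
    have h1 : (r+R+ε)/(2*ε) ≤ (c₀ : ℝ) := Nat.le_ceil _
    have h2 : (r+R+ε)/2 ≤ ε * c₀ := by
      rw [div_le_iff₀ (by positivity : (0:ℝ) < 2*ε)] at h1
      calc (r+R+ε)/2 = ((r+R+ε))/2 := rfl
        _ ≤ ε * c₀ := by
          rw [div_le_iff₀ (by norm_num : (0:ℝ) < 2)]
          linarith [h1]
    push_cast
    linarith
  have hstep : ∀ M : ℕ,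
      (((2*M+1)^d : ℕ) : ℝ≥0∞) * gg d s P (r-ε) * ENNReal.ofReal (R^d)
        ≤ (((2*(M+c₀)+1)^d : ℕ) : ℝ≥0∞) * gg d s P (R+ε) * ENNReal.ofReal (r^d) :=
    fun M => step d s P hstat ε r R hε hr hrR M (M+c₀) (hMM M)
  have hRHSfin : ∀ M : ℕ, (((2*(M+c₀)+1)^d : ℕ) : ℝ≥0∞) * gg d s P (R+ε)
      * ENNReal.ofReal (r^d) ≠ ⊤ :=
    fun M => ENNReal.mul_ne_top (ENNReal.mul_ne_top (ENNReal.natCast_ne_top _) htop)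
      ENNReal.ofReal_ne_top
  have hXfin : gg d s P (r-ε) ≠ ⊤ := by
    by_contra hcon
    have h0 := hstep 0
    rw [hcon] at h0
    have : (((2*0+1)^d : ℕ) : ℝ≥0∞) * ⊤ * ENNReal.ofReal (R^d) = ⊤ := by
      simp only [Nat.mul_zero, Nat.zero_add, one_pow, Nat.cast_one, one_mul]
      rw [ENNReal.top_mul (ENNReal.ofReal_pos.2 (pow_pos hR d)).ne']
    rw [this] at h0
    exact hRHSfin 0 (top_le_iff.1 h0)
  set x := (gg d s P (r-ε)).toReal with hxdef
  set y := (gg d s P (R+ε)).toReal with hydef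
  have hx0 : 0 ≤ x := ENNReal.toReal_nonneg
  have hy0 : 0 ≤ y := ENNReal.toReal_nonneg
  have hreal : ∀ M : ℕ, (2*(M:ℝ)+1)^d * (x * R^d) ≤ (2*(M:ℝ)+2*c₀+1)^d * (y * r^d) := by
    intro M
    have h1 := ENNReal.toReal_mono (hRHSfin M) (hstep M)
    rw [ENNReal.toReal_mul, ENNReal.toReal_mul, ENNReal.toReal_mul, ENNReal.toReal_mul,
      ENNReal.toReal_natCast, ENNReal.toReal_natCast,
      ENNReal.toReal_ofReal (by positivity : (0:ℝ) ≤ R^d),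
      ENNReal.toReal_ofReal (by positivity : (0:ℝ) ≤ r^d)] at h1
    calc (2*(M:ℝ)+1)^d * (x * R^d) = ((2*M+1)^d : ℕ) * x * R^d := by push_cast; ring
      _ ≤ ((2*(M+c₀)+1)^d : ℕ) * y * r^d := h1
      _ = (2*(M:ℝ)+2*c₀+1)^d * (y * r^d) := by push_cast; ring
  have hposM : ∀ M : ℕ, (0:ℝ) < (2*(M:ℝ)+1)^d := by intro M; positivity
  have hineq : ∀ M : ℕ, x * R^d ≤ ((2*(M:ℝ)+2*c₀+1)/(2*(M:ℝ)+1))^d * (y * r^d) := by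
    intro M
    rw [div_pow, div_mul_eq_mul_div, le_div_iff₀ (hposM M)]
    calc x * R^d * (2*(M:ℝ)+1)^d = (2*(M:ℝ)+1)^d * (x * R^d) := by ring
      _ ≤ (2*(M:ℝ)+2*c₀+1)^d * (y * r^d) := hreal M
  have h1 : Tendsto (fun M : ℕ => (2*(M:ℝ)+1)) atTop atTop := by
    apply tendsto_atTop_add_const_right
    exact (tendsto_natCast_atTop_atTop (R := ℝ)).const_mul_atTop two_pos
  have h2 : Tendsto (fun M : ℕ => (2*(c₀:ℝ))/(2*(M:ℝ)+1)) atTop (𝓝 0) :=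
    Tendsto.div_atTop tendsto_const_nhds h1
  have h3 : (fun M : ℕ => (2*(M:ℝ)+2*c₀+1)/(2*(M:ℝ)+1))
      = fun M : ℕ => 1 + (2*(c₀:ℝ))/(2*(M:ℝ)+1) := by
    funext M
    have hne : (2*(M:ℝ)+1) ≠ 0 := by positivity
    field_simp
    ring
  have h4 : Tendsto (fun M : ℕ => ((2*(M:ℝ)+2*c₀+1)/(2*(M:ℝ)+1))^d * (y*r^d))
      atTop (𝓝 (y*r^d)) := by
    have h5 : Tendsto (fun M : ℕ => (2*(M:ℝ)+2*c₀+1)/(2*(M:ℝ)+1)) atTop (𝓝 1) := by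
      rw [h3]
      have := (tendsto_const_nhds : Tendsto (fun _ : ℕ => (1:ℝ)) atTop (𝓝 1)).add h2
      simpa using this
    have h6 := (h5.pow d).mul_const (y*r^d)
    simpa using h6
  have hxy : x * R^d ≤ y * r^d := ge_of_tendsto h4 (Filter.Eventually.of_forall hineq)
  calc ENNReal.ofReal (R^d) * gg d s P (r-ε)
      = ENNReal.ofReal (x * R^d) := by
        rw [← ENNReal.ofReal_toReal hXfin, ← hxdef,
          ← ENNReal.ofReal_mul' ENNReal.toReal_nonneg, mul_comm (R^d) x]
    _ ≤ ENNReal.ofReal (y * r^d) := ENNReal.ofReal_le_ofReal hxy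
    _ = ENNReal.ofReal (r^d) * gg d s P (R+ε) := by
        rw [← ENNReal.ofReal_toReal htop, ← hydef,
          ← ENNReal.ofReal_mul' ENNReal.toReal_nonneg, mul_comm (r^d) y]

lemma mono_real (d : ℕ) (s : ℝ) (P : Measure (Set (EuclideanSpace ℝ (Fin d))))
    (hstat : stationary d P) (x y : ℝ) (hx : 0 < x) (hxy : x ≤ y) :
    ENNReal.ofReal (y^d) * gg d s P x ≤ ENNReal.ofReal (x^d) * gg d s P y := by
  rcases eq_or_lt_of_le hxy with heq | hlt
  · rw [heq]
  by_cases htop : gg d s P y = ⊤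
  · rw [htop, ENNReal.mul_top (ENNReal.ofReal_pos.2 (pow_pos hx d)).ne']
    exact le_top
  have hy : (0:ℝ) < y := lt_of_lt_of_le hx hxy
  set ε₀ := (y - x)/2 with hε₀def
  have hε₀ : 0 < ε₀ := by rw [hε₀def]; linarith
  have hkey : ∀ ε : ℝ, 0 < ε → ε ≤ ε₀ →
      ENNReal.ofReal ((y-ε)^d) * gg d s P x ≤ ENNReal.ofReal ((x+ε)^d) * gg d s P y := by
    intro ε h1 h2
    have h3 : x + ε ≤ y - ε := by rw [hε₀def] at h2; linarith
    have := mono_key d s P hstat ε (x+ε) (y-ε) h1 (by linarith) h3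
    rw [add_sub_cancel_right, sub_add_cancel] at this
    exact this
  have hyε₀ : (0:ℝ) < y - ε₀ := by rw [hε₀def]; linarith
  have hXfin : gg d s P x ≠ ⊤ := by
    by_contra hcon
    have h0 := hkey ε₀ hε₀ le_rfl
    rw [hcon, ENNReal.mul_top (ENNReal.ofReal_pos.2 (pow_pos hyε₀ d)).ne'] at h0
    exact (ENNReal.mul_ne_top ENNReal.ofReal_ne_top htop) (top_le_iff.1 h0)
  set gx := (gg d s P x).toReal with hgxdef
  set gy := (gg d s P y).toReal with hgydef
  have hseq : ∀ n : ℕ, (y - ε₀/(n+1))^d * gx ≤ (x + ε₀/(n+1))^d * gy := by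
    intro n
    have h1 : (0:ℝ) < ε₀/(n+1) := by positivity
    have h2 : ε₀/((n:ℝ)+1) ≤ ε₀ := by
      rw [div_le_iff₀ (by positivity : (0:ℝ) < (n:ℝ)+1)]
      nlinarith [Nat.cast_nonneg (α := ℝ) n]
    have h3 := hkey (ε₀/(n+1)) h1 h2
    have h4 := ENNReal.toReal_mono (ENNReal.mul_ne_top ENNReal.ofReal_ne_top htop) h3
    have hy' : (0:ℝ) < y - ε₀/(n+1) := by linarith
    have hx' : (0:ℝ) < x + ε₀/(n+1) := by linarith
    rw [ENNReal.toReal_mul, ENNReal.toReal_mul,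
      ENNReal.toReal_ofReal (by positivity : (0:ℝ) ≤ (y - ε₀/(n+1))^d),
      ENNReal.toReal_ofReal (by positivity : (0:ℝ) ≤ (x + ε₀/(n+1))^d)] at h4
    exact h4
  have hdiv : Tendsto (fun n : ℕ => ε₀/((n:ℝ)+1)) atTop (𝓝 0) :=
    Tendsto.div_atTop tendsto_const_nhds
      (tendsto_atTop_add_const_right _ _ (tendsto_natCast_atTop_atTop (R := ℝ)))
  have hL : Tendsto (fun n : ℕ => (y - ε₀/((n:ℝ)+1))^d * gx) atTop (𝓝 (y^d * gx)) := by
    have h5 : Tendsto (fun n : ℕ => y - ε₀/((n:ℝ)+1)) atTop (𝓝 y) := by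
      have := (tendsto_const_nhds : Tendsto (fun _ : ℕ => y) atTop (𝓝 y)).sub hdiv
      simpa using this
    exact (h5.pow d).mul_const gx
  have hRt : Tendsto (fun n : ℕ => (x + ε₀/((n:ℝ)+1))^d * gy) atTop (𝓝 (x^d * gy)) := by
    have h5 : Tendsto (fun n : ℕ => x + ε₀/((n:ℝ)+1)) atTop (𝓝 x) := by
      have := (tendsto_const_nhds : Tendsto (fun _ : ℕ => x) atTop (𝓝 x)).add hdiv
      simpa using this
    exact (h5.pow d).mul_const gy
  have hfinal : y^d * gx ≤ x^d * gy := le_of_tendsto_of_tendsto' hL hRt hseq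
  calc ENNReal.ofReal (y^d) * gg d s P x
      = ENNReal.ofReal (y^d * gx) := by
        rw [← ENNReal.ofReal_toReal hXfin, ← hgxdef,
          ← ENNReal.ofReal_mul (by positivity : (0:ℝ) ≤ y^d)]
    _ ≤ ENNReal.ofReal (x^d * gy) := ENNReal.ofReal_le_ofReal hfinal
    _ = ENNReal.ofReal (x^d) * gg d s P y := by
        rw [ENNReal.ofReal_mul (by positivity : (0:ℝ) ≤ x^d), hgydef,
          ENNReal.ofReal_toReal htop]

lemma gg_neg (d : ℕ) (hd : 0 < d) (s : ℝ) (P : Measure (Set (EuclideanSpace ℝ (Fin d))))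
    (x : ℝ) (hx : x < 0) : gg d s P x = 0 := by
  have hcube : cube d x = ∅ := by
    rw [Set.eq_empty_iff_forall_notMem]
    intro z hz
    have h1 := hz ⟨0, hd⟩
    have h2 : (0:ℝ) ≤ |z ⟨0, hd⟩| := abs_nonneg _
    linarith [show x/2 < 0 by linarith]
  unfold gg
  rw [hcube]
  have : ∀ C : Set (EuclideanSpace ℝ (Fin d)),
      interE d s (C ∩ ∅) (C ∩ ∅) = 0 := by
    intro C
    rw [Set.inter_empty]
    unfold interE
    rw [tsum_empty]
  simp only [this, lintegral_zero]

lemma hmono_pos (d : ℕ) (s : ℝ) (P : Measure (Set (EuclideanSpace ℝ (Fin d))))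
    (hstat : stationary d P) (x y : ℝ) (hx : 0 < x) (hxy : x ≤ y) :
    ENNReal.ofReal (x ^ (-(d:ℝ))) * gg d s P x
      ≤ ENNReal.ofReal (y ^ (-(d:ℝ))) * gg d s P y := by
  have hy : (0:ℝ) < y := lt_of_lt_of_le hx hxy
  have e : ∀ z : ℝ, 0 < z →
      ENNReal.ofReal (z ^ (-(d:ℝ))) = (ENNReal.ofReal (z^d))⁻¹ := by
    intro z hz
    rw [show -(d:ℝ) = -(d:ℝ) from rfl, Real.rpow_neg hz.le, Real.rpow_natCast,
      ENNReal.ofReal_inv_of_pos (pow_pos hz d)]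
  rw [e x hx, e y hy]
  set a := ENNReal.ofReal (x^d) with hadef
  set b := ENNReal.ofReal (y^d) with hbdef
  have ha0 : a ≠ 0 := (ENNReal.ofReal_pos.2 (pow_pos hx d)).ne'
  have haT : a ≠ ⊤ := ENNReal.ofReal_ne_top
  have hb0 : b ≠ 0 := (ENNReal.ofReal_pos.2 (pow_pos hy d)).ne'
  have hbT : b ≠ ⊤ := ENNReal.ofReal_ne_top
  have key : b * gg d s P x ≤ a * gg d s P y := mono_real d s P hstat x y hx hxy
  have h1 : (a⁻¹ * b⁻¹) * (b * gg d s P x) = a⁻¹ * gg d s P x := by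
    rw [mul_assoc, ← mul_assoc b⁻¹ b, ENNReal.inv_mul_cancel hb0 hbT, one_mul]
  have h2 : (a⁻¹ * b⁻¹) * (a * gg d s P y) = b⁻¹ * gg d s P y := by
    rw [mul_comm a⁻¹ b⁻¹, mul_assoc, ← mul_assoc a⁻¹ a,
      ENNReal.inv_mul_cancel ha0 haT, one_mul]
  rw [← h1, ← h2]
  exact mul_le_mul_right key _

lemma hmono (d : ℕ) (hd : 0 < d) (s : ℝ) (P : Measure (Set (EuclideanSpace ℝ (Fin d))))
    (hstat : stationary d P) :
    Monotone (fun ρ : ℝ => ENNReal.ofReal (ρ ^ (-(d:ℝ))) * gg d s P ρ) := by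
  intro x y hxy
  dsimp only
  rcases le_or_gt x 0 with hx0 | hx0
  · rcases lt_or_eq_of_le hx0 with hlt | heq
    · rw [gg_neg d hd s P x hlt, mul_zero]
      exact zero_le
    · rw [heq, Real.zero_rpow (by
        simp only [ne_eq, neg_eq_zero, Nat.cast_eq_zero]
        exact hd.ne'), ENNReal.ofReal_zero, zero_mul]
      exact zero_le
  · exact hmono_pos d s P hstat x y hx0 hxy


end AuxWs

/-- for stationary `P`, `n ↦ n^{-d} E_P[Int[K_n,K_n]]` is non-decreasing over
positive integers, and the limit defining `W_s(P)` exists in `[0,∞]`. -/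
theorem WsProc_monotone_and_limit_exists (d : ℕ) (hd : 0 < d) (s : ℝ) (hs : (d : ℝ) < s)
    (P : Measure (Set (EuclideanSpace ℝ (Fin d)))) [IsProbabilityMeasure P]
    (hstat : stationary d P) :
    (∀ m n : ℕ, 1 ≤ m → m ≤ n →
      ENNReal.ofReal ((m : ℝ) ^ (-(d : ℝ))) *
          ∫⁻ C, interE d s (C ∩ cube d m) (C ∩ cube d m) ∂P ≤
        ENNReal.ofReal ((n : ℝ) ^ (-(d : ℝ))) *
          ∫⁻ C, interE d s (C ∩ cube d n) (C ∩ cube d n) ∂P) ∧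
    ∃ L : ℝ≥0∞, Filter.Tendsto
      (fun R : ℝ => ENNReal.ofReal (R ^ (-(d : ℝ))) *
        ∫⁻ C, interE d s (C ∩ cube d R) (C ∩ cube d R) ∂P)
      Filter.atTop (nhds L) := by
  constructor
  · intro m n hm hmn
    have hx : (0:ℝ) < m := by exact_mod_cast hm
    have hxy : (m:ℝ) ≤ n := by exact_mod_cast hmn
    exact hmono_pos d s P hstat (m:ℝ) (n:ℝ) hx hxy
  · refine ⟨⨆ ρ : ℝ, ENNReal.ofReal (ρ ^ (-(d:ℝ))) * gg d s P ρ, ?_⟩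
    exact tendsto_atTop_iSup (hmono d hd s P hstat)
end

section
/- The minimal Riesz s-energy of n points contained in a cube of sidelength L is bounded below by c · n^{1+s/d} / L^s for some constant c > 0 depending only on s and d. -/
open scoped Classical

open MeasureTheory Filter Topology ENNReal Set

/-- antitone of ENNReal rpow with negative exponent -/
lemma ennreal_rpow_neg_le {a b : ℝ≥0∞} {s : ℝ} (h : a ≤ b) (hs : 0 ≤ s) :
    b ^ (-s) ≤ a ^ (-s) := by
  rw [ENNReal.rpow_neg, ENNReal.rpow_neg]
  exact ENNReal.inv_le_inv.mpr (ENNReal.rpow_le_rpow h hs)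

/-- clamped floor box index bracketing -/
lemma clamp_bracket {m : ℕ} (hm : 1 ≤ m) {u : ℝ} (hu0 : 0 ≤ u) (hum : u ≤ m) :
    ((min ⌊u⌋₊ (m - 1) : ℕ) : ℝ) ≤ u ∧ u ≤ (min ⌊u⌋₊ (m - 1) : ℕ) + 1 := by
  constructor
  · calc ((min ⌊u⌋₊ (m - 1) : ℕ) : ℝ) ≤ (⌊u⌋₊ : ℝ) := by exact_mod_cast Nat.cast_le.mpr (min_le_left _ _)
      _ ≤ u := Nat.floor_le hu0
  · rcases le_or_gt ⌊u⌋₊ (m - 1) with h | h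
    · rw [min_eq_left h]
      exact (Nat.lt_floor_add_one u).le
    · rw [min_eq_right h.le]
      have : ((m - 1 : ℕ) : ℝ) + 1 = m := by
        have : m - 1 + 1 = m := Nat.succ_pred_eq_of_pos hm
        exact_mod_cast congrArg (Nat.cast (R := ℝ)) this
      rw [this]; exact hum

lemma same_box_coord {m : ℕ} (hm : 1 ≤ m) {L t t' : ℝ} (hL : 0 < L)
    (ht0 : 0 ≤ t) (htL : t ≤ L) (ht'0 : 0 ≤ t') (ht'L : t' ≤ L)
    (h : min ⌊t * m / L⌋₊ (m - 1) = min ⌊t' * m / L⌋₊ (m - 1)) : |t - t'| ≤ L / m := by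
  have hm0 : (0 : ℝ) < m := by exact_mod_cast hm
  set u := t * m / L with hu
  set u' := t' * m / L with hu'
  have hu0 : 0 ≤ u := by positivity
  have hu'0 : 0 ≤ u' := by positivity
  have hum : u ≤ m := by
    rw [hu, div_le_iff₀ hL]; nlinarith
  have hu'm : u' ≤ m := by
    rw [hu', div_le_iff₀ hL]; nlinarith
  obtain ⟨h1, h2⟩ := clamp_bracket hm hu0 hum
  obtain ⟨h1', h2'⟩ := clamp_bracket hm hu'0 hu'm
  rw [h] at h1 h2
  have habs : |u - u'| ≤ 1 := by
    rw [abs_le]; constructor <;> nlinarith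
  have ht : t = u * L / m := by rw [hu]; field_simp
  have ht' : t' = u' * L / m := by rw [hu']; field_simp
  have : t - t' = (u - u') * (L / m) := by rw [ht, ht']; ring
  rw [this, abs_mul, abs_of_pos (by positivity : (0:ℝ) < L / m)]
  calc |u - u'| * (L / m) ≤ 1 * (L / m) := by
        apply mul_le_mul_of_nonneg_right habs (by positivity)
    _ = L / m := one_mul _

lemma count_pairs {ι κ : Type*} [Fintype ι] [Fintype κ] [DecidableEq ι] [DecidableEq κ]
    (b : ι → κ) (hcard : 2 * Fintype.card κ ≤ Fintype.card ι) :
    Fintype.card ι ≤ ∑ i, (Finset.univ.filter fun j => i ≠ j ∧ b j = b i).card := by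
  classical
  rcases Nat.eq_zero_or_pos (Fintype.card ι) with h0 | hpos
  · rw [h0]; exact Nat.zero_le _
  set n := Fintype.card ι with hn
  set c : κ → ℕ := fun q => (Finset.univ.filter fun j => b j = q).card with hc
  -- total of fibers
  have hsum_c : ∑ q, c q = n := by
    rw [hn, ← Finset.card_univ]
    exact (Finset.card_eq_sum_card_fiberwise (fun i _ => Finset.mem_univ (b i))).symm
  -- sum over points of its fiber size = sum of squares
  have hsq : ∑ i, c (b i) = ∑ q, c q * c q := by
    rw [← Finset.sum_fiberwise' Finset.univ b c]
    refine Finset.sum_congr rfl fun q _ => ?_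
    rw [Finset.sum_const, smul_eq_mul]
  -- Cauchy-Schwarz
  have hCS : (n : ℝ) ^ 2 ≤ (Fintype.card κ : ℝ) * ∑ q, (c q : ℝ) ^ 2 := by
    have := sq_sum_le_card_mul_sum_sq (s := (Finset.univ : Finset κ))
      (f := fun q => (c q : ℝ))
    simpa [← Nat.cast_sum, hsum_c, Finset.card_univ] using this
  have h2n : 2 * n ≤ ∑ q, c q * c q := by
    have hk : (0 : ℝ) < Fintype.card κ := by
      have hne : Nonempty ι := Fintype.card_pos_iff.mp hpos
      have : Nonempty κ := ⟨b hne.some⟩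
      exact_mod_cast Fintype.card_pos
    have hreal : (2 * n : ℝ) ≤ ∑ q, (c q : ℝ) ^ 2 := by
      have h1 : (Fintype.card κ : ℝ) * (2 * n) ≤ (n : ℝ) ^ 2 := by
        have : (2 * Fintype.card κ : ℝ) ≤ n := by exact_mod_cast hcard
        nlinarith [Nat.cast_nonneg (α := ℝ) n]
      nlinarith
    have : ((2 * n : ℕ) : ℝ) ≤ ((∑ q, c q * c q : ℕ) : ℝ) := by
      push_cast
      convert hreal using 2 with q
      ring
    exact_mod_cast this
  -- each fiber contains the point itself
  have hfib : ∀ i, c (b i) = (Finset.univ.filter fun j => i ≠ j ∧ b j = b i).card + 1 := by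
    intro i
    have hins : (Finset.univ.filter fun j => b j = b i) =
        insert i (Finset.univ.filter fun j => i ≠ j ∧ b j = b i) := by
      ext j
      simp only [Finset.mem_filter, Finset.mem_univ, true_and, Finset.mem_insert]
      constructor
      · intro hj
        by_cases hij : j = i
        · exact Or.inl hij
        · exact Or.inr ⟨fun h => hij h.symm, hj⟩
      · rintro (rfl | ⟨_, hj⟩)
        · rfl
        · exact hj
    have hnot : i ∉ (Finset.univ.filter fun j => i ≠ j ∧ b j = b i) := by
      simp
    rw [hc]
    simp only
    rw [hins, Finset.card_insert_of_notMem hnot]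
  have : ∑ i, c (b i) = (∑ i, (Finset.univ.filter fun j => i ≠ j ∧ b j = b i).card) + n := by
    rw [hn, ← Finset.card_univ, Finset.card_eq_sum_ones, ← Finset.sum_add_distrib]
    exact Finset.sum_congr rfl fun i _ => hfib i
  omega

/-- the minimal Riesz `s`-energy of `n` points in a cube of sidelength `L`
is at least `c n^{1+s/d} / L^s`. -/
theorem energy_lower_bound_cube (d : ℕ) (hd : 0 < d) (s : ℝ) (hs : (d : ℝ) < s) :
    ∃ c : ℝ, 0 < c ∧
      ∀ (n : ℕ), 2 ≤ n → ∀ (L : ℝ), 0 < L →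
        ∀ (x₀ : EuclideanSpace ℝ (Fin d)) (ω : Fin n → EuclideanSpace ℝ (Fin d)),
          (∀ i, ∀ j, |ω i j - x₀ j| ≤ L / 2) →
          ENNReal.ofReal (c * (n : ℝ) ^ (1 + s / (d : ℝ)) / L ^ s) ≤ Esfin d s ω := by
  have hd0 : (0:ℝ) < d := by exact_mod_cast hd
  have hsqd : (0:ℝ) < Real.sqrt d := Real.sqrt_pos.mpr hd0
  have hs0 : (0:ℝ) < s := lt_trans hd0 hs
  refine ⟨Real.sqrt d ^ (-s) * (2:ℝ) ^ (-(s + s / d)), by positivity, ?_⟩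
  intro n hn L hL x₀ ω hω
  -- choose the number of subdivisions m
  set x : ℝ := ((n:ℝ)/2) ^ ((1:ℝ)/d) with hxdef
  have hn2 : (1:ℝ) ≤ (n:ℝ)/2 := by
    have : (2:ℝ) ≤ n := by exact_mod_cast hn
    linarith
  have hx1 : (1:ℝ) ≤ x := Real.one_le_rpow hn2 (by positivity)
  set m : ℕ := ⌊x⌋₊ with hmdef
  have hm1 : 1 ≤ m := Nat.le_floor (by exact_mod_cast hx1)
  have hm0 : (0:ℝ) < m := by exact_mod_cast hm1
  have hmx : (m:ℝ) ≤ x := Nat.floor_le (by linarith)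
  have hm_ge : x / 2 ≤ (m:ℝ) := by
    rcases le_or_gt 2 x with h | h
    · have := Nat.sub_one_lt_floor x
      rw [← hmdef] at this
      linarith
    · have : (1:ℝ) ≤ (m:ℝ) := by exact_mod_cast hm1
      linarith
  have h2m : 2 * m ^ d ≤ n := by
    have hxd : x ^ (d:ℕ) = (n:ℝ)/2 := by
      rw [hxdef, ← Real.rpow_natCast (((n:ℝ)/2) ^ ((1:ℝ)/(d:ℝ))) d,
        ← Real.rpow_mul (by positivity)]
      rw [one_div, inv_mul_cancel₀ (by positivity : (d:ℝ) ≠ 0), Real.rpow_one]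
    have hple : ((m:ℝ)) ^ (d:ℕ) ≤ (n:ℝ)/2 := by
      rw [← hxd]; exact pow_le_pow_left₀ (by positivity) hmx d
    have h2 : 2 * ((m:ℝ)) ^ (d:ℕ) ≤ (n:ℝ) := by linarith
    exact_mod_cast h2
  -- the box assignment
  set b : Fin n → (Fin d → Fin m) := fun i j =>
    ⟨min ⌊(ω i j - x₀ j + L / 2) * m / L⌋₊ (m - 1), by omega⟩ with hbdef
  set D : ℝ := Real.sqrt d * (L / m) with hDdef
  have hD0 : 0 < D := by positivity
  -- points in the same box are at distance at most D
  have hclose : ∀ i i', b i = b i' → dist (ω i) (ω i') ≤ D := by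
    intro i i' hb
    have hcoord : ∀ j, |ω i j - ω i' j| ≤ L / m := by
      intro j
      have h1 := abs_le.mp (hω i j)
      have h2 := abs_le.mp (hω i' j)
      have hb' : min ⌊(ω i j - x₀ j + L/2) * m / L⌋₊ (m - 1)
          = min ⌊(ω i' j - x₀ j + L/2) * m / L⌋₊ (m - 1) := by
        have h3 := congrFun hb j
        have h4 := congrArg Fin.val h3
        simpa [hbdef] using h4
      have h5 := same_box_coord hm1 hL (by linarith) (by linarith) (by linarith) (by linarith) hb'
      have h6 : ω i j - x₀ j + L/2 - (ω i' j - x₀ j + L/2) = ω i j - ω i' j := by ring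
      rwa [h6] at h5
    rw [EuclideanSpace.dist_eq]
    have hsum : ∑ j, dist (ω i j) (ω i' j) ^ 2 ≤ ∑ _j : Fin d, (L/m)^2 := by
      refine Finset.sum_le_sum fun j _ => ?_
      have := hcoord j
      rw [Real.dist_eq]
      nlinarith [abs_nonneg (ω i j - ω i' j), abs_le.mp this]
    calc √(∑ j, dist (ω i j) (ω i' j) ^ 2) ≤ √(∑ _j : Fin d, (L/m)^2) :=
          Real.sqrt_le_sqrt hsum
      _ = D := by
          rw [Finset.sum_const, Finset.card_univ, Fintype.card_fin, nsmul_eq_mul,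
            Real.sqrt_mul (by positivity), Real.sqrt_sq (by positivity), hDdef]
  set B : ℝ≥0∞ := ENNReal.ofReal D ^ (-s) with hBdef
  -- termwise comparison
  have hterm : ∀ i j : Fin n, (if i ≠ j ∧ b j = b i then B else 0)
      ≤ (if i = j then 0 else edist (ω i) (ω j) ^ (-s)) := by
    intro i j
    split_ifs with h1 h2
    · exact absurd h2 h1.1
    · have hdist := hclose j i h1.2
      have hedist : edist (ω i) (ω j) ≤ ENNReal.ofReal D := by
        rw [edist_dist, dist_comm]
        exact ENNReal.ofReal_le_ofReal hdist
      exact ennreal_rpow_neg_le hedist hs0.le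
    · exact zero_le
    · exact zero_le
  -- counting
  have hcard : 2 * Fintype.card (Fin d → Fin m) ≤ Fintype.card (Fin n) := by
    simpa [Fintype.card_fun] using h2m
  have hcount := count_pairs b hcard
  rw [Fintype.card_fin] at hcount
  -- energy lower bound
  have hE : (n : ℝ≥0∞) * B ≤ Esfin d s ω := by
    have hsum : ∀ i : Fin n, ((Finset.univ.filter fun j => i ≠ j ∧ b j = b i).card : ℝ≥0∞) * B
        = ∑ j, (if i ≠ j ∧ b j = b i then B else 0) := by
      intro i
      rw [← Finset.sum_filter, Finset.sum_const, nsmul_eq_mul]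
    calc (n : ℝ≥0∞) * B
        ≤ ((∑ i : Fin n, (Finset.univ.filter fun j => i ≠ j ∧ b j = b i).card : ℕ) : ℝ≥0∞) * B := by
          exact mul_le_mul_left (by exact_mod_cast hcount) B
      _ = ∑ i : Fin n, ((Finset.univ.filter fun j => i ≠ j ∧ b j = b i).card : ℝ≥0∞) * B := by
          rw [Nat.cast_sum, Finset.sum_mul]
      _ = ∑ i : Fin n, ∑ j, (if i ≠ j ∧ b j = b i then B else 0) :=
          Finset.sum_congr rfl fun i _ => hsum i
      _ ≤ ∑ i, ∑ j, (if i = j then 0 else edist (ω i) (ω j) ^ (-s)) :=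
          Finset.sum_le_sum fun i _ => Finset.sum_le_sum fun j _ => hterm i j
      _ = Esfin d s ω := rfl
  refine le_trans ?_ hE
  -- final real computation
  have hBeq : (n : ℝ≥0∞) * B = ENNReal.ofReal ((n:ℝ) * D ^ (-s)) := by
    rw [hBdef, ENNReal.ofReal_rpow_of_pos hD0, ENNReal.ofReal_mul (Nat.cast_nonneg n),
      ENNReal.ofReal_natCast]
  rw [hBeq]
  apply ENNReal.ofReal_le_ofReal
  have hn0 : (0:ℝ) < n := by positivity
  have hDs : D ^ (-s) = Real.sqrt d ^ (-s) * ((m:ℝ) ^ s / L ^ s) := by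
    rw [hDdef, Real.mul_rpow hsqd.le (by positivity)]
    congr 1
    rw [Real.rpow_neg (by positivity), Real.div_rpow hL.le hm0.le, inv_div,
      ← Real.div_rpow hm0.le hL.le, Real.div_rpow hm0.le hL.le]
  have hns : (n:ℝ) ^ (1 + s/(d:ℝ)) = (n:ℝ) * (n:ℝ) ^ (s/(d:ℝ)) := by
    rw [Real.rpow_add hn0, Real.rpow_one]
  have hms : (n:ℝ) ^ (s/(d:ℝ)) * (2:ℝ) ^ (-(s + s/(d:ℝ))) ≤ (m:ℝ) ^ s := by
    have hxs : x ^ s = ((n:ℝ)/2) ^ (s/(d:ℝ)) := by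
      rw [hxdef, ← Real.rpow_mul (by positivity)]
      congr 1
      field_simp
    have h2 : (x/2) ^ s ≤ (m:ℝ) ^ s := Real.rpow_le_rpow (by positivity) hm_ge hs0.le
    have h3 : (x/2) ^ s = (n:ℝ) ^ (s/(d:ℝ)) * (2:ℝ) ^ (-(s + s/(d:ℝ))) := by
      rw [Real.div_rpow (by positivity) (by norm_num), hxs,
        Real.div_rpow (by positivity) (by norm_num),
        Real.rpow_neg (by norm_num), Real.rpow_add (by norm_num : (0:ℝ) < 2)]
      have h2s : (0:ℝ) < (2:ℝ) ^ s := Real.rpow_pos_of_pos (by norm_num) s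
      have h2sd : (0:ℝ) < (2:ℝ) ^ (s/(d:ℝ)) := Real.rpow_pos_of_pos (by norm_num) _
      field_simp
    rw [← h3]; exact h2
  rw [hns, hDs]
  calc Real.sqrt d ^ (-s) * (2:ℝ) ^ (-(s + s/(d:ℝ))) * ((n:ℝ) * (n:ℝ) ^ (s/(d:ℝ))) / L ^ s
      = (Real.sqrt d ^ (-s) * (n:ℝ) / L ^ s) * ((n:ℝ) ^ (s/(d:ℝ)) * (2:ℝ) ^ (-(s + s/(d:ℝ)))) := by
        ring
    _ ≤ (Real.sqrt d ^ (-s) * (n:ℝ) / L ^ s) * (m:ℝ) ^ s := by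
        have hnonneg : (0:ℝ) ≤ Real.sqrt d ^ (-s) * (n:ℝ) / L ^ s := by positivity
        exact mul_le_mul_of_nonneg_left hms hnonneg
    _ = (n:ℝ) * (Real.sqrt d ^ (-s) * ((m:ℝ) ^ s / L ^ s)) := by ring
end
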